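/- arXiv:math/0407252 — 5 statements merged into one kernel-verified Lean document; each statement's English description precedes it below -/
import Mathlib

section
/- For f, g in L²(0,1), the n-th cosine Fourier coefficients satisfy c_n(f)·c_n(g) = c_n(h₁), where h₁ = (1/2){R(Rf∗g + f∗Rg) + f∗g + Rf∗Rg}, R is the reflection (Rf)(x)=f(1-x), and (f∗g)(x)=∫₀ˣ f(x-t)g(t)dt. -/
open MeasureTheory Real

/-- The measure of the unit interval `(0,1]` used to model `L²(0,1)`. -/
noncomputable def mu01 : Measure ℝ := volume.restrict (Set.Ioc (0:ℝ) 1)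

/-- `n`-th cosine Fourier coefficient `c_n(f) = ∫₀¹ f(x) cos(πnx) dx`. -/
noncomputable def cosCoef (f : ℝ → ℂ) (n : ℕ) : ℂ :=
  ∫ x in (0:ℝ)..1, f x * Complex.cos (Real.pi * n * x)

/-- Reflection about `x = 1/2`: `(Rf)(x) = f(1-x)`. -/
def Rref (f : ℝ → ℂ) : ℝ → ℂ := fun x => f (1 - x)

/-- Convolution `(f ∗ g)(x) = ∫₀ˣ f(x-t) g(t) dt`. -/
noncomputable def conv01 (f g : ℝ → ℂ) : ℝ → ℂ :=
  fun x => ∫ t in (0:ℝ)..x, f (x - t) * g t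

namespace CosAux


noncomputable def cc (n : ℕ) (r : ℝ) : ℂ := Complex.cos (Real.pi * n * r)

lemma cc_norm (n : ℕ) (r : ℝ) : ‖cc n r‖ ≤ 1 := by
  have h : (Real.pi : ℂ) * n * r = ((Real.pi * n * r : ℝ) : ℂ) := by push_cast; ring
  rw [cc, h, ← Complex.ofReal_cos, Complex.norm_real, Real.norm_eq_abs]
  exact Real.abs_cos_le_one _

lemma cc_meas (n : ℕ) : Measurable (cc n) := by
  unfold cc; fun_prop

lemma cc_sub_add (n : ℕ) (x t : ℝ) :
    cc n (x - t) + cc n (x + t) = 2 * cc n x * cc n t := by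
  unfold cc
  have h1 : (Real.pi : ℂ) * n * ((x : ℝ) - t : ℝ) = Real.pi * n * x - Real.pi * n * t := by
    push_cast; ring
  have h2 : (Real.pi : ℂ) * n * ((x : ℝ) + t : ℝ) = Real.pi * n * x + Real.pi * n * t := by
    push_cast; ring
  rw [h1, h2, Complex.cos_sub, Complex.cos_add]; ring

lemma cc_sub_comm (n : ℕ) (x t : ℝ) : cc n (t - x) = cc n (x - t) := by
  unfold cc
  have h : (Real.pi : ℂ) * n * ((t : ℝ) - x : ℝ) = -(Real.pi * n * ((x : ℝ) - t : ℝ)) := by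
    push_cast; ring
  rw [h, Complex.cos_neg]

lemma cc_two_sub (n : ℕ) (a : ℝ) : cc n (2 - a) = cc n a := by
  unfold cc
  have h : (Real.pi : ℂ) * n * ((2 : ℝ) - a : ℝ) = (n : ℂ) * (2 * Real.pi) - Real.pi * n * a := by
    push_cast; ring
  have hs : Complex.sin ((n : ℂ) * (2 * Real.pi)) = 0 := by
    have : ((n : ℂ) * (2 * Real.pi)) = ((2 * n : ℕ) : ℂ) * Real.pi := by push_cast; ring
    rw [this, Complex.sin_nat_mul_pi]
  rw [h, Complex.cos_sub, Complex.cos_nat_mul_two_pi, hs]; ring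



lemma ae_Ioo01 : ∀ᵐ t ∂(volume.restrict (Set.Ioc (0:ℝ) 1)), t ∈ Set.Ioo (0:ℝ) 1 := by
  rw [ae_restrict_iff' measurableSet_Ioc]
  have h2 : ∀ᵐ t : ℝ ∂volume, t ≠ 1 := by
    rw [ae_iff]
    have : {t : ℝ | ¬ t ≠ 1} = {1} := by ext t; simp
    rw [this]; exact Real.volume_singleton
  filter_upwards [h2] with t ht hmem
  exact ⟨hmem.1, lt_of_le_of_ne hmem.2 ht⟩

lemma integral_nu_if_lt (s : ℝ) (hs : s ∈ Set.Ioc (0:ℝ) 1) (F : ℝ → ℂ) :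
    (∫ t in Set.Ioc (0:ℝ) 1, (if t < s then F t else 0)) = ∫ t in (0:ℝ)..s, F t := by
  have h1 : (fun t => if t < s then F t else 0) = (Set.Iio s).indicator F := by
    funext t; simp [Set.indicator_apply]
  rw [h1, MeasureTheory.setIntegral_indicator measurableSet_Iio]
  have h2 : Set.Ioc (0:ℝ) 1 ∩ Set.Iio s = Set.Ioo 0 s := by
    ext t
    simp only [Set.mem_inter_iff, Set.mem_Ioc, Set.mem_Iio, Set.mem_Ioo]
    constructor
    · rintro ⟨⟨a, _⟩, b⟩; exact ⟨a, b⟩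
    · rintro ⟨a, b⟩; exact ⟨⟨a, le_trans b.le hs.2⟩, b⟩
  rw [h2, ← MeasureTheory.integral_Ioc_eq_integral_Ioo, intervalIntegral.integral_of_le hs.1.le]

lemma integral_nu_if_gt (t : ℝ) (ht : 0 ≤ t) (ht1 : t ≤ 1) (F : ℝ → ℂ) :
    (∫ s in Set.Ioc (0:ℝ) 1, (if t < s then F s else 0)) = ∫ s in t..1, F s := by
  have h1 : (fun s => if t < s then F s else 0) = (Set.Ioi t).indicator F := by
    funext s; simp [Set.indicator_apply]
  rw [h1, MeasureTheory.setIntegral_indicator measurableSet_Ioi]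
  have h2 : Set.Ioc (0:ℝ) 1 ∩ Set.Ioi t = Set.Ioc t 1 := by
    ext s
    simp only [Set.mem_inter_iff, Set.mem_Ioc, Set.mem_Ioi]
    constructor
    · rintro ⟨⟨_, b⟩, c⟩; exact ⟨c, b⟩
    · rintro ⟨a, b⟩; exact ⟨⟨lt_of_le_of_lt ht a, b⟩, a⟩
  rw [h2, intervalIntegral.integral_of_le ht1]

lemma integral_nu_if_le (t : ℝ) (ht : 0 ≤ t) (ht1 : t ≤ 1) (F : ℝ → ℂ) :
    (∫ x in Set.Ioc (0:ℝ) 1, (if x ≤ t then F x else 0)) = ∫ x in (0:ℝ)..t, F x := by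
  have h1 : (fun x => if x ≤ t then F x else 0) = (Set.Iic t).indicator F := by
    funext x; simp [Set.indicator_apply]
  rw [h1, MeasureTheory.setIntegral_indicator measurableSet_Iic]
  have h2 : Set.Ioc (0:ℝ) 1 ∩ Set.Iic t = Set.Ioc 0 t := by
    ext x
    simp only [Set.mem_inter_iff, Set.mem_Ioc, Set.mem_Iic]
    constructor
    · rintro ⟨⟨a, _⟩, c⟩; exact ⟨a, c⟩
    · rintro ⟨a, b⟩; exact ⟨⟨a, le_trans b ht1⟩, b⟩
  rw [h2, intervalIntegral.integral_of_le ht]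

lemma comp_one_sub (H : ℝ → ℂ) : (∫ x in (0:ℝ)..1, H (1 - x)) = ∫ x in (0:ℝ)..1, H x := by
  rw [intervalIntegral.integral_comp_sub_left H 1]; norm_num

lemma comp_sub_t (H : ℝ → ℂ) (t : ℝ) :
    (∫ x in (0:ℝ)..(1 - t), H (1 - x)) = ∫ x in t..1, H x := by
  rw [intervalIntegral.integral_comp_sub_left H 1]; norm_num

/-- reflection preserves integrability on `(0,1]`. -/
lemma integrable_reflect {h : ℝ → ℂ}
    (hh : Integrable h (volume.restrict (Set.Ioc (0:ℝ) 1))) :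
    Integrable (fun u => h (1 - u)) (volume.restrict (Set.Ioc (0:ℝ) 1)) := by
  have hIoo : IntegrableOn h (Set.Ioo (0:ℝ) 1) volume :=
    IntegrableOn.mono_set (show IntegrableOn h (Set.Ioc (0:ℝ) 1) volume from hh)
      Set.Ioo_subset_Ioc_self
  have hpre : (fun u : ℝ => 1 - u) ⁻¹' (Set.Ioo (0:ℝ) 1) = Set.Ioo (0:ℝ) 1 := by
    ext u
    simp only [Set.mem_preimage, Set.mem_Ioo]
    constructor <;> (rintro ⟨a, b⟩; constructor <;> linarith)
  have hmp : MeasurePreserving (fun u : ℝ => 1 - u)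
      (volume.restrict (Set.Ioo (0:ℝ) 1)) (volume.restrict (Set.Ioo (0:ℝ) 1)) := by
    have h0 := (Measure.measurePreserving_sub_left (volume : Measure ℝ) 1).restrict_preimage
      (measurableSet_Ioo (a := (0:ℝ)) (b := 1))
    rwa [hpre] at h0
  have : Integrable (h ∘ (fun u : ℝ => 1 - u)) (volume.restrict (Set.Ioo (0:ℝ) 1)) :=
    (hmp.integrable_comp hIoo.aestronglyMeasurable).mpr hIoo
  have h2 : IntegrableOn (fun u => h (1 - u)) (Set.Ioo (0:ℝ) 1) volume := this
  exact (integrableOn_Ioc_iff_integrableOn_Ioo).mpr h2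



lemma main_term (F G : ℝ → ℂ) (c : ℝ → ℂ)
    (hFm : StronglyMeasurable F) (hGm : StronglyMeasurable G) (hcm : Measurable c)
    (hc1 : ∀ r, ‖c r‖ ≤ 1)
    (hFi : IntegrableOn F (Set.Ioo (0:ℝ) 1) volume)
    (hGi : IntegrableOn G (Set.Ioo (0:ℝ) 1) volume) :
    IntervalIntegrable (fun s => (∫ t in (0:ℝ)..s, F (s - t) * G t) * c s) volume 0 1 ∧
    ((∫ s in (0:ℝ)..1, (∫ t in (0:ℝ)..s, F (s - t) * G t) * c s) =
      ∫ t in Set.Ioc (0:ℝ) 1, G t * ∫ x in (0:ℝ)..(1 - t), F x * c (x + t)) ∧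
    Integrable (fun t => G t * ∫ x in (0:ℝ)..(1 - t), F x * c (x + t))
      (volume.restrict (Set.Ioc (0:ℝ) 1)) := by
  set ν : Measure ℝ := volume.restrict (Set.Ioc (0:ℝ) 1) with hν
  set U : ℝ → ℝ → ℂ := fun s t => if t < s then F (s - t) * G t * c s else 0 with hU
  -- integrability of U on the product
  have hUint : Integrable (Function.uncurry U) (ν.prod ν) := by
    set F₀ := (Set.Ioo (0:ℝ) 1).indicator F with hF₀def
    set G₀ := (Set.Ioo (0:ℝ) 1).indicator G with hG₀def
    have hF₀ : Integrable F₀ volume := hFi.integrable_indicator measurableSet_Ioo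
    have hG₀ : Integrable G₀ volume := hGi.integrable_indicator measurableSet_Ioo
    have hdom : Integrable (fun p : ℝ × ℝ => ‖F₀ (p.1 - p.2)‖ * ‖G₀ p.2‖) (ν.prod ν) := by
      have h1 : Integrable (fun q : ℝ × ℝ => ‖F₀ q.1‖ * ‖G₀ q.2‖)
          ((volume : Measure ℝ).prod (volume : Measure ℝ)) := hF₀.norm.mul_prod hG₀.norm
      have h2 : Integrable ((fun q : ℝ × ℝ => ‖F₀ q.1‖ * ‖G₀ q.2‖) ∘
          (fun z : ℝ × ℝ => (z.1 - z.2, z.2))) ((volume : Measure ℝ).prod volume) := by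
        have hmp := measurePreserving_sub_prod (volume : Measure ℝ) (volume : Measure ℝ)
        exact (hmp.integrable_comp h1.aestronglyMeasurable).mpr h1
      have h3 : Integrable (fun p : ℝ × ℝ => ‖F₀ (p.1 - p.2)‖ * ‖G₀ p.2‖)
          ((volume : Measure ℝ).prod volume) := h2
      rw [hν, Measure.prod_restrict]
      exact h3.restrict
    have hmeas : AEStronglyMeasurable (Function.uncurry U) (ν.prod ν) := by
      have hrw : Function.uncurry U =
          Set.indicator {p : ℝ × ℝ | p.2 < p.1}
            (fun p => F (p.1 - p.2) * G p.2 * c p.1) := by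
        funext p
        simp only [Function.uncurry, hU, Set.indicator_apply, Set.mem_setOf_eq]
      rw [hrw]
      exact ((((hFm.comp_measurable (measurable_fst.sub measurable_snd)).mul
        (hGm.comp_measurable measurable_snd)).mul
        ((hcm.comp measurable_fst).stronglyMeasurable)).indicator
        (measurableSet_lt measurable_snd measurable_fst)).aestronglyMeasurable
    refine hdom.mono' hmeas ?_
    have hsq : ∀ᵐ p ∂(ν.prod ν), p ∈ (Set.Ioc (0:ℝ) 1) ×ˢ (Set.Ioc (0:ℝ) 1) := by
      rw [hν, Measure.prod_restrict]
      exact ae_restrict_mem (measurableSet_Ioc.prod measurableSet_Ioc)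
    filter_upwards [hsq] with p hp
    obtain ⟨hp1, hp2⟩ := hp
    by_cases hlt : p.2 < p.1
    · have hdiff : p.1 - p.2 ∈ Set.Ioo (0:ℝ) 1 :=
        ⟨by linarith [hlt], by linarith [hp1.2, hp2.1]⟩
      have h2' : p.2 ∈ Set.Ioo (0:ℝ) 1 := ⟨hp2.1, lt_of_lt_of_le hlt hp1.2⟩
      simp only [Function.uncurry, hU, if_pos hlt]
      rw [hF₀def, hG₀def, Set.indicator_of_mem hdiff, Set.indicator_of_mem h2']
      calc ‖F (p.1 - p.2) * G p.2 * c p.1‖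
          = ‖F (p.1 - p.2)‖ * ‖G p.2‖ * ‖c p.1‖ := by simp [norm_mul]
        _ ≤ ‖F (p.1 - p.2)‖ * ‖G p.2‖ * 1 := by
            have := hc1 p.1
            have h0 : (0:ℝ) ≤ ‖F (p.1 - p.2)‖ * ‖G p.2‖ := by positivity
            nlinarith [norm_nonneg (c p.1)]
        _ = ‖F (p.1 - p.2)‖ * ‖G p.2‖ := mul_one _
    · simp only [Function.uncurry, hU, if_neg hlt, norm_zero]
      positivity
  -- pointwise pre-swap identity
  have key1 : ∀ s ∈ Set.Ioc (0:ℝ) 1,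
      (∫ t in Set.Ioc (0:ℝ) 1, U s t) = (∫ t in (0:ℝ)..s, F (s - t) * G t) * c s := by
    intro s hs
    simp only [hU]
    rw [integral_nu_if_lt s hs]
    exact intervalIntegral.integral_mul_const _ _
  -- post-swap inner identity
  have key2 : ∀ t ∈ Set.Ioo (0:ℝ) 1,
      (∫ s in Set.Ioc (0:ℝ) 1, U s t) = G t * ∫ x in (0:ℝ)..(1 - t), F x * c (x + t) := by
    intro t ht
    calc (∫ s in Set.Ioc (0:ℝ) 1, U s t)
        = ∫ s in Set.Ioc (0:ℝ) 1, (if t < s then F (s - t) * c s else 0) * G t := by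
          refine setIntegral_congr_fun measurableSet_Ioc fun s _ => ?_
          by_cases h : t < s
          · simp only [hU, if_pos h]; ring
          · simp only [hU, if_neg h, zero_mul]
      _ = (∫ s in Set.Ioc (0:ℝ) 1, (if t < s then F (s - t) * c s else 0)) * G t :=
          integral_mul_const _ _
      _ = (∫ s in t..1, F (s - t) * c s) * G t := by
          rw [integral_nu_if_gt t ht.1.le ht.2.le]
      _ = (∫ x in (0:ℝ)..(1 - t), F x * c (x + t)) * G t := by
          have hfe : (fun s => F (s - t) * c s) =
              fun s => (fun x => F x * c (x + t)) (s - t) := by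
            funext s
            have : s - t + t = s := by ring
            simp only [this]
          rw [hfe, intervalIntegral.integral_comp_sub_right (fun x => F x * c (x + t)) t,
            sub_self]
      _ = G t * ∫ x in (0:ℝ)..(1 - t), F x * c (x + t) := mul_comm _ _
  have key2ae : (fun t => ∫ s in Set.Ioc (0:ℝ) 1, U s t)
      =ᵐ[ν] (fun t => G t * ∫ x in (0:ℝ)..(1 - t), F x * c (x + t)) := by
    filter_upwards [ae_Ioo01] with t ht
    exact key2 t ht
  have hint3 : Integrable (fun t => G t * ∫ x in (0:ℝ)..(1 - t), F x * c (x + t)) ν := by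
    have := hUint.integral_prod_right
    exact this.congr key2ae
  have hint1 : IntervalIntegrable (fun s => (∫ t in (0:ℝ)..s, F (s - t) * G t) * c s)
      volume 0 1 := by
    rw [intervalIntegrable_iff_integrableOn_Ioc_of_le zero_le_one]
    have h1 : Integrable (fun s => ∫ t, Function.uncurry U (s, t) ∂ν) ν :=
      hUint.integral_prod_left
    have h2 : (fun s => ∫ t, Function.uncurry U (s, t) ∂ν)
        =ᵐ[ν] (fun s => (∫ t in (0:ℝ)..s, F (s - t) * G t) * c s) := by
      filter_upwards [ae_restrict_mem measurableSet_Ioc] with s hs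
      exact key1 s hs
    exact h1.congr h2
  refine ⟨hint1, ?_, hint3⟩
  calc (∫ s in (0:ℝ)..1, (∫ t in (0:ℝ)..s, F (s - t) * G t) * c s)
      = ∫ s in Set.Ioc (0:ℝ) 1, ∫ t in Set.Ioc (0:ℝ) 1, U s t := by
        rw [intervalIntegral.integral_of_le zero_le_one]
        refine setIntegral_congr_fun measurableSet_Ioc fun s hs => ?_
        exact (key1 s hs).symm
    _ = ∫ t in Set.Ioc (0:ℝ) 1, ∫ s in Set.Ioc (0:ℝ) 1, U s t :=
        MeasureTheory.integral_integral_swap hUint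
    _ = ∫ t in Set.Ioc (0:ℝ) 1, G t * ∫ x in (0:ℝ)..(1 - t), F x * c (x + t) :=
        integral_congr_ae key2ae



lemma int_if {P : ℝ → Prop} [DecidablePred P] (hP : MeasurableSet {x | P x})
    {w : ℝ → ℂ} (hwm : StronglyMeasurable w)
    (hwi : Integrable w (volume.restrict (Set.Ioc (0:ℝ) 1)))
    (c' : ℝ → ℂ) (hc'm : Measurable c') (hc'1 : ∀ r, ‖c' r‖ ≤ 1) :
    Integrable (fun x => if P x then w x * c' x else 0)
      (volume.restrict (Set.Ioc (0:ℝ) 1)) := by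
  have hin : (fun x => if P x then w x * c' x else 0) =
      Set.indicator {x | P x} (fun x => w x * c' x) := by
    funext x; simp [Set.indicator_apply]
  refine hwi.norm.mono' ?_ ?_
  · rw [hin]
    exact ((hwm.mul hc'm.stronglyMeasurable).indicator hP).aestronglyMeasurable
  · refine Filter.Eventually.of_forall fun x => ?_
    by_cases h : P x
    · simp only [if_pos h, norm_mul]
      calc ‖w x‖ * ‖c' x‖ ≤ ‖w x‖ * 1 := by
            have := hc'1 x; have h0 : (0:ℝ) ≤ ‖w x‖ := norm_nonneg _; nlinarith
        _ = ‖w x‖ := mul_one _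
    · simp [h]

lemma null_inter {u u' : ℝ → ℂ}
    (h : u =ᵐ[volume.restrict (Set.Ioc (0:ℝ) 1)] u') :
    volume ({x | u x ≠ u' x} ∩ Set.Ioc (0:ℝ) 1) = 0 := by
  have h2 := h
  rw [Filter.EventuallyEq, ae_iff, Measure.restrict_apply' measurableSet_Ioc] at h2
  exact h2

lemma reflect_ae {u u' : ℝ → ℂ}
    (h : u =ᵐ[volume.restrict (Set.Ioc (0:ℝ) 1)] u') :
    Rref u =ᵐ[volume.restrict (Set.Ioc (0:ℝ) 1)] Rref u' := by
  rw [Filter.EventuallyEq, ae_iff, Measure.restrict_apply' measurableSet_Ioc]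
  have hN := null_inter h
  have hsub : {x | ¬ Rref u x = Rref u' x} ∩ Set.Ioc (0:ℝ) 1 ⊆
      {(1:ℝ)} ∪ ((fun x : ℝ => 1 - x) ⁻¹' ({y | u y ≠ u' y} ∩ Set.Ioc (0:ℝ) 1)) := by
    rintro x ⟨hx, hx2⟩
    by_cases hx1 : x = 1
    · left; simp [hx1]
    · right
      refine ⟨hx, ?_⟩
      have hlt : x < 1 := lt_of_le_of_ne hx2.2 hx1
      have hmem : (1:ℝ) - x ∈ Set.Ioc (0:ℝ) 1 := ⟨by linarith, by linarith [hx2.1]⟩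
      exact hmem
  refine measure_mono_null hsub (measure_union_null Real.volume_singleton ?_)
  exact (Measure.measurePreserving_sub_left volume 1).quasiMeasurePreserving.preimage_null hN

lemma conv_congr {u u' v v' : ℝ → ℂ}
    (hu : u =ᵐ[volume.restrict (Set.Ioc (0:ℝ) 1)] u')
    (hv : v =ᵐ[volume.restrict (Set.Ioc (0:ℝ) 1)] v')
    {x : ℝ} (hx : x ∈ Set.Icc (0:ℝ) 1) :
    conv01 u v x = conv01 u' v' x := by
  unfold conv01
  rw [intervalIntegral.integral_of_le hx.1, intervalIntegral.integral_of_le hx.1]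
  refine integral_congr_ae ?_
  rw [Filter.EventuallyEq, ae_iff, Measure.restrict_apply' measurableSet_Ioc]
  have huN := null_inter hu
  have hvN := null_inter hv
  have hsub : {t | ¬ u (x - t) * v t = u' (x - t) * v' t} ∩ Set.Ioc 0 x ⊆
      (({x} : Set ℝ) ∪ ((fun t : ℝ => x - t) ⁻¹' ({y | u y ≠ u' y} ∩ Set.Ioc (0:ℝ) 1))) ∪
      ({t | v t ≠ v' t} ∩ Set.Ioc (0:ℝ) 1) := by
    rintro t ⟨ht, ht2⟩
    by_cases hvv : v t = v' t
    · by_cases htx : t = x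
      · left; left; exact htx
      · left; right
        have htlt : t < x := lt_of_le_of_ne ht2.2 htx
        have hmem : x - t ∈ Set.Ioc (0:ℝ) 1 := ⟨by linarith, by linarith [ht2.1, hx.2]⟩
        exact ⟨fun heq => ht (by rw [heq, hvv]), hmem⟩
    · right
      exact ⟨hvv, ⟨ht2.1, le_trans ht2.2 hx.2⟩⟩
  refine measure_mono_null hsub
    (measure_union_null (measure_union_null Real.volume_singleton ?_) hvN)
  exact (Measure.measurePreserving_sub_left volume x).quasiMeasurePreserving.preimage_null huN

end CosAux

open CosAux

set_option maxHeartbeats 2000000 in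
/-- For `f, g ∈ L²(0,1)`, one has `c_n(f)·c_n(g) = c_n(h₁)` where
`h₁ = ½ { R(Rf∗g + f∗Rg) + f∗g + Rf∗Rg }`. -/
theorem cos_mul_cos_eq_cosCoef
    (f g : ℝ → ℂ) (hf : MemLp f 2 mu01) (hg : MemLp g 2 mu01) (n : ℕ) :
    cosCoef f n * cosCoef g n =
      cosCoef (fun x =>
        (1/2 : ℂ) * (Rref (fun y => conv01 (Rref f) g y + conv01 f (Rref g) y) x
          + conv01 f g x + conv01 (Rref f) (Rref g) x)) n := by
  haveI hfin : IsFiniteMeasure (volume.restrict (Set.Ioc (0:ℝ) 1)) :=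
    ⟨by rw [Measure.restrict_apply_univ]; simp [Real.volume_Ioc]⟩
  haveI : IsFiniteMeasure mu01 := hfin
  -- measurable representatives
  have hfae : AEStronglyMeasurable f (volume.restrict (Set.Ioc (0:ℝ) 1)) := hf.1
  have hgae : AEStronglyMeasurable g (volume.restrict (Set.Ioc (0:ℝ) 1)) := hg.1
  set f' : ℝ → ℂ := hfae.mk f with hf'def
  set g' : ℝ → ℂ := hgae.mk g with hg'def
  have hf'm : StronglyMeasurable f' := hfae.stronglyMeasurable_mk
  have hg'm : StronglyMeasurable g' := hgae.stronglyMeasurable_mk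
  have hff' : f =ᵐ[volume.restrict (Set.Ioc (0:ℝ) 1)] f' := hfae.ae_eq_mk
  have hgg' : g =ᵐ[volume.restrict (Set.Ioc (0:ℝ) 1)] g' := hgae.ae_eq_mk
  have hfInt : Integrable f (volume.restrict (Set.Ioc (0:ℝ) 1)) :=
    (hf : MemLp f 2 (volume.restrict (Set.Ioc (0:ℝ) 1))).integrable one_le_two
  have hgInt : Integrable g (volume.restrict (Set.Ioc (0:ℝ) 1)) :=
    (hg : MemLp g 2 (volume.restrict (Set.Ioc (0:ℝ) 1))).integrable one_le_two
  have hf'Int : Integrable f' (volume.restrict (Set.Ioc (0:ℝ) 1)) := hfInt.congr hff'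
  have hg'Int : Integrable g' (volume.restrict (Set.Ioc (0:ℝ) 1)) := hgInt.congr hgg'
  have hf'Ioo : IntegrableOn f' (Set.Ioo (0:ℝ) 1) volume :=
    IntegrableOn.mono_set (show IntegrableOn f' (Set.Ioc (0:ℝ) 1) volume from hf'Int)
      Set.Ioo_subset_Ioc_self
  have hg'Ioo : IntegrableOn g' (Set.Ioo (0:ℝ) 1) volume :=
    IntegrableOn.mono_set (show IntegrableOn g' (Set.Ioc (0:ℝ) 1) volume from hg'Int)
      Set.Ioo_subset_Ioc_self
  set F₁ : ℝ → ℂ := fun u => f' (1 - u) with hF₁def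
  set G₁ : ℝ → ℂ := fun u => g' (1 - u) with hG₁def
  have hF₁m : StronglyMeasurable F₁ :=
    hf'm.comp_measurable (measurable_const.sub measurable_id)
  have hG₁m : StronglyMeasurable G₁ :=
    hg'm.comp_measurable (measurable_const.sub measurable_id)
  have hF₁Ioo : IntegrableOn F₁ (Set.Ioo (0:ℝ) 1) volume :=
    IntegrableOn.mono_set
      (show IntegrableOn F₁ (Set.Ioc (0:ℝ) 1) volume from integrable_reflect hf'Int)
      Set.Ioo_subset_Ioc_self
  have hG₁Ioo : IntegrableOn G₁ (Set.Ioo (0:ℝ) 1) volume :=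
    IntegrableOn.mono_set
      (show IntegrableOn G₁ (Set.Ioc (0:ℝ) 1) volume from integrable_reflect hg'Int)
      Set.Ioo_subset_Ioc_self
  have hccm' : Measurable (fun r : ℝ => cc n (1 - r)) :=
    (cc_meas n).comp (measurable_const.sub measurable_id)
  have hcc1' : ∀ r : ℝ, ‖cc n (1 - r)‖ ≤ 1 := fun r => cc_norm n (1 - r)
  -- the four instances of the main lemma
  obtain ⟨iiC, eqC, intC⟩ := main_term f' g' (cc n) hf'm hg'm (cc_meas n) (cc_norm n)
    hf'Ioo hg'Ioo
  obtain ⟨iiD, eqD, intD⟩ := main_term F₁ G₁ (cc n) hF₁m hG₁m (cc_meas n) (cc_norm n)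
    hF₁Ioo hG₁Ioo
  obtain ⟨iiA, eqA, intA⟩ := main_term F₁ g' (fun r => cc n (1 - r)) hF₁m hg'm hccm' hcc1'
    hF₁Ioo hg'Ioo
  obtain ⟨iiB, eqB, intB⟩ := main_term f' G₁ (fun r => cc n (1 - r)) hf'm hG₁m hccm' hcc1'
    hf'Ioo hG₁Ioo
  -- reduce to the measurable representatives
  have hcos_f : cosCoef f n = cosCoef f' n := by
    unfold cosCoef
    rw [intervalIntegral.integral_of_le zero_le_one,
      intervalIntegral.integral_of_le zero_le_one]
    refine integral_congr_ae ?_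
    filter_upwards [hff'] with x hx
    rw [hx]
  have hcos_g : cosCoef g n = cosCoef g' n := by
    unfold cosCoef
    rw [intervalIntegral.integral_of_le zero_le_one,
      intervalIntegral.integral_of_le zero_le_one]
    refine integral_congr_ae ?_
    filter_upwards [hgg'] with x hx
    rw [hx]
  have hRf := reflect_ae hff'
  have hRg := reflect_ae hgg'
  have hbigcongr : cosCoef (fun x =>
        (1/2 : ℂ) * (Rref (fun y => conv01 (Rref f) g y + conv01 f (Rref g) y) x
          + conv01 f g x + conv01 (Rref f) (Rref g) x)) n =
      cosCoef (fun x =>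
        (1/2 : ℂ) * (Rref (fun y => conv01 (Rref f') g' y + conv01 f' (Rref g') y) x
          + conv01 f' g' x + conv01 (Rref f') (Rref g') x)) n := by
    unfold cosCoef
    refine intervalIntegral.integral_congr fun x hx => ?_
    simp only []
    have hx' : x ∈ Set.Icc (0:ℝ) 1 := by rwa [Set.uIcc_of_le zero_le_one] at hx
    have hx'' : (1 - x) ∈ Set.Icc (0:ℝ) 1 := ⟨by linarith [hx'.2], by linarith [hx'.1]⟩
    have h1 : Rref (fun y => conv01 (Rref f) g y + conv01 f (Rref g) y) x
        = conv01 (Rref f) g (1 - x) + conv01 f (Rref g) (1 - x) := rfl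
    have h2 : Rref (fun y => conv01 (Rref f') g' y + conv01 f' (Rref g') y) x
        = conv01 (Rref f') g' (1 - x) + conv01 f' (Rref g') (1 - x) := rfl
    rw [h1, h2, conv_congr hRf hgg' hx'', conv_congr hff' hRg hx'',
      conv_congr hff' hgg' hx', conv_congr hRf hRg hx']
  rw [hcos_f, hcos_g, hbigcongr]
  -- notation for coefficients
  set Cf : ℂ := ∫ x in Set.Ioc (0:ℝ) 1, f' x * cc n x with hCfdef
  set Cg : ℂ := ∫ x in Set.Ioc (0:ℝ) 1, g' x * cc n x with hCgdef
  have hCf : cosCoef f' n = Cf := by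
    unfold cosCoef
    rw [intervalIntegral.integral_of_le zero_le_one, hCfdef]
    simp only [cc]
  have hCg : cosCoef g' n = Cg := by
    unfold cosCoef
    rw [intervalIntegral.integral_of_le zero_le_one, hCgdef]
    simp only [cc]
  -- interval integrability of the four pieces
  have iiC' : IntervalIntegrable (fun x => conv01 f' g' x * cc n x) volume 0 1 := iiC
  have iiD' : IntervalIntegrable (fun x => conv01 (Rref f') (Rref g') x * cc n x)
      volume 0 1 := iiD
  have hA1 : (fun x : ℝ =>
        (∫ t in (0:ℝ)..(1 - x), F₁ ((1 - x) - t) * g' t) * cc n (1 - (1 - x))) =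
      (fun x => conv01 (Rref f') g' (1 - x) * cc n x) := by
    funext x
    rw [show (1:ℝ) - (1 - x) = x by ring]
    rfl
  have hB1 : (fun x : ℝ =>
        (∫ t in (0:ℝ)..(1 - x), f' ((1 - x) - t) * G₁ t) * cc n (1 - (1 - x))) =
      (fun x => conv01 f' (Rref g') (1 - x) * cc n x) := by
    funext x
    rw [show (1:ℝ) - (1 - x) = x by ring]
    rfl
  have iiA' : IntervalIntegrable (fun x => conv01 (Rref f') g' (1 - x) * cc n x)
      volume 0 1 := by
    rw [← hA1]
    have h0 := iiA.comp_sub_left 1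
    rw [show (1:ℝ) - 0 = 1 by norm_num, show (1:ℝ) - 1 = 0 by norm_num] at h0
    exact h0.symm
  have iiB' : IntervalIntegrable (fun x => conv01 f' (Rref g') (1 - x) * cc n x)
      volume 0 1 := by
    rw [← hB1]
    have h0 := iiB.comp_sub_left 1
    rw [show (1:ℝ) - 0 = 1 by norm_num, show (1:ℝ) - 1 = 0 by norm_num] at h0
    exact h0.symm
  -- the four integral identities
  have hIA : (∫ x in (0:ℝ)..1, conv01 (Rref f') g' (1 - x) * cc n x) =
      ∫ t in Set.Ioc (0:ℝ) 1, g' t * ∫ x in (0:ℝ)..(1 - t), F₁ x * cc n (1 - (x + t)) := by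
    rw [← hA1, comp_one_sub (fun s => (∫ t in (0:ℝ)..s, F₁ (s - t) * g' t) * cc n (1 - s))]
    exact eqA
  have hIB : (∫ x in (0:ℝ)..1, conv01 f' (Rref g') (1 - x) * cc n x) =
      ∫ t in Set.Ioc (0:ℝ) 1, G₁ t * ∫ x in (0:ℝ)..(1 - t), f' x * cc n (1 - (x + t)) := by
    rw [← hB1, comp_one_sub (fun s => (∫ t in (0:ℝ)..s, f' (s - t) * G₁ t) * cc n (1 - s))]
    exact eqB
  have hIC : (∫ x in (0:ℝ)..1, conv01 f' g' x * cc n x) =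
      ∫ t in Set.Ioc (0:ℝ) 1, g' t * ∫ x in (0:ℝ)..(1 - t), f' x * cc n (x + t) := eqC
  have hID : (∫ x in (0:ℝ)..1, conv01 (Rref f') (Rref g') x * cc n x) =
      ∫ t in Set.Ioc (0:ℝ) 1, G₁ t * ∫ x in (0:ℝ)..(1 - t), F₁ x * cc n (x + t) := eqD
  -- the four target integrands
  set PA : ℝ → ℂ := fun t => g' t * ∫ x in (0:ℝ)..(1 - t), F₁ x * cc n (1 - (x + t))
    with hPAdef
  set PB : ℝ → ℂ := fun t => G₁ t * ∫ x in (0:ℝ)..(1 - t), f' x * cc n (1 - (x + t))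
    with hPBdef
  set PC : ℝ → ℂ := fun t => g' t * ∫ x in (0:ℝ)..(1 - t), f' x * cc n (x + t)
    with hPCdef
  set PD : ℝ → ℂ := fun t => G₁ t * ∫ x in (0:ℝ)..(1 - t), F₁ x * cc n (x + t)
    with hPDdef
  have intA' : Integrable PA (volume.restrict (Set.Ioc (0:ℝ) 1)) := intA
  have intB' : Integrable PB (volume.restrict (Set.Ioc (0:ℝ) 1)) := intB
  have intC' : Integrable PC (volume.restrict (Set.Ioc (0:ℝ) 1)) := intC
  have intD' : Integrable PD (volume.restrict (Set.Ioc (0:ℝ) 1)) := intD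
  -- split the cosine coefficient of h₁
  have hsplit : cosCoef (fun x =>
        (1/2 : ℂ) * (Rref (fun y => conv01 (Rref f') g' y + conv01 f' (Rref g') y) x
          + conv01 f' g' x + conv01 (Rref f') (Rref g') x)) n =
      (1/2 : ℂ) * (((∫ x in (0:ℝ)..1, conv01 (Rref f') g' (1 - x) * cc n x)
          + (∫ x in (0:ℝ)..1, conv01 f' (Rref g') (1 - x) * cc n x))
        + ((∫ x in (0:ℝ)..1, conv01 f' g' x * cc n x)
          + (∫ x in (0:ℝ)..1, conv01 (Rref f') (Rref g') x * cc n x))) := by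
    unfold cosCoef
    have hir : (fun x => (1/2 : ℂ) *
          (Rref (fun y => conv01 (Rref f') g' y + conv01 f' (Rref g') y) x
            + conv01 f' g' x + conv01 (Rref f') (Rref g') x)
            * Complex.cos (Real.pi * n * x)) =
        fun x => (1/2 : ℂ) * ((conv01 (Rref f') g' (1 - x) * cc n x
            + conv01 f' (Rref g') (1 - x) * cc n x)
          + (conv01 f' g' x * cc n x + conv01 (Rref f') (Rref g') x * cc n x)) := by
      funext x
      have h1 : Rref (fun y => conv01 (Rref f') g' y + conv01 f' (Rref g') y) x
          = conv01 (Rref f') g' (1 - x) + conv01 f' (Rref g') (1 - x) := rfl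
      have h2 : Complex.cos (Real.pi * n * x) = cc n x := rfl
      rw [h1, h2]
      ring
    rw [hir, intervalIntegral.integral_const_mul]
    congr 1
    rw [intervalIntegral.integral_add (iiA'.add iiB') (iiC'.add iiD'),
      intervalIntegral.integral_add iiA' iiB', intervalIntegral.integral_add iiC' iiD']
  -- pointwise transformation of PB + PD
  set Ψ : ℝ → ℂ := fun u => g' u * (∫ x in (0:ℝ)..u, f' x * cc n (u - x))
      + g' u * (∫ x in (1 - u)..1, f' x * cc n (u + x)) with hΨdef
  have hBD : ∀ t : ℝ, PB t + PD t = Ψ (1 - t) := by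
    intro t
    have e1 : PB t = g' (1 - t) * ∫ x in (0:ℝ)..(1 - t), f' x * cc n ((1 - t) - x) := by
      rw [hPBdef]
      show G₁ t * _ = _
      rw [hG₁def]
      congr 1
      refine intervalIntegral.integral_congr fun x _ => ?_
      show f' x * cc n (1 - (x + t)) = f' x * cc n ((1 - t) - x)
      congr 1
      congr 1
      ring
    have e2 : PD t = g' (1 - t) * ∫ x in (1 - (1 - t))..1, f' x * cc n ((1 - t) + x) := by
      rw [hPDdef]
      show G₁ t * _ = _
      rw [hG₁def]
      congr 1
      have h3 : (fun x : ℝ => F₁ x * cc n (x + t)) =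
          fun x => f' (1 - x) * cc n ((1 - t) + (1 - x)) := by
        funext x
        show f' (1 - x) * cc n (x + t) = f' (1 - x) * cc n ((1 - t) + (1 - x))
        congr 1
        rw [show (1 - t) + (1 - x) = 2 - (x + t) by ring, cc_two_sub]
      rw [h3, comp_sub_t (fun u => f' u * cc n ((1 - t) + u)) t,
        show (1:ℝ) - (1 - t) = t by ring]
    rw [e1, e2, hΨdef]
  have hΨint : Integrable Ψ (volume.restrict (Set.Ioc (0:ℝ) 1)) := by
    have hfe : Ψ = fun u => PB (1 - u) + PD (1 - u) := by
      funext u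
      rw [hBD (1 - u)]
      exact congrArg Ψ (by ring)
    rw [hfe]
    exact integrable_reflect (intB'.add intD')
  have hsum2 : (∫ t in Set.Ioc (0:ℝ) 1, PB t) + (∫ t in Set.Ioc (0:ℝ) 1, PD t) =
      ∫ t in Set.Ioc (0:ℝ) 1, Ψ t := by
    rw [← integral_add intB' intD']
    have h1 : (fun t => PB t + PD t) = fun t => Ψ (1 - t) := funext hBD
    rw [h1, ← intervalIntegral.integral_of_le zero_le_one, comp_one_sub,
      intervalIntegral.integral_of_le zero_le_one]
  -- the big pointwise identity
  have hW : ∀ t ∈ Set.Ioo (0:ℝ) 1, (PA t + PC t) + Ψ t = 2 * Cf * (g' t * cc n t) := by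
    intro t ht
    have ht1 : (1 - t) ∈ Set.Ioo (0:ℝ) 1 := ⟨by linarith [ht.2], by linarith [ht.1]⟩
    have hPA : PA t = g' t * ∫ x in t..1, f' x * cc n (x - t) := by
      show g' t * (∫ x in (0:ℝ)..(1 - t), F₁ x * cc n (1 - (x + t))) = _
      congr 1
      have h1 : (fun x : ℝ => F₁ x * cc n (1 - (x + t))) =
          fun x => f' (1 - x) * cc n ((1 - x) - t) := by
        funext x
        show f' (1 - x) * cc n (1 - (x + t)) = f' (1 - x) * cc n ((1 - x) - t)
        congr 1
        congr 1
        ring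
      rw [h1, comp_sub_t (fun u => f' u * cc n (u - t)) t]
    -- the four inner integrals in ν-form
    have hJ1 : (∫ x in t..1, f' x * cc n (x - t)) =
        ∫ x in Set.Ioc (0:ℝ) 1, (if t < x then f' x * cc n (x - t) else 0) :=
      (integral_nu_if_gt t ht.1.le ht.2.le _).symm
    have hJ2 : (∫ x in (0:ℝ)..(1 - t), f' x * cc n (x + t)) =
        ∫ x in Set.Ioc (0:ℝ) 1, (if x ≤ 1 - t then f' x * cc n (x + t) else 0) :=
      (integral_nu_if_le (1 - t) ht1.1.le ht1.2.le _).symm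
    have hJ3 : (∫ x in (0:ℝ)..t, f' x * cc n (t - x)) =
        ∫ x in Set.Ioc (0:ℝ) 1, (if x ≤ t then f' x * cc n (t - x) else 0) :=
      (integral_nu_if_le t ht.1.le ht.2.le _).symm
    have hJ4 : (∫ x in (1 - t)..1, f' x * cc n (t + x)) =
        ∫ x in Set.Ioc (0:ℝ) 1, (if 1 - t < x then f' x * cc n (t + x) else 0) :=
      (integral_nu_if_gt (1 - t) ht1.1.le ht1.2.le _).symm
    have hi1 : Integrable (fun x => if t < x then f' x * cc n (x - t) else 0)
        (volume.restrict (Set.Ioc (0:ℝ) 1)) :=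
      int_if measurableSet_Ioi hf'm hf'Int _
        ((cc_meas n).comp (measurable_id.sub measurable_const)) (fun r => cc_norm n _)
    have hi2 : Integrable (fun x => if x ≤ 1 - t then f' x * cc n (x + t) else 0)
        (volume.restrict (Set.Ioc (0:ℝ) 1)) :=
      int_if measurableSet_Iic hf'm hf'Int _
        ((cc_meas n).comp (measurable_id.add measurable_const)) (fun r => cc_norm n _)
    have hi3 : Integrable (fun x => if x ≤ t then f' x * cc n (t - x) else 0)
        (volume.restrict (Set.Ioc (0:ℝ) 1)) :=
      int_if measurableSet_Iic hf'm hf'Int _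
        ((cc_meas n).comp (measurable_const.sub measurable_id)) (fun r => cc_norm n _)
    have hi4 : Integrable (fun x => if 1 - t < x then f' x * cc n (t + x) else 0)
        (volume.restrict (Set.Ioc (0:ℝ) 1)) :=
      int_if measurableSet_Ioi hf'm hf'Int _
        ((cc_meas n).comp (measurable_const.add measurable_id)) (fun r => cc_norm n _)
    have hptw : ∀ x : ℝ,
        (((if t < x then f' x * cc n (x - t) else 0)
          + (if x ≤ 1 - t then f' x * cc n (x + t) else 0))
          + (if x ≤ t then f' x * cc n (t - x) else 0))
          + (if 1 - t < x then f' x * cc n (t + x) else 0)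
        = (f' x * cc n x) * (2 * cc n t) := by
      intro x
      have e1 : cc n (t + x) = cc n (x + t) := by rw [add_comm]
      have e2 : cc n (t - x) = cc n (x - t) := cc_sub_comm n x t
      have e3 := cc_sub_add n x t
      by_cases h1 : t < x <;> by_cases h2 : x ≤ 1 - t
      · rw [if_pos h1, if_pos h2, if_neg (not_le.mpr h1), if_neg (not_lt.mpr h2)]
        linear_combination (f' x) * e3
      · rw [if_pos h1, if_neg h2, if_neg (not_le.mpr h1), if_pos (not_le.mp h2), e1]
        linear_combination (f' x) * e3
      · rw [if_neg h1, if_pos h2, if_pos (not_lt.mp h1), if_neg (not_lt.mpr h2), e2]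
        linear_combination (f' x) * e3
      · rw [if_neg h1, if_neg h2, if_pos (not_lt.mp h1), if_pos (not_le.mp h2), e1, e2]
        linear_combination (f' x) * e3
    have hsum : (∫ x in t..1, f' x * cc n (x - t))
        + (∫ x in (0:ℝ)..(1 - t), f' x * cc n (x + t))
        + (∫ x in (0:ℝ)..t, f' x * cc n (t - x))
        + (∫ x in (1 - t)..1, f' x * cc n (t + x))
        = Cf * (2 * cc n t) := by
      have hi12 : Integrable (fun x => (if t < x then f' x * cc n (x - t) else 0)
          + (if x ≤ 1 - t then f' x * cc n (x + t) else 0))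
          (volume.restrict (Set.Ioc (0:ℝ) 1)) := hi1.add hi2
      have hi123 : Integrable (fun x => ((if t < x then f' x * cc n (x - t) else 0)
          + (if x ≤ 1 - t then f' x * cc n (x + t) else 0))
          + (if x ≤ t then f' x * cc n (t - x) else 0))
          (volume.restrict (Set.Ioc (0:ℝ) 1)) := hi12.add hi3
      rw [hJ1, hJ2, hJ3, hJ4, ← integral_add hi1 hi2, ← integral_add hi12 hi3,
        ← integral_add hi123 hi4]
      have : (fun x => (((if t < x then f' x * cc n (x - t) else 0)
          + (if x ≤ 1 - t then f' x * cc n (x + t) else 0))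
          + (if x ≤ t then f' x * cc n (t - x) else 0))
          + (if 1 - t < x then f' x * cc n (t + x) else 0)) =
          fun x => (f' x * cc n x) * (2 * cc n t) := funext hptw
      rw [this, integral_mul_const, hCfdef]
    rw [hPA, hPCdef, hΨdef]
    simp only []
    calc g' t * (∫ x in t..1, f' x * cc n (x - t))
          + g' t * (∫ x in (0:ℝ)..(1 - t), f' x * cc n (x + t))
          + (g' t * (∫ x in (0:ℝ)..t, f' x * cc n (t - x))
            + g' t * (∫ x in (1 - t)..1, f' x * cc n (t + x)))
        = g' t * ((∫ x in t..1, f' x * cc n (x - t))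
          + (∫ x in (0:ℝ)..(1 - t), f' x * cc n (x + t))
          + (∫ x in (0:ℝ)..t, f' x * cc n (t - x))
          + (∫ x in (1 - t)..1, f' x * cc n (t + x))) := by ring
      _ = g' t * (Cf * (2 * cc n t)) := by rw [hsum]
      _ = 2 * Cf * (g' t * cc n t) := by ring
  -- assemble everything
  rw [hCf, hCg, hsplit, hIA, hIB, hIC, hID]
  have hgrp : ((∫ t in Set.Ioc (0:ℝ) 1, PA t) + (∫ t in Set.Ioc (0:ℝ) 1, PB t))
      + ((∫ t in Set.Ioc (0:ℝ) 1, PC t) + (∫ t in Set.Ioc (0:ℝ) 1, PD t)) =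
      ((∫ t in Set.Ioc (0:ℝ) 1, PA t) + (∫ t in Set.Ioc (0:ℝ) 1, PC t))
      + ((∫ t in Set.Ioc (0:ℝ) 1, PB t) + (∫ t in Set.Ioc (0:ℝ) 1, PD t)) := by ring
  have hAC : Integrable (fun t => PA t + PC t) (volume.restrict (Set.Ioc (0:ℝ) 1)) :=
    intA'.add intC'
  rw [hgrp, hsum2, ← integral_add intA' intC', ← integral_add hAC hΨint]
  have hfinal : (∫ t in Set.Ioc (0:ℝ) 1, ((PA t + PC t) + Ψ t)) =
      ∫ t in Set.Ioc (0:ℝ) 1, (2 * Cf) * (g' t * cc n t) := by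
    refine integral_congr_ae ?_
    filter_upwards [ae_Ioo01] with t ht
    rw [hW t ht]
  rw [hfinal, integral_const_mul, ← hCgdef]
  ring
end

section
/- For f, g in L²(0,1), the n-th sine Fourier coefficients satisfy s_n(f)·s_n(g) = c_n(h₂), where h₂ = (1/2){R(Rf∗g + f∗Rg) − f∗g − Rf∗Rg}. -/
open MeasureTheory Real

/-- `n`-th sine Fourier coefficient `s_n(f) = ∫₀¹ f(x) sin(πnx) dx`. -/
noncomputable def sinCoef (f : ℝ → ℂ) (n : ℕ) : ℂ :=
  ∫ x in (0:ℝ)..1, f x * Complex.sin (Real.pi * n * x)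

/-! ### Auxiliary trigonometric functions and identities -/

noncomputable def cc (n : ℕ) (r : ℝ) : ℂ := ((Real.cos (Real.pi * n * r) : ℝ) : ℂ)
noncomputable def scc (n : ℕ) (r : ℝ) : ℂ := ((Real.sin (Real.pi * n * r) : ℝ) : ℂ)

lemma ccos_eq (n : ℕ) (x : ℝ) : Complex.cos (Real.pi * n * x) = cc n x := by
  unfold cc; push_cast [Complex.ofReal_cos]; ring_nf

lemma ssin_eq (n : ℕ) (x : ℝ) : Complex.sin (Real.pi * n * x) = scc n x := by
  unfold scc; push_cast [Complex.ofReal_sin]; ring_nf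

lemma cc_cont (n : ℕ) : Continuous (cc n) :=
  Complex.continuous_ofReal.comp (Real.continuous_cos.comp (by continuity))

lemma cc_norm (n : ℕ) (r : ℝ) : ‖cc n r‖ ≤ 1 := by
  unfold cc; rw [Complex.norm_real]; exact Real.abs_cos_le_one _

lemma cc_flip (n : ℕ) (s : ℝ) : cc n (1 - s) = (-1 : ℂ) ^ n * cc n s := by
  unfold cc
  rw [show Real.pi * n * (1 - s) = n * Real.pi - Real.pi * n * s by ring,
    Real.cos_nat_mul_pi_sub]
  push_cast; ring

lemma cc_even (n : ℕ) (s : ℝ) : cc n (-s) = cc n s := by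
  unfold cc; rw [show Real.pi * n * (-s) = -(Real.pi * n * s) by ring, Real.cos_neg]

lemma sc_mul_sc (n : ℕ) (x t : ℝ) :
    scc n x * scc n t = (cc n (x - t) - cc n (x + t)) / 2 := by
  unfold scc cc
  rw [show Real.pi * n * (x - t) = Real.pi * n * x - Real.pi * n * t by ring,
    show Real.pi * n * (x + t) = Real.pi * n * x + Real.pi * n * t by ring,
    Real.cos_sub, Real.cos_add]
  push_cast; ring

lemma neg_one_pow_sq {n : ℕ} (z : ℂ) : ((-1 : ℂ) ^ n) * ((-1 : ℂ) ^ n * z) = z := by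
  rw [← mul_assoc, ← mul_pow]; simp

/-! ### Fubini on the triangle -/

open intervalIntegral (integral_of_le) in
lemma swap_triangle (H : ℝ → ℝ → ℂ)
    (hH : IntegrableOn (fun p : ℝ × ℝ => H p.1 p.2)
      (Set.Ioc (0:ℝ) 1 ×ˢ Set.Ioc (0:ℝ) 1) (volume.prod volume)) :
    (∫ u in (0:ℝ)..1, ∫ t in (0:ℝ)..u, H u t) = ∫ t in (0:ℝ)..1, ∫ u in t..1, H u t := by
  set T : Set (ℝ × ℝ) := {p | 0 < p.2 ∧ p.2 ≤ p.1 ∧ p.1 ≤ 1} with hTdef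
  have hT : MeasurableSet T := by
    apply MeasurableSet.inter
    · exact measurableSet_lt measurable_const measurable_snd
    apply MeasurableSet.inter
    · exact measurableSet_le measurable_snd measurable_fst
    · exact measurableSet_le measurable_fst measurable_const
  have hTsub : T ⊆ Set.Ioc (0:ℝ) 1 ×ˢ Set.Ioc (0:ℝ) 1 := by
    rintro ⟨u, t⟩ ⟨h1, h2, h3⟩
    exact ⟨⟨lt_of_lt_of_le h1 h2, h3⟩, ⟨h1, le_trans h2 h3⟩⟩
  set K : ℝ × ℝ → ℂ := T.indicator (fun p => H p.1 p.2) with hKdef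
  have hK : Integrable K (volume.prod volume) :=
    (integrable_indicator_iff hT).2 (hH.mono_set hTsub)
  have hL : (∫ u in (0:ℝ)..1, ∫ t in (0:ℝ)..u, H u t) = ∫ u, ∫ t, K (u, t) := by
    rw [integral_of_le zero_le_one]
    have h1 : ∀ u ∈ Set.Ioc (0:ℝ) 1, (∫ t in (0:ℝ)..u, H u t) = ∫ t, K (u, t) := by
      intro u hu
      rw [integral_of_le hu.1.le, ← MeasureTheory.integral_indicator measurableSet_Ioc]
      congr 1; ext t
      by_cases ht : t ∈ Set.Ioc (0:ℝ) u
      · rw [Set.indicator_of_mem ht]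
        have : (u, t) ∈ T := ⟨ht.1, ht.2, hu.2⟩
        rw [hKdef, Set.indicator_of_mem this]
      · rw [Set.indicator_of_notMem ht]
        have : (u, t) ∉ T := fun hc => ht ⟨hc.1, hc.2.1⟩
        rw [hKdef, Set.indicator_of_notMem this]
    rw [setIntegral_congr_fun measurableSet_Ioc h1,
      ← MeasureTheory.integral_indicator measurableSet_Ioc]
    congr 1; ext u
    by_cases hu : u ∈ Set.Ioc (0:ℝ) 1
    · rw [Set.indicator_of_mem hu]
    · rw [Set.indicator_of_notMem hu]
      have : ∀ t, K (u, t) = 0 := by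
        intro t
        apply Set.indicator_of_notMem
        intro hc
        exact hu ⟨lt_of_lt_of_le hc.1 hc.2.1, hc.2.2⟩
      simp [this]
  have hR : (∫ t in (0:ℝ)..1, ∫ u in t..1, H u t) = ∫ t, ∫ u, K (u, t) := by
    rw [integral_of_le zero_le_one]
    have h1 : ∀ t ∈ Set.Ioc (0:ℝ) 1, (∫ u in t..1, H u t) = ∫ u, K (u, t) := by
      intro t ht
      rw [integral_of_le ht.2, ← integral_Icc_eq_integral_Ioc,
        ← MeasureTheory.integral_indicator measurableSet_Icc]
      congr 1; ext u
      by_cases hu : u ∈ Set.Icc t 1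
      · rw [Set.indicator_of_mem hu]
        have : (u, t) ∈ T := ⟨ht.1, hu.1, hu.2⟩
        rw [hKdef, Set.indicator_of_mem this]
      · rw [Set.indicator_of_notMem hu]
        have : (u, t) ∉ T := fun hc => hu ⟨hc.2.1, hc.2.2⟩
        rw [hKdef, Set.indicator_of_notMem this]
    rw [setIntegral_congr_fun measurableSet_Ioc h1,
      ← MeasureTheory.integral_indicator measurableSet_Ioc]
    congr 1; ext t
    by_cases ht : t ∈ Set.Ioc (0:ℝ) 1
    · rw [Set.indicator_of_mem ht]
    · rw [Set.indicator_of_notMem ht]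
      have : ∀ u, K (u, t) = 0 := by
        intro u
        apply Set.indicator_of_notMem
        intro hc
        exact ht ⟨hc.1, le_trans hc.2.1 hc.2.2⟩
      simp [this]
  rw [hL, hR]
  exact integral_integral_swap hK

/-! ### Integrability facts -/

section Integrability

variable {F G : ℝ → ℂ} {n : ℕ}

lemma refl_integrable (hFm : Measurable F) (hF : Integrable F (volume : Measure ℝ)) :
    Integrable (fun s => F (1 - s)) (volume : Measure ℝ) :=
  ((Measure.measurePreserving_sub_left (volume : Measure ℝ) 1).integrable_comp
    hFm.aestronglyMeasurable).2 hF

lemma shear_integrable (hFm : Measurable F) (hGm : Measurable G)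
    (hF : Integrable F (volume : Measure ℝ)) (hG : Integrable G (volume : Measure ℝ)) :
    Integrable (fun p : ℝ × ℝ => F (p.1 - p.2) * G p.2) (volume.prod volume) :=
  ((measurePreserving_sub_prod (volume : Measure ℝ) volume).integrable_comp
    (hF.mul_prod hG).aestronglyMeasurable).2 (hF.mul_prod hG)

lemma sq_integrable (hFm : Measurable F) (hGm : Measurable G)
    (hF : Integrable F (volume : Measure ℝ)) (hG : Integrable G (volume : Measure ℝ)) :
    IntegrableOn (fun p : ℝ × ℝ => F (p.1 - p.2) * G p.2 * cc n p.1)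
      (Set.Ioc (0:ℝ) 1 ×ˢ Set.Ioc (0:ℝ) 1) (volume.prod volume) := by
  have h1 := shear_integrable hFm hGm hF hG
  have h2 : Integrable (fun p : ℝ × ℝ => cc n p.1 * (F (p.1 - p.2) * G p.2))
      (volume.prod volume) :=
    h1.bdd_mul ((cc_cont n).measurable.comp measurable_fst).aestronglyMeasurable
      (Filter.Eventually.of_forall fun p => cc_norm n _)
  exact (h2.congr (Filter.Eventually.of_forall fun p => by ring)).integrableOn

lemma dom_restr (hFm : Measurable F) (hGm : Measurable G)
    (hF : Integrable F (volume : Measure ℝ)) (hG : Integrable G (volume : Measure ℝ))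
    (φ : ℝ × ℝ → ℝ) (hφ : Measurable φ) :
    Integrable (fun p : ℝ × ℝ => G p.1 * (F p.2 * cc n (φ p)))
      ((volume.restrict (Set.Ioc (0:ℝ) 1)).prod volume) := by
  have h1 : Integrable (fun z : ℝ × ℝ => G z.1 * F z.2)
      ((volume.restrict (Set.Ioc (0:ℝ) 1)).prod volume) := hG.restrict.mul_prod hF
  have h2 : Integrable (fun p : ℝ × ℝ => cc n (φ p) * (G p.1 * F p.2))
      ((volume.restrict (Set.Ioc (0:ℝ) 1)).prod volume) :=
    h1.bdd_mul ((cc_cont n).measurable.comp hφ).aestronglyMeasurable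
      (Filter.Eventually.of_forall fun p => cc_norm n _)
  exact h2.congr (Filter.Eventually.of_forall fun p => by ring)

lemma key_integrable (S : Set (ℝ × ℝ)) (hS : MeasurableSet S) (W : ℝ × ℝ → ℂ)
    (hW : Integrable W ((volume.restrict (Set.Ioc (0:ℝ) 1)).prod volume)) :
    IntegrableOn (fun t => ∫ x, S.indicator W (t, x)) (Set.Ioc (0:ℝ) 1) volume :=
  ((integrable_indicator_iff hS).2 hW.integrableOn).integral_prod_left

lemma outer_II (hFm : Measurable F) (hGm : Measurable G)
    (hF : Integrable F (volume : Measure ℝ)) (hG : Integrable G (volume : Measure ℝ))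
    (φ : ℝ × ℝ → ℝ) (hφ : Measurable φ)
    (a b : ℝ → ℝ) (ham : Measurable a) (hbm : Measurable b)
    (hab : ∀ t ∈ Set.Ioc (0:ℝ) 1, a t ≤ b t) :
    IntervalIntegrable (fun t => G t * ∫ x in (a t)..(b t), F x * cc n (φ (t, x)))
      volume 0 1 := by
  set S : Set (ℝ × ℝ) := {p | a p.1 < p.2 ∧ p.2 ≤ b p.1} with hSdef
  have hS : MeasurableSet S :=
    (measurableSet_lt (ham.comp measurable_fst) measurable_snd).inter
      (measurableSet_le measurable_snd (hbm.comp measurable_fst))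
  set W : ℝ × ℝ → ℂ := fun p => G p.1 * (F p.2 * cc n (φ p)) with hWdef
  have hW : Integrable W ((volume.restrict (Set.Ioc (0:ℝ) 1)).prod volume) :=
    dom_restr hFm hGm hF hG φ hφ
  have key := key_integrable S hS W hW
  rw [intervalIntegrable_iff, Set.uIoc_of_le zero_le_one]
  apply key.congr_fun _ measurableSet_Ioc
  intro t ht
  show (∫ x, S.indicator W (t, x)) = G t * ∫ x in (a t)..(b t), F x * cc n (φ (t, x))
  rw [intervalIntegral.integral_of_le (hab t ht),
    ← MeasureTheory.integral_indicator measurableSet_Ioc, ← integral_const_mul]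
  congr 1; ext x
  by_cases hx : x ∈ Set.Ioc (a t) (b t)
  · rw [Set.indicator_of_mem hx]
    have : (t, x) ∈ S := ⟨hx.1, hx.2⟩
    rw [Set.indicator_of_mem this]
  · rw [Set.indicator_of_notMem hx, mul_zero]
    have : (t, x) ∉ S := fun hc => hx ⟨hc.1, hc.2⟩
    rw [Set.indicator_of_notMem this]

lemma conv_II (hFm : Measurable F) (hGm : Measurable G)
    (hF : Integrable F (volume : Measure ℝ)) (hG : Integrable G (volume : Measure ℝ)) :
    IntervalIntegrable (conv01 F G) volume 0 1 := by
  set S : Set (ℝ × ℝ) := {p | 0 < p.2 ∧ p.2 ≤ p.1} with hSdef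
  have hS : MeasurableSet S :=
    (measurableSet_lt measurable_const measurable_snd).inter
      (measurableSet_le measurable_snd measurable_fst)
  set W : ℝ × ℝ → ℂ := fun p => F (p.1 - p.2) * G p.2 with hWdef
  have hWi : Integrable W ((volume.restrict (Set.Ioc (0:ℝ) 1)).prod volume) := by
    have h1 := shear_integrable hFm hGm hF hG
    have h2 : (volume.restrict (Set.Ioc (0:ℝ) 1)).prod (volume : Measure ℝ)
        = (volume.prod volume).restrict (Set.Ioc (0:ℝ) 1 ×ˢ Set.univ) := by
      rw [← Measure.prod_restrict, Measure.restrict_univ]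
    rw [hWdef, h2]
    exact h1.integrableOn
  have key := key_integrable S hS W hWi
  rw [intervalIntegrable_iff, Set.uIoc_of_le zero_le_one]
  apply key.congr_fun _ measurableSet_Ioc
  intro u hu
  show (∫ x, S.indicator W (u, x)) = conv01 F G u
  simp only [conv01]
  rw [intervalIntegral.integral_of_le hu.1.le,
    ← MeasureTheory.integral_indicator measurableSet_Ioc]
  congr 1

end Integrability

/-! ### The basic transformations of the four convolution terms -/

section Terms

variable {F G : ℝ → ℂ} {n : ℕ}

lemma conv_swap (hFm : Measurable F) (hGm : Measurable G)
    (hF : Integrable F (volume : Measure ℝ)) (hG : Integrable G (volume : Measure ℝ)) :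
    (∫ u in (0:ℝ)..1, conv01 F G u * cc n u) =
      ∫ t in (0:ℝ)..1, G t * ∫ u in t..1, F (u - t) * cc n u := by
  have h1 : ∀ u ∈ Set.uIcc (0:ℝ) 1, conv01 F G u * cc n u
      = ∫ t in (0:ℝ)..u, F (u - t) * G t * cc n u := fun u _ => by
    simp only [conv01]
    rw [← intervalIntegral.integral_mul_const]
  rw [intervalIntegral.integral_congr h1,
    swap_triangle (fun u t => F (u - t) * G t * cc n u) (sq_integrable hFm hGm hF hG)]
  apply intervalIntegral.integral_congr
  intro t _
  show (∫ u in t..1, F (u - t) * G t * cc n u) = G t * ∫ u in t..1, F (u - t) * cc n u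
  have h2 : ∀ u ∈ Set.uIcc t 1, F (u - t) * G t * cc n u = G t * (F (u - t) * cc n u) :=
    fun u _ => by ring
  rw [intervalIntegral.integral_congr h2, intervalIntegral.integral_const_mul]

lemma inner_plus (t : ℝ) :
    (∫ u in t..1, F (u - t) * cc n u) = ∫ x in (0:ℝ)..(1 - t), F x * cc n (x + t) := by
  have h1 : ∀ u ∈ Set.uIcc t 1, F (u - t) * cc n u
      = (fun x => F x * cc n (x + t)) (u - t) := by
    intro u _; simp only [sub_add_cancel]
  rw [intervalIntegral.integral_congr h1,
    intervalIntegral.integral_comp_sub_right (fun x => F x * cc n (x + t)) t, sub_self]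

lemma inner_minus (t : ℝ) :
    (∫ u in t..1, F (1 - (u - t)) * cc n u)
      = (-1 : ℂ) ^ n * ∫ x in t..1, F x * cc n (x - t) := by
  have h1 : ∀ u ∈ Set.uIcc t 1, F (1 - (u - t)) * cc n u
      = (fun x => F x * cc n (1 + t - x)) (1 + t - u) := by
    intro u _
    have e1 : 1 - (u - t) = 1 + t - u := by ring
    have e2 : 1 + t - (1 + t - u) = u := by ring
    simp only [e1, e2]
  rw [intervalIntegral.integral_congr h1,
    intervalIntegral.integral_comp_sub_left (fun x => F x * cc n (1 + t - x)) (1 + t)]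
  have e3 : (1:ℝ) + t - 1 = t := by ring
  have e4 : (1:ℝ) + t - t = 1 := by ring
  rw [e3, e4]
  have h2 : ∀ x ∈ Set.uIcc t 1, F x * cc n (1 + t - x)
      = (-1 : ℂ) ^ n * (F x * cc n (x - t)) := by
    intro x _
    rw [show (1:ℝ) + t - x = 1 - (x - t) by ring, cc_flip]
    ring
  rw [intervalIntegral.integral_congr h2, intervalIntegral.integral_const_mul]

lemma cosCoef_Rref (h : ℝ → ℂ) :
    (∫ x in (0:ℝ)..1, h (1 - x) * cc n x) = (-1 : ℂ) ^ n * ∫ y in (0:ℝ)..1, h y * cc n y := by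
  have h1 : ∀ x ∈ Set.uIcc (0:ℝ) 1, h (1 - x) * cc n x
      = (fun y => h y * cc n (1 - y)) (1 - x) := by
    intro x _; simp only [sub_sub_cancel]
  rw [intervalIntegral.integral_congr h1,
    intervalIntegral.integral_comp_sub_left (fun y => h y * cc n (1 - y)) 1, sub_self, sub_zero]
  have h2 : ∀ y ∈ Set.uIcc (0:ℝ) 1, h y * cc n (1 - y)
      = (-1 : ℂ) ^ n * (h y * cc n y) := by
    intro y _; rw [cc_flip]; ring
  rw [intervalIntegral.integral_congr h2, intervalIntegral.integral_const_mul]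

lemma termT3 (hFm : Measurable F) (hGm : Measurable G)
    (hF : Integrable F (volume : Measure ℝ)) (hG : Integrable G (volume : Measure ℝ)) :
    (∫ u in (0:ℝ)..1, conv01 F G u * cc n u)
      = ∫ t in (0:ℝ)..1, G t * ∫ x in (0:ℝ)..(1 - t), F x * cc n (x + t) := by
  rw [conv_swap hFm hGm hF hG]
  apply intervalIntegral.integral_congr
  intro t _
  show G t * (∫ u in t..1, F (u - t) * cc n u)
      = G t * ∫ x in (0:ℝ)..(1 - t), F x * cc n (x + t)
  rw [inner_plus]

lemma termT1' (hFm : Measurable F) (hGm : Measurable G)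
    (hF : Integrable F (volume : Measure ℝ)) (hG : Integrable G (volume : Measure ℝ)) :
    (∫ u in (0:ℝ)..1, conv01 (Rref F) G u * cc n u)
      = (-1 : ℂ) ^ n * ∫ t in (0:ℝ)..1, G t * ∫ x in t..1, F x * cc n (x - t) := by
  have hRm : Measurable (Rref F) := hFm.comp (measurable_const.sub measurable_id)
  have hRi : Integrable (Rref F) (volume : Measure ℝ) := refl_integrable hFm hF
  rw [conv_swap hRm hGm hRi hG]
  have h1 : ∀ t ∈ Set.uIcc (0:ℝ) 1,
      G t * (∫ u in t..1, Rref F (u - t) * cc n u)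
        = (-1 : ℂ) ^ n * (G t * ∫ x in t..1, F x * cc n (x - t)) := by
    intro t _
    simp only [Rref]
    rw [inner_minus]; ring
  rw [intervalIntegral.integral_congr h1, intervalIntegral.integral_const_mul]

lemma termT2' (hFm : Measurable F) (hGm : Measurable G)
    (hF : Integrable F (volume : Measure ℝ)) (hG : Integrable G (volume : Measure ℝ)) :
    (∫ u in (0:ℝ)..1, conv01 F (Rref G) u * cc n u)
      = (-1 : ℂ) ^ n * ∫ y in (0:ℝ)..1, G y * ∫ x in (0:ℝ)..y, F x * cc n (x - y) := by
  have hRm : Measurable (Rref G) := hGm.comp (measurable_const.sub measurable_id)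
  have hRi : Integrable (Rref G) (volume : Measure ℝ) := refl_integrable hGm hG
  rw [conv_swap hFm hRm hF hRi]
  set ψ : ℝ → ℂ := fun y => G y * ∫ x in (0:ℝ)..y, F x * cc n (x + (1 - y)) with hψ
  have h1 : ∀ t ∈ Set.uIcc (0:ℝ) 1,
      Rref G t * (∫ u in t..1, F (u - t) * cc n u) = ψ (1 - t) := by
    intro t _
    rw [inner_plus, hψ]
    simp only [Rref, sub_sub_cancel]
  rw [intervalIntegral.integral_congr h1,
    intervalIntegral.integral_comp_sub_left ψ 1, sub_self, sub_zero]
  have h2 : ∀ y ∈ Set.uIcc (0:ℝ) 1,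
      ψ y = (-1 : ℂ) ^ n * (G y * ∫ x in (0:ℝ)..y, F x * cc n (x - y)) := by
    intro y _
    rw [hψ]
    have h3 : ∀ x ∈ Set.uIcc (0:ℝ) y, F x * cc n (x + (1 - y))
        = (-1 : ℂ) ^ n * (F x * cc n (x - y)) := by
      intro x _
      rw [show x + (1 - y) = 1 - (y - x) by ring, cc_flip,
        show y - x = -(x - y) by ring, cc_even]
      ring
    show G y * (∫ x in (0:ℝ)..y, F x * cc n (x + (1 - y))) = _
    rw [intervalIntegral.integral_congr h3, intervalIntegral.integral_const_mul]
    ring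
  rw [intervalIntegral.integral_congr h2, intervalIntegral.integral_const_mul]

lemma termT4 (hFm : Measurable F) (hGm : Measurable G)
    (hF : Integrable F (volume : Measure ℝ)) (hG : Integrable G (volume : Measure ℝ)) :
    (∫ u in (0:ℝ)..1, conv01 (Rref F) (Rref G) u * cc n u)
      = ∫ y in (0:ℝ)..1, G y * ∫ x in (1 - y)..1, F x * cc n (x + y) := by
  have hRFm : Measurable (Rref F) := hFm.comp (measurable_const.sub measurable_id)
  have hRFi : Integrable (Rref F) (volume : Measure ℝ) := refl_integrable hFm hF
  have hRGm : Measurable (Rref G) := hGm.comp (measurable_const.sub measurable_id)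
  have hRGi : Integrable (Rref G) (volume : Measure ℝ) := refl_integrable hGm hG
  rw [conv_swap hRFm hRGm hRFi hRGi]
  set ψ : ℝ → ℂ := fun y =>
    G y * ((-1 : ℂ) ^ n * ∫ x in (1 - y)..1, F x * cc n (x - (1 - y))) with hψ
  have h1 : ∀ t ∈ Set.uIcc (0:ℝ) 1,
      Rref G t * (∫ u in t..1, Rref F (u - t) * cc n u) = ψ (1 - t) := by
    intro t _
    simp only [Rref]
    rw [inner_minus, hψ]
    simp only [sub_sub_cancel]
  rw [intervalIntegral.integral_congr h1,
    intervalIntegral.integral_comp_sub_left ψ 1, sub_self, sub_zero]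
  apply intervalIntegral.integral_congr
  intro y _
  rw [hψ]
  have h3 : ∀ x ∈ Set.uIcc (1 - y) 1, F x * cc n (x - (1 - y))
      = (-1 : ℂ) ^ n * (F x * cc n (x + y)) := by
    intro x _
    rw [show x - (1 - y) = -(1 - (x + y)) by ring, cc_even, cc_flip]
    ring
  show G y * ((-1 : ℂ) ^ n * ∫ x in (1 - y)..1, F x * cc n (x - (1 - y)))
      = G y * ∫ x in (1 - y)..1, F x * cc n (x + y)
  rw [intervalIntegral.integral_congr h3, intervalIntegral.integral_const_mul,
    neg_one_pow_sq]

end Terms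

/-! ### The main identity for globally measurable integrable functions -/

theorem main_meas {F G : ℝ → ℂ} {n : ℕ} (hFm : Measurable F) (hGm : Measurable G)
    (hF : Integrable F (volume : Measure ℝ)) (hG : Integrable G (volume : Measure ℝ)) :
    (∫ x in (0:ℝ)..1, F x * scc n x) * (∫ x in (0:ℝ)..1, G x * scc n x) =
      ∫ x in (0:ℝ)..1, ((1/2 : ℂ) *
        ((conv01 (Rref F) G (1 - x) + conv01 F (Rref G) (1 - x))
          - conv01 F G x - conv01 (Rref F) (Rref G) x)) * cc n x := by
  have hRFm : Measurable (Rref F) := hFm.comp (measurable_const.sub measurable_id)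
  have hRFi : Integrable (Rref F) (volume : Measure ℝ) := refl_integrable hFm hF
  have hRGm : Measurable (Rref G) := hGm.comp (measurable_const.sub measurable_id)
  have hRGi : Integrable (Rref G) (volume : Measure ℝ) := refl_integrable hGm hG
  set ILm : ℝ → ℂ := fun t => ∫ x in (0:ℝ)..1, F x * cc n (x - t) with hILm
  set ILp : ℝ → ℂ := fun t => ∫ x in (0:ℝ)..1, F x * cc n (x + t) with hILp
  have hFIIm : ∀ (c a b : ℝ), IntervalIntegrable (fun x => F x * cc n (x - c)) volume a b :=
    fun c a b => hF.intervalIntegrable.mul_continuousOn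
      (((cc_cont n).comp (continuous_id.sub continuous_const)).continuousOn)
  have hFIIp : ∀ (c a b : ℝ), IntervalIntegrable (fun x => F x * cc n (x + c)) volume a b :=
    fun c a b => hF.intervalIntegrable.mul_continuousOn
      (((cc_cont n).comp (continuous_id.add continuous_const)).continuousOn)
  have ii1 : IntervalIntegrable (fun t => G t * ∫ x in t..1, F x * cc n (x - t)) volume 0 1 :=
    outer_II hFm hGm hF hG (fun p => p.2 - p.1) (measurable_snd.sub measurable_fst)
      (fun t => t) (fun _ => 1) measurable_id measurable_const (fun t ht => ht.2)
  have ii2 : IntervalIntegrable (fun t => G t * ∫ x in (0:ℝ)..t, F x * cc n (x - t)) volume 0 1 :=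
    outer_II hFm hGm hF hG (fun p => p.2 - p.1) (measurable_snd.sub measurable_fst)
      (fun _ => 0) (fun t => t) measurable_const measurable_id (fun t ht => ht.1.le)
  have ii3 : IntervalIntegrable
      (fun t => G t * ∫ x in (0:ℝ)..(1 - t), F x * cc n (x + t)) volume 0 1 :=
    outer_II hFm hGm hF hG (fun p => p.2 + p.1) (measurable_snd.add measurable_fst)
      (fun _ => 0) (fun t => 1 - t) measurable_const (measurable_const.sub measurable_id)
      (fun t ht => by show (0:ℝ) ≤ 1 - t; linarith [ht.2])
  have ii4 : IntervalIntegrable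
      (fun t => G t * ∫ x in (1 - t)..1, F x * cc n (x + t)) volume 0 1 :=
    outer_II hFm hGm hF hG (fun p => p.2 + p.1) (measurable_snd.add measurable_fst)
      (fun t => 1 - t) (fun _ => 1) (measurable_const.sub measurable_id) measurable_const
      (fun t ht => by show (1:ℝ) - t ≤ 1; linarith [ht.1])
  have hsplitm : ∀ t : ℝ, G t * ILm t
      = G t * (∫ x in t..1, F x * cc n (x - t))
        + G t * ∫ x in (0:ℝ)..t, F x * cc n (x - t) := by
    intro t
    rw [hILm]
    show G t * (∫ x in (0:ℝ)..1, F x * cc n (x - t)) = _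
    rw [← intervalIntegral.integral_add_adjacent_intervals (hFIIm t 0 t) (hFIIm t t 1)]
    ring
  have hsplitp : ∀ t : ℝ, G t * ILp t
      = G t * (∫ x in (0:ℝ)..(1 - t), F x * cc n (x + t))
        + G t * ∫ x in (1 - t)..1, F x * cc n (x + t) := by
    intro t
    rw [hILp]
    show G t * (∫ x in (0:ℝ)..1, F x * cc n (x + t)) = _
    rw [← intervalIntegral.integral_add_adjacent_intervals (hFIIp t 0 (1 - t)) (hFIIp t (1 - t) 1)]
    ring
  have SA : (∫ t in (0:ℝ)..1, G t * ∫ x in t..1, F x * cc n (x - t))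
      + (∫ t in (0:ℝ)..1, G t * ∫ x in (0:ℝ)..t, F x * cc n (x - t))
      = ∫ t in (0:ℝ)..1, G t * ILm t := by
    rw [← intervalIntegral.integral_add ii1 ii2]
    exact intervalIntegral.integral_congr fun t _ => (hsplitm t).symm
  have SB : (∫ t in (0:ℝ)..1, G t * ∫ x in (0:ℝ)..(1 - t), F x * cc n (x + t))
      + (∫ t in (0:ℝ)..1, G t * ∫ x in (1 - t)..1, F x * cc n (x + t))
      = ∫ t in (0:ℝ)..1, G t * ILp t := by
    rw [← intervalIntegral.integral_add ii3 ii4]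
    exact intervalIntegral.integral_congr fun t _ => (hsplitp t).symm
  have gILm : IntervalIntegrable (fun t => G t * ILm t) volume 0 1 := by
    have h := ii1.add ii2
    have e : (fun t => G t * ILm t) = (fun t =>
        G t * (∫ x in t..1, F x * cc n (x - t))
          + G t * ∫ x in (0:ℝ)..t, F x * cc n (x - t)) :=
      funext fun t => hsplitm t
    rw [e]; exact h
  have gILp : IntervalIntegrable (fun t => G t * ILp t) volume 0 1 := by
    have h := ii3.add ii4
    have e : (fun t => G t * ILp t) = (fun t =>
        G t * (∫ x in (0:ℝ)..(1 - t), F x * cc n (x + t))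
          + G t * ∫ x in (1 - t)..1, F x * cc n (x + t)) :=
      funext fun t => hsplitp t
    rw [e]; exact h
  have hLHS : (∫ x in (0:ℝ)..1, F x * scc n x) * (∫ t in (0:ℝ)..1, G t * scc n t)
      = ∫ t in (0:ℝ)..1, G t * ((1/2 : ℂ) * (ILm t - ILp t)) := by
    rw [mul_comm, ← intervalIntegral.integral_mul_const]
    apply intervalIntegral.integral_congr
    intro t _
    show G t * scc n t * (∫ x in (0:ℝ)..1, F x * scc n x)
        = G t * ((1/2 : ℂ) * (ILm t - ILp t))
    have e1 : G t * scc n t * (∫ x in (0:ℝ)..1, F x * scc n x)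
        = G t * ((∫ x in (0:ℝ)..1, F x * scc n x) * scc n t) := by ring
    rw [e1, ← intervalIntegral.integral_mul_const]
    congr 1
    have e2 : ∀ x ∈ Set.uIcc (0:ℝ) 1, F x * scc n x * scc n t
        = (1/2 : ℂ) * (F x * cc n (x - t) - F x * cc n (x + t)) := by
      intro x _
      rw [mul_assoc, sc_mul_sc]
      ring
    rw [intervalIntegral.integral_congr e2, intervalIntegral.integral_const_mul,
      intervalIntegral.integral_sub (hFIIm t 0 1) (hFIIp t 0 1), hILm, hILp]
  rw [hLHS]
  have i3 : IntervalIntegrable (fun x => conv01 F G x * cc n x) volume 0 1 :=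
    (conv_II hFm hGm hF hG).mul_continuousOn (cc_cont n).continuousOn
  have i4 : IntervalIntegrable (fun x => conv01 (Rref F) (Rref G) x * cc n x) volume 0 1 :=
    (conv_II hRFm hRGm hRFi hRGi).mul_continuousOn (cc_cont n).continuousOn
  have i1 : IntervalIntegrable (fun x => conv01 (Rref F) G (1 - x) * cc n x) volume 0 1 := by
    have h := ((conv_II hRFm hGm hRFi hG).comp_sub_left 1).symm
    norm_num at h
    exact h.mul_continuousOn (cc_cont n).continuousOn
  have i2 : IntervalIntegrable (fun x => conv01 F (Rref G) (1 - x) * cc n x) volume 0 1 := by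
    have h := ((conv_II hFm hRGm hF hRGi).comp_sub_left 1).symm
    norm_num at h
    exact h.mul_continuousOn (cc_cont n).continuousOn
  have split : (∫ x in (0:ℝ)..1, ((1/2 : ℂ) *
        ((conv01 (Rref F) G (1 - x) + conv01 F (Rref G) (1 - x))
          - conv01 F G x - conv01 (Rref F) (Rref G) x)) * cc n x)
      = (1/2 : ℂ) * ((∫ x in (0:ℝ)..1, conv01 (Rref F) G (1 - x) * cc n x)
        + (∫ x in (0:ℝ)..1, conv01 F (Rref G) (1 - x) * cc n x)
        - (∫ x in (0:ℝ)..1, conv01 F G x * cc n x)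
        - (∫ x in (0:ℝ)..1, conv01 (Rref F) (Rref G) x * cc n x)) := by
    have e : ∀ x ∈ Set.uIcc (0:ℝ) 1, ((1/2 : ℂ) *
        ((conv01 (Rref F) G (1 - x) + conv01 F (Rref G) (1 - x))
          - conv01 F G x - conv01 (Rref F) (Rref G) x)) * cc n x
        = (1/2 : ℂ) * ((conv01 (Rref F) G (1 - x) * cc n x
            + conv01 F (Rref G) (1 - x) * cc n x
            - conv01 F G x * cc n x) - conv01 (Rref F) (Rref G) x * cc n x) :=
      fun x _ => by ring
    rw [intervalIntegral.integral_congr e, intervalIntegral.integral_const_mul,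
      intervalIntegral.integral_sub ((i1.add i2).sub i3) i4,
      intervalIntegral.integral_sub (i1.add i2) i3,
      intervalIntegral.integral_add i1 i2]
  rw [split]
  have T1 : (∫ x in (0:ℝ)..1, conv01 (Rref F) G (1 - x) * cc n x)
      = ∫ t in (0:ℝ)..1, G t * ∫ x in t..1, F x * cc n (x - t) := by
    rw [cosCoef_Rref (conv01 (Rref F) G), termT1' hFm hGm hF hG, neg_one_pow_sq]
  have T2 : (∫ x in (0:ℝ)..1, conv01 F (Rref G) (1 - x) * cc n x)
      = ∫ t in (0:ℝ)..1, G t * ∫ x in (0:ℝ)..t, F x * cc n (x - t) := by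
    rw [cosCoef_Rref (conv01 F (Rref G)), termT2' hFm hGm hF hG, neg_one_pow_sq]
  rw [T1, T2, termT3 hFm hGm hF hG, termT4 hFm hGm hF hG, SA, sub_sub, SB,
    ← intervalIntegral.integral_sub gILm gILp, ← intervalIntegral.integral_const_mul]
  exact intervalIntegral.integral_congr fun t _ => by ring

/-! ### Transfer from `L²` functions to measurable representatives -/

lemma ae_ne_pt (u : ℝ) : ∀ᵐ t ∂(volume : Measure ℝ), t ≠ u := by
  rw [ae_iff]
  simp only [ne_eq, not_not]
  simpa [Set.setOf_eq_eq_singleton] using measure_singleton (α := ℝ) (μ := volume) u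

lemma ae_comp_sub (c : ℝ) {P : ℝ → Prop} (h : ∀ᵐ s ∂(volume : Measure ℝ), P s) :
    ∀ᵐ t ∂(volume : Measure ℝ), P (c - t) :=
  (Measure.measurePreserving_sub_left volume c).quasiMeasurePreserving.ae h

lemma Rref_ae {f F : ℝ → ℂ}
    (hf : ∀ᵐ s ∂(volume : Measure ℝ), s ∈ Set.Ioo (0:ℝ) 1 → f s = F s) :
    ∀ᵐ s ∂(volume : Measure ℝ), s ∈ Set.Ioo (0:ℝ) 1 → Rref f s = Rref F s := by
  filter_upwards [ae_comp_sub 1 hf] with s hs hmem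
  exact hs ⟨by linarith [hmem.2], by linarith [hmem.1]⟩

lemma conv_transfer {f₁ F₁ g₁ G₁ : ℝ → ℂ}
    (hf : ∀ᵐ s ∂(volume : Measure ℝ), s ∈ Set.Ioo (0:ℝ) 1 → f₁ s = F₁ s)
    (hg : ∀ᵐ s ∂(volume : Measure ℝ), s ∈ Set.Ioo (0:ℝ) 1 → g₁ s = G₁ s)
    {u : ℝ} (hu0 : 0 ≤ u) (hu1 : u ≤ 1) :
    conv01 f₁ g₁ u = conv01 F₁ G₁ u := by
  simp only [conv01]
  apply intervalIntegral.integral_congr_ae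
  have h1 : ∀ᵐ t ∂(volume : Measure ℝ),
      ((u - t) ∈ Set.Ioo (0:ℝ) 1 → f₁ (u - t) = F₁ (u - t)) := ae_comp_sub u hf
  filter_upwards [h1, hg, ae_ne_pt u] with t h1t h2t h3t ht
  rw [Set.uIoc_of_le hu0] at ht
  have htu : t < u := lt_of_le_of_ne ht.2 h3t
  have e1 : f₁ (u - t) = F₁ (u - t) := h1t ⟨by linarith [htu], by linarith [ht.1, hu1]⟩
  have e2 : g₁ t = G₁ t := h2t ⟨ht.1, by linarith [htu, hu1]⟩
  rw [e1, e2]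

/-- For `f, g ∈ L²(0,1)`, one has `s_n(f)·s_n(g) = c_n(h₂)` where
`h₂ = ½ { R(Rf∗g + f∗Rg) − f∗g − Rf∗Rg }`. -/
theorem sin_mul_sin_eq_cosCoef
    (f g : ℝ → ℂ) (hf : MemLp f 2 mu01) (hg : MemLp g 2 mu01) (n : ℕ) :
    sinCoef f n * sinCoef g n =
      cosCoef (fun x =>
        (1/2 : ℂ) * (Rref (fun y => conv01 (Rref f) g y + conv01 f (Rref g) y) x
          - conv01 f g x - conv01 (Rref f) (Rref g) x)) n := by
  haveI : IsFiniteMeasure mu01 := by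
    constructor
    rw [mu01, Measure.restrict_apply_univ]
    exact measure_Ioc_lt_top
  set f' := hf.1.mk f with hf'def
  set g' := hg.1.mk g with hg'def
  set F : ℝ → ℂ := (Set.Ioc (0:ℝ) 1).indicator f' with hFdef
  set G : ℝ → ℂ := (Set.Ioc (0:ℝ) 1).indicator g' with hGdef
  have hFm : Measurable F :=
    (hf.1.stronglyMeasurable_mk.measurable).indicator measurableSet_Ioc
  have hGm : Measurable G :=
    (hg.1.stronglyMeasurable_mk.measurable).indicator measurableSet_Ioc
  have hfi : Integrable f mu01 := hf.integrable (by norm_num)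
  have hgi : Integrable g mu01 := hg.integrable (by norm_num)
  have hFi : Integrable F (volume : Measure ℝ) := by
    rw [hFdef, integrable_indicator_iff measurableSet_Ioc]
    exact hfi.congr hf.1.ae_eq_mk
  have hGi : Integrable G (volume : Measure ℝ) := by
    rw [hGdef, integrable_indicator_iff measurableSet_Ioc]
    exact hgi.congr hg.1.ae_eq_mk
  have haeF : ∀ᵐ x ∂(volume : Measure ℝ), x ∈ Set.Ioc (0:ℝ) 1 → f x = F x := by
    have h0 : ∀ᵐ x ∂(volume.restrict (Set.Ioc (0:ℝ) 1)), f x = f' x := hf.1.ae_eq_mk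
    have h1 := (ae_restrict_iff' measurableSet_Ioc).1 h0
    filter_upwards [h1] with x hx hmem
    rw [hx hmem, hFdef, Set.indicator_of_mem hmem]
  have haeG : ∀ᵐ x ∂(volume : Measure ℝ), x ∈ Set.Ioc (0:ℝ) 1 → g x = G x := by
    have h0 : ∀ᵐ x ∂(volume.restrict (Set.Ioc (0:ℝ) 1)), g x = g' x := hg.1.ae_eq_mk
    have h1 := (ae_restrict_iff' measurableSet_Ioc).1 h0
    filter_upwards [h1] with x hx hmem
    rw [hx hmem, hGdef, Set.indicator_of_mem hmem]
  have haeFo : ∀ᵐ x ∂(volume : Measure ℝ), x ∈ Set.Ioo (0:ℝ) 1 → f x = F x := by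
    filter_upwards [haeF] with x hx hmem
    exact hx (Set.Ioo_subset_Ioc_self hmem)
  have haeGo : ∀ᵐ x ∂(volume : Measure ℝ), x ∈ Set.Ioo (0:ℝ) 1 → g x = G x := by
    filter_upwards [haeG] with x hx hmem
    exact hx (Set.Ioo_subset_Ioc_self hmem)
  have haeRF := Rref_ae haeFo
  have haeRG := Rref_ae haeGo
  have L1 : sinCoef f n = ∫ x in (0:ℝ)..1, F x * scc n x := by
    rw [sinCoef]
    apply intervalIntegral.integral_congr_ae
    filter_upwards [haeF] with x hx hmem
    rw [Set.uIoc_of_le (zero_le_one)] at hmem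
    rw [hx hmem, ssin_eq]
  have L2 : sinCoef g n = ∫ x in (0:ℝ)..1, G x * scc n x := by
    rw [sinCoef]
    apply intervalIntegral.integral_congr_ae
    filter_upwards [haeG] with x hx hmem
    rw [Set.uIoc_of_le (zero_le_one)] at hmem
    rw [hx hmem, ssin_eq]
  have R : cosCoef (fun x =>
        (1/2 : ℂ) * (Rref (fun y => conv01 (Rref f) g y + conv01 f (Rref g) y) x
          - conv01 f g x - conv01 (Rref f) (Rref g) x)) n
      = ∫ x in (0:ℝ)..1, ((1/2 : ℂ) *
        ((conv01 (Rref F) G (1 - x) + conv01 F (Rref G) (1 - x))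
          - conv01 F G x - conv01 (Rref F) (Rref G) x)) * cc n x := by
    rw [cosCoef]
    apply intervalIntegral.integral_congr
    intro x hx
    rw [Set.uIcc_of_le (zero_le_one)] at hx
    have hx0 : (0:ℝ) ≤ x := hx.1
    have hx1 : x ≤ 1 := hx.2
    have c1 : conv01 (Rref f) g (1 - x) = conv01 (Rref F) G (1 - x) :=
      conv_transfer haeRF haeGo (by linarith) (by linarith)
    have c2 : conv01 f (Rref g) (1 - x) = conv01 F (Rref G) (1 - x) :=
      conv_transfer haeFo haeRG (by linarith) (by linarith)
    have c3 : conv01 f g x = conv01 F G x := conv_transfer haeFo haeGo hx0 hx1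
    have c4 : conv01 (Rref f) (Rref g) x = conv01 (Rref F) (Rref G) x :=
      conv_transfer haeRF haeRG hx0 hx1
    show ((1/2 : ℂ) * ((conv01 (Rref f) g (1 - x) + conv01 f (Rref g) (1 - x))
          - conv01 f g x - conv01 (Rref f) (Rref g) x)) * Complex.cos (Real.pi * n * x) = _
    rw [ccos_eq, c1, c2, c3, c4]
  rw [L1, L2, R]
  exact main_meas hFm hGm hFi hGi
end

section
/- For f, g in L²(0,1), s_n(f)·c_n(g) = s_n(h₃), where h₃ = (1/2){R(Rf∗g − f∗Rg) + f∗g − Rf∗Rg}. -/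
open MeasureTheory Real

namespace SinCosAux

noncomputable def Sc (n : ℕ) : ℝ → ℂ := fun x => Complex.sin (Real.pi * n * x)
noncomputable def Cc (n : ℕ) : ℝ → ℂ := fun x => Complex.cos (Real.pi * n * x)
noncomputable def Wc (n : ℕ) : ℝ → ℂ := (Set.Ioc (0:ℝ) 1).indicator (Sc n)
noncomputable def Wr (n : ℕ) : ℝ → ℝ :=
  (Set.Ioc (0:ℝ) 1).indicator (fun x => Real.sin (Real.pi * n * x))

lemma Sc_eq (n : ℕ) (x : ℝ) : Sc n x = ((Real.sin (Real.pi * n * x) : ℝ) : ℂ) := by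
  rw [Complex.ofReal_sin]; push_cast; rfl

lemma Cc_eq (n : ℕ) (x : ℝ) : Cc n x = ((Real.cos (Real.pi * n * x) : ℝ) : ℂ) := by
  rw [Complex.ofReal_cos]; push_cast; rfl

lemma Wc_eq (n : ℕ) (x : ℝ) : Wc n x = ((Wr n x : ℝ) : ℂ) := by
  unfold Wc Wr
  by_cases h : x ∈ Set.Ioc (0:ℝ) 1
  · rw [Set.indicator_of_mem h, Set.indicator_of_mem h, Sc_eq]
  · rw [Set.indicator_of_notMem h, Set.indicator_of_notMem h, Complex.ofReal_zero]

lemma Wc_bound (n : ℕ) (x : ℝ) : ‖Wc n x‖ ≤ 1 := by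
  rw [Wc_eq, Complex.norm_real, Real.norm_eq_abs]
  unfold Wr
  by_cases h : x ∈ Set.Ioc (0:ℝ) 1
  · rw [Set.indicator_of_mem h]; exact Real.abs_sin_le_one _
  · rw [Set.indicator_of_notMem h]; simp

lemma Sc_meas (n : ℕ) : Measurable (Sc n) := by
  unfold Sc
  fun_prop

lemma Wc_meas (n : ℕ) : Measurable (Wc n) :=
  (Sc_meas n).indicator measurableSet_Ioc

lemma Wc_mem (n : ℕ) {x : ℝ} (hx : x ∈ Set.Ioc (0:ℝ) 1) : Wc n x = Sc n x :=
  Set.indicator_of_mem hx _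

/-- trig periodicity: `sin (πn(2-y)) = - sin (πn y)`. -/
lemma sin_two_sub (n : ℕ) (y : ℝ) :
    Real.sin (Real.pi * n * (2 - y)) = -Real.sin (Real.pi * n * y) := by
  have h2 : Real.pi * n * (2 - y) = (n : ℝ) * (2 * Real.pi) - Real.pi * n * y := by ring
  rw [h2, Real.sin_sub, Real.cos_nat_mul_two_pi]
  have hs : Real.sin ((n : ℝ) * (2 * Real.pi)) = 0 := by
    have := Real.sin_nat_mul_pi (2 * n)
    push_cast at this
    rw [show (n : ℝ) * (2 * Real.pi) = 2 * n * Real.pi by ring]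
    exact this
  rw [hs]; ring

lemma sin_pi_n (n : ℕ) : Real.sin (Real.pi * n) = 0 := by
  rw [mul_comm]; exact Real.sin_nat_mul_pi n

/-- The real kernel identity. -/
lemma kernelR (n : ℕ) {u t : ℝ} (hu : u ∈ Set.Ioc (0:ℝ) 1) (ht : t ∈ Set.Ioc (0:ℝ) 1) :
    Wr n (u - t) - Wr n (t - u) + Wr n (u + t) - Wr n (2 - u - t)
      = 2 * Real.sin (Real.pi * n * u) * Real.cos (Real.pi * n * t) := by
  obtain ⟨hu1, hu2⟩ := hu
  obtain ⟨ht1, ht2⟩ := ht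
  have trig : Real.sin (Real.pi * n * (u - t)) + Real.sin (Real.pi * n * (u + t))
      = 2 * Real.sin (Real.pi * n * u) * Real.cos (Real.pi * n * t) := by
    rw [show Real.pi * n * (u - t) = Real.pi * n * u - Real.pi * n * t by ring,
      show Real.pi * n * (u + t) = Real.pi * n * u + Real.pi * n * t by ring,
      Real.sin_sub, Real.sin_add]
    ring
  have p1 : Wr n (u - t) - Wr n (t - u) = Real.sin (Real.pi * n * (u - t)) := by
    unfold Wr
    rcases lt_trichotomy (u - t) 0 with h | h | h
    · rw [Set.indicator_of_notMem (by simp only [Set.mem_Ioc, not_and]; intro h'; linarith),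
        Set.indicator_of_mem (Set.mem_Ioc.mpr ⟨by linarith, by linarith⟩)]
      rw [show Real.pi * n * (t - u) = -(Real.pi * n * (u - t)) by ring, Real.sin_neg]
      ring
    · rw [h]
      rw [show t - u = -(u - t) by ring, h]
      simp [Set.indicator_of_notMem, Set.mem_Ioc]
    · rw [Set.indicator_of_mem (Set.mem_Ioc.mpr ⟨h, by linarith⟩),
        Set.indicator_of_notMem (by simp only [Set.mem_Ioc, not_and]; intro h'; linarith)]
      ring
  have p2 : Wr n (u + t) - Wr n (2 - u - t) = Real.sin (Real.pi * n * (u + t)) := by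
    unfold Wr
    rcases lt_trichotomy (u + t) 1 with h | h | h
    · rw [Set.indicator_of_mem (Set.mem_Ioc.mpr (⟨by linarith, by linarith⟩ : 0 < u + t ∧ u + t ≤ 1)),
        Set.indicator_of_notMem (by simp only [Set.mem_Ioc, not_and]; intro h'; linarith)]
      ring
    · rw [show (2:ℝ) - u - t = 1 by linarith, h]
      rw [Set.indicator_of_mem (Set.mem_Ioc.mpr ⟨by norm_num, le_refl 1⟩)]
      simp [mul_one, sin_pi_n]
    · rcases lt_trichotomy (u + t) 2 with h2 | h2 | h2
      · rw [Set.indicator_of_notMem (by simp only [Set.mem_Ioc, not_and]; intro h'; linarith),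
          Set.indicator_of_mem (Set.mem_Ioc.mpr (⟨by linarith, by linarith⟩ : 0 < 2 - u - t ∧ 2 - u - t ≤ 1))]
        rw [show (2:ℝ) - u - t = 2 - (u + t) by ring, sin_two_sub]
        ring
      · rw [Set.indicator_of_notMem (by simp only [Set.mem_Ioc, not_and]; intro h'; linarith),
          Set.indicator_of_notMem (by simp only [Set.mem_Ioc, not_and]; intro h'; linarith)]
        have : Real.sin (Real.pi * n * (u + t)) = 0 := by
          rw [h2]
          have := sin_two_sub n 0
          simpa using this
        rw [this]; ring
      · linarith
  linarith [p1, p2, trig]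

/-- The complex kernel identity. -/
lemma kernelC (n : ℕ) {u t : ℝ} (hu : u ∈ Set.Ioc (0:ℝ) 1) (ht : t ∈ Set.Ioc (0:ℝ) 1) :
    Wc n (u - t) - Wc n (t - u) + Wc n (u + t) - Wc n (2 - u - t)
      = 2 * Sc n u * Cc n t := by
  rw [Wc_eq, Wc_eq, Wc_eq, Wc_eq, Sc_eq, Cc_eq]
  exact_mod_cast kernelR n ⟨hu.1, hu.2⟩ ⟨ht.1, ht.2⟩

/-- Null preimage under translation. -/
lemma null_shift (c : ℝ) {S : Set ℝ} (hS : volume S = 0) :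
    volume ((fun t : ℝ => t + c) ⁻¹' S) = 0 :=
  (measurePreserving_add_right volume c).quasiMeasurePreserving.preimage_null hS

lemma reflect_mp (c : ℝ) : MeasurePreserving (fun t : ℝ => c - t) volume volume := by
  have h1 := MeasureTheory.Measure.measurePreserving_neg (volume : Measure ℝ)
  have h2 := measurePreserving_add_left (volume : Measure ℝ) c
  have := h2.comp h1
  simpa [Function.comp_def, sub_eq_add_neg] using this

/-- Null preimage under reflection. -/
lemma null_reflect (c : ℝ) {S : Set ℝ} (hS : volume S = 0) :
    volume ((fun t : ℝ => c - t) ⁻¹' S) = 0 :=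
  (reflect_mp c).quasiMeasurePreserving.preimage_null hS

lemma bad_plain {f F : ℝ → ℂ} (hN : volume ({y | f y ≠ F y} ∩ Set.Ioc (0:ℝ) 1) = 0)
    {x : ℝ} (hx1 : x ≤ 1) :
    volume {t | t ∈ Set.Ioc (0:ℝ) x ∧ f (x - t) ≠ F (x - t)} = 0 := by
  refine measure_mono_null (fun t ht => ?_)
    (measure_union_null (measure_singleton x) (null_reflect x hN))
  obtain ⟨⟨ht0, htx⟩, hne⟩ := ht
  simp only [Set.mem_union, Set.mem_singleton_iff, Set.mem_preimage, Set.mem_inter_iff,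
    Set.mem_setOf_eq, Set.mem_Ioc]
  rcases eq_or_lt_of_le htx with h | h
  · exact Or.inl h
  · exact Or.inr ⟨hne, by linarith, by linarith⟩

lemma bad_reflect {f F : ℝ → ℂ} (hN : volume ({y | f y ≠ F y} ∩ Set.Ioc (0:ℝ) 1) = 0)
    {x : ℝ} (hx1 : x ≤ 1) :
    volume {t | t ∈ Set.Ioc (0:ℝ) x ∧ f (1 - (x - t)) ≠ F (1 - (x - t))} = 0 := by
  refine measure_mono_null (fun t ht => ?_) (null_shift (1 - x) hN)
  obtain ⟨⟨ht0, htx⟩, hne⟩ := ht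
  simp only [Set.mem_preimage, Set.mem_inter_iff, Set.mem_setOf_eq, Set.mem_Ioc]
  refine ⟨?_, by linarith, by linarith⟩
  simpa [show t + (1 - x) = 1 - (x - t) by ring] using hne

lemma bad_right_plain {g G : ℝ → ℂ} (hN : volume ({y | g y ≠ G y} ∩ Set.Ioc (0:ℝ) 1) = 0)
    {x : ℝ} (hx1 : x ≤ 1) :
    volume {t | t ∈ Set.Ioc (0:ℝ) x ∧ g t ≠ G t} = 0 := by
  refine measure_mono_null (fun t ht => ?_) hN
  obtain ⟨⟨ht0, htx⟩, hne⟩ := ht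
  exact ⟨hne, ht0, le_trans htx hx1⟩

lemma bad_right_reflect {g G : ℝ → ℂ} (hN : volume ({y | g y ≠ G y} ∩ Set.Ioc (0:ℝ) 1) = 0)
    {x : ℝ} (hx1 : x ≤ 1) :
    volume {t | t ∈ Set.Ioc (0:ℝ) x ∧ g (1 - t) ≠ G (1 - t)} = 0 := by
  refine measure_mono_null (fun t ht => ?_)
    (measure_union_null (measure_singleton (1:ℝ)) (null_reflect 1 hN))
  obtain ⟨⟨ht0, htx⟩, hne⟩ := ht
  simp only [Set.mem_union, Set.mem_singleton_iff, Set.mem_preimage, Set.mem_inter_iff,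
    Set.mem_setOf_eq, Set.mem_Ioc]
  rcases eq_or_lt_of_le (le_trans htx hx1) with h | h
  · exact Or.inl h
  · exact Or.inr ⟨hne, by linarith, by linarith⟩

/-- Convolution is insensitive to modifications on null sets. -/
lemma conv01_congr {p q p' q' : ℝ → ℂ} {x : ℝ} (hx0 : 0 ≤ x)
    (hp : volume {t | t ∈ Set.Ioc (0:ℝ) x ∧ p (x - t) ≠ p' (x - t)} = 0)
    (hq : volume {t | t ∈ Set.Ioc (0:ℝ) x ∧ q t ≠ q' t} = 0) :
    conv01 p q x = conv01 p' q' x := by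
  unfold conv01
  rw [intervalIntegral.integral_of_le hx0, intervalIntegral.integral_of_le hx0]
  refine setIntegral_congr_ae measurableSet_Ioc ?_
  filter_upwards [measure_eq_zero_iff_ae_notMem.mp hp, measure_eq_zero_iff_ae_notMem.mp hq]
    with t h1 h2 hmem
  have e1 : p (x - t) = p' (x - t) := by
    by_contra hc; exact h1 ⟨hmem, hc⟩
  have e2 : q t = q' t := by
    by_contra hc; exact h2 ⟨hmem, hc⟩
  rw [e1, e2]

/-- For compactly supported functions the truncated convolution agrees with the
full-line convolution on `[0,1]`. -/
lemma conv_full (F G : ℝ → ℂ) (hFs : ∀ y, y ∉ Set.Icc (0:ℝ) 1 → F y = 0)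
    (hGs : ∀ y, y ∉ Set.Icc (0:ℝ) 1 → G y = 0) {x : ℝ} (hx : x ∈ Set.Icc (0:ℝ) 1) :
    conv01 F G x = ∫ t, F (x - t) * G t := by
  unfold conv01
  rw [intervalIntegral.integral_of_le hx.1, ← integral_indicator measurableSet_Ioc]
  refine integral_congr_ae ?_
  have h0 : ∀ᵐ t : ℝ, t ≠ 0 := by
    refine (measure_eq_zero_iff_ae_notMem (s := ({0} : Set ℝ)).mp ?_).mono (fun t ht => ht)
    simpa using measure_singleton (0:ℝ)
  filter_upwards [h0] with t ht
  by_cases hmem : t ∈ Set.Ioc 0 x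
  · rw [Set.indicator_of_mem hmem]
  · rw [Set.indicator_of_notMem hmem]
    simp only [Set.mem_Ioc, not_and_or, not_lt, not_le] at hmem
    rcases hmem with h | h
    · have : G t = 0 := hGs t (by
        simp only [Set.mem_Icc, not_and_or, not_le]
        left; rcases lt_or_eq_of_le h with h' | h'
        · exact h'
        · exact absurd h' ht)
      rw [this, mul_zero]
    · have : F (x - t) = 0 := hFs (x - t) (by
        simp only [Set.mem_Icc, not_and_or, not_le]
        left; linarith)
      rw [this, zero_mul]

/-- Integrability of the weighted convolution integrand on the product space. -/
lemma prodIntegrand_integrable (W F G : ℝ → ℂ) (hWm : Measurable W)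
    (hWb : ∀ x, ‖W x‖ ≤ 1) (hFm : Measurable F) (hGm : Measurable G)
    (hFi : Integrable F) (hGi : Integrable G) :
    Integrable (fun p : ℝ × ℝ => W p.1 * (F (p.1 - p.2) * G p.2))
      ((volume : Measure ℝ).prod volume) := by
  have base : Integrable (fun p : ℝ × ℝ => G p.2 * F (p.1 - p.2))
      ((volume : Measure ℝ).prod volume) := by
    have := hGi.convolution_integrand (ContinuousLinearMap.mul ℝ ℂ) hFi
    simpa using this
  refine base.mono ?_ (Filter.Eventually.of_forall fun p => ?_)
  · exact ((hWm.comp measurable_fst).mul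
      ((hFm.comp (measurable_fst.sub measurable_snd)).mul
        (hGm.comp measurable_snd))).aestronglyMeasurable
  · rw [norm_mul]
    calc ‖W p.1‖ * ‖F (p.1 - p.2) * G p.2‖ ≤ 1 * ‖F (p.1 - p.2) * G p.2‖ :=
          mul_le_mul_of_nonneg_right (hWb p.1) (norm_nonneg _)
      _ = ‖G p.2 * F (p.1 - p.2)‖ := by rw [one_mul, norm_mul, norm_mul, mul_comm]

/-- The master Fubini/translation computation. -/
lemma master (W F G : ℝ → ℂ) (hWm : Measurable W) (hWb : ∀ x, ‖W x‖ ≤ 1)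
    (hFm : Measurable F) (hGm : Measurable G) (hFi : Integrable F) (hGi : Integrable G) :
    ∫ x, W x * ∫ t, F (x - t) * G t = ∫ t, ∫ u, W (u + t) * (F u * G t) := by
  have hΦ : Integrable (Function.uncurry fun x t => W x * (F (x - t) * G t))
      ((volume : Measure ℝ).prod volume) :=
    prodIntegrand_integrable W F G hWm hWb hFm hGm hFi hGi
  calc ∫ x, W x * ∫ t, F (x - t) * G t
      = ∫ x, ∫ t, W x * (F (x - t) * G t) :=
        integral_congr_ae (Filter.Eventually.of_forall fun x => (integral_const_mul _ _).symm)
    _ = ∫ t, ∫ x, W x * (F (x - t) * G t) := integral_integral_swap hΦ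
    _ = ∫ t, ∫ u, W (u + t) * (F u * G t) := by
        refine integral_congr_ae (Filter.Eventually.of_forall fun t => ?_)
        show ∫ x, W x * (F (x - t) * G t) = ∫ u, W (u + t) * (F u * G t)
        rw [← integral_add_right_eq_self (μ := volume) (fun x => W x * (F (x - t) * G t)) t]
        simp only [add_sub_cancel_right]

end SinCosAux

open SinCosAux

section KeyLemma

variable (n : ℕ) (F G : ℝ → ℂ)

/-- The key computation, for measurable integrable functions supported in `(0,1]`. -/
lemma key_lemma (hFm : Measurable F) (hGm : Measurable G)
    (hFi : Integrable F) (hGi : Integrable G)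
    (hFs : ∀ y, y ∉ Set.Ioc (0:ℝ) 1 → F y = 0) (hGs : ∀ y, y ∉ Set.Ioc (0:ℝ) 1 → G y = 0) :
    ∫ x in Set.Ioc (0:ℝ) 1,
        ((1/2 : ℂ) * ((conv01 (Rref F) G (1 - x) - conv01 F (Rref G) (1 - x))
          + conv01 F G x - conv01 (Rref F) (Rref G) x)) * Sc n x
      = (∫ u, F u * Sc n u) * (∫ t, G t * Cc n t) := by
  -- support hypotheses on `Icc`
  have hFs' : ∀ y, y ∉ Set.Icc (0:ℝ) 1 → F y = 0 := fun y hy =>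
    hFs y (fun hm => hy ⟨le_of_lt hm.1, hm.2⟩)
  have hGs' : ∀ y, y ∉ Set.Icc (0:ℝ) 1 → G y = 0 := fun y hy =>
    hGs y (fun hm => hy ⟨le_of_lt hm.1, hm.2⟩)
  have hRFs : ∀ y, y ∉ Set.Icc (0:ℝ) 1 → Rref F y = 0 := by
    intro y hy
    apply hFs
    simp only [Set.mem_Icc, not_and_or, not_le] at hy
    simp only [Set.mem_Ioc, not_and_or, not_lt, not_le]
    rcases hy with h | h
    · right; linarith
    · left; linarith
  have hRGs : ∀ y, y ∉ Set.Icc (0:ℝ) 1 → Rref G y = 0 := by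
    intro y hy
    apply hGs
    simp only [Set.mem_Icc, not_and_or, not_le] at hy
    simp only [Set.mem_Ioc, not_and_or, not_lt, not_le]
    rcases hy with h | h
    · right; linarith
    · left; linarith
  have hRFm : Measurable (Rref F) := hFm.comp (measurable_const.sub measurable_id)
  have hRGm : Measurable (Rref G) := hGm.comp (measurable_const.sub measurable_id)
  have hRFi : Integrable (Rref F) := hFi.comp_sub_left 1
  have hRGi : Integrable (Rref G) := hGi.comp_sub_left 1
  have hW' : Measurable (fun x => Wc n (1 - x)) :=
    (Wc_meas n).comp (measurable_const.sub measurable_id)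
  have hW'b : ∀ x, ‖Wc n (1 - x)‖ ≤ 1 := fun x => Wc_bound n _
  -- Step 1: replace truncated convolutions by full-line convolutions
  have hstep : (∫ x in Set.Ioc (0:ℝ) 1,
        ((1/2 : ℂ) * ((conv01 (Rref F) G (1 - x) - conv01 F (Rref G) (1 - x))
          + conv01 F G x - conv01 (Rref F) (Rref G) x)) * Sc n x)
      = (1/2 : ℂ) * ∫ x in Set.Ioc (0:ℝ) 1,
          (((Sc n x * ∫ t, Rref F ((1 - x) - t) * G t)
            - (Sc n x * ∫ t, F ((1 - x) - t) * Rref G t))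
            + (Sc n x * ∫ t, F (x - t) * G t))
            - (Sc n x * ∫ t, Rref F (x - t) * Rref G t) := by
    rw [← integral_const_mul]
    refine setIntegral_congr_fun measurableSet_Ioc (fun x hx => ?_)
    have hx' : x ∈ Set.Icc (0:ℝ) 1 := ⟨le_of_lt hx.1, hx.2⟩
    have hx'' : (1 - x) ∈ Set.Icc (0:ℝ) 1 := ⟨by linarith [hx.2], by linarith [hx.1]⟩
    rw [conv_full F G hFs' hGs' hx', conv_full (Rref F) (Rref G) hRFs hRGs hx',
      conv_full (Rref F) G hRFs hGs' hx'', conv_full F (Rref G) hFs' hRGs hx'']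
    ring
  -- product-space integrability of the four weighted integrands
  have hΦ1 := prodIntegrand_integrable (Wc n) F G (Wc_meas n) (Wc_bound n) hFm hGm hFi hGi
  have hΦ2 := prodIntegrand_integrable (Wc n) (Rref F) (Rref G) (Wc_meas n) (Wc_bound n)
    hRFm hRGm hRFi hRGi
  have hΦ3 := prodIntegrand_integrable (fun x => Wc n (1 - x)) (Rref F) G hW' hW'b
    hRFm hGm hRFi hGi
  have hΦ4 := prodIntegrand_integrable (fun x => Wc n (1 - x)) F (Rref G) hW' hW'b
    hFm hRGm hFi hRGi
  -- integrability of the four terms on `(0,1]`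
  have hWrestr : ∀ (H : ℝ → ℂ), Integrable (fun x => Wc n x * H x) volume →
      IntegrableOn (fun x => Sc n x * H x) (Set.Ioc (0:ℝ) 1) volume := by
    intro H h
    refine (h.integrableOn).congr ?_
    filter_upwards [ae_restrict_mem measurableSet_Ioc] with x hx
    rw [Wc_mem n hx]
  have hI1 : IntegrableOn (fun x => Sc n x * ∫ t, F (x - t) * G t)
      (Set.Ioc (0:ℝ) 1) volume := by
    refine hWrestr _ (Integrable.congr hΦ1.integral_prod_left
      (Filter.Eventually.of_forall fun x => ?_))
    show (∫ t, Wc n x * (F (x - t) * G t)) = Wc n x * ∫ t, F (x - t) * G t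
    exact integral_const_mul _ _
  have hI2 : IntegrableOn (fun x => Sc n x * ∫ t, Rref F (x - t) * Rref G t)
      (Set.Ioc (0:ℝ) 1) volume := by
    refine hWrestr _ (Integrable.congr hΦ2.integral_prod_left
      (Filter.Eventually.of_forall fun x => ?_))
    show (∫ t, Wc n x * (Rref F (x - t) * Rref G t)) = Wc n x * ∫ t, Rref F (x - t) * Rref G t
    exact integral_const_mul _ _
  have hI3 : IntegrableOn (fun x => Sc n x * ∫ t, Rref F ((1 - x) - t) * G t)
      (Set.Ioc (0:ℝ) 1) volume := by
    refine hWrestr _ ?_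
    have h2 : Integrable (fun y => Wc n (1 - y) * ∫ t, Rref F (y - t) * G t) volume := by
      refine Integrable.congr hΦ3.integral_prod_left
        (Filter.Eventually.of_forall fun x => ?_)
      show (∫ t, Wc n (1 - x) * (Rref F (x - t) * G t)) = Wc n (1 - x) * ∫ t, Rref F (x - t) * G t
      exact integral_const_mul _ _
    have h3 := h2.comp_sub_left 1
    refine h3.congr (Filter.Eventually.of_forall fun x => ?_)
    show Wc n (1 - (1 - x)) * (∫ t, Rref F ((1 - x) - t) * G t)
        = Wc n x * ∫ t, Rref F ((1 - x) - t) * G t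
    rw [sub_sub_cancel]
  have hI4 : IntegrableOn (fun x => Sc n x * ∫ t, F ((1 - x) - t) * Rref G t)
      (Set.Ioc (0:ℝ) 1) volume := by
    refine hWrestr _ ?_
    have h2 : Integrable (fun y => Wc n (1 - y) * ∫ t, F (y - t) * Rref G t) volume := by
      refine Integrable.congr hΦ4.integral_prod_left
        (Filter.Eventually.of_forall fun x => ?_)
      show (∫ t, Wc n (1 - x) * (F (x - t) * Rref G t)) = Wc n (1 - x) * ∫ t, F (x - t) * Rref G t
      exact integral_const_mul _ _
    have h3 := h2.comp_sub_left 1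
    refine h3.congr (Filter.Eventually.of_forall fun x => ?_)
    show Wc n (1 - (1 - x)) * (∫ t, F ((1 - x) - t) * Rref G t)
        = Wc n x * ∫ t, F ((1 - x) - t) * Rref G t
    rw [sub_sub_cancel]
  -- evaluation of the four terms
  have indmul : ∀ (H : ℝ → ℂ),
      (Set.Ioc (0:ℝ) 1).indicator (fun x => Sc n x * H x) = fun x => Wc n x * H x := by
    intro H
    funext x
    show (Set.Ioc (0:ℝ) 1).indicator (fun x => Sc n x * H x) x
        = (Set.Ioc (0:ℝ) 1).indicator (Sc n) x * H x
    exact Set.indicator_mul_left _ _ _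
  have hE1 : (∫ x in Set.Ioc (0:ℝ) 1, Sc n x * ∫ t, F (x - t) * G t)
      = ∫ t, ∫ u, Wc n (u + t) * (F u * G t) := by
    rw [← integral_indicator measurableSet_Ioc, indmul]
    exact master (Wc n) F G (Wc_meas n) (Wc_bound n) hFm hGm hFi hGi
  have hE2 : (∫ x in Set.Ioc (0:ℝ) 1, Sc n x * ∫ t, Rref F (x - t) * Rref G t)
      = ∫ t, ∫ u, Wc n (u + t) * (Rref F u * Rref G t) := by
    rw [← integral_indicator measurableSet_Ioc, indmul]
    exact master (Wc n) (Rref F) (Rref G) (Wc_meas n) (Wc_bound n) hRFm hRGm hRFi hRGi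
  have hE3 : (∫ x in Set.Ioc (0:ℝ) 1, Sc n x * ∫ t, Rref F ((1 - x) - t) * G t)
      = ∫ t, ∫ u, Wc n (1 - (u + t)) * (Rref F u * G t) := by
    rw [← integral_indicator measurableSet_Ioc, indmul]
    rw [show (∫ x, Wc n x * ∫ t, Rref F ((1 - x) - t) * G t)
        = ∫ x, Wc n (1 - x) * ∫ t, Rref F (x - t) * G t from by
      rw [← integral_sub_left_eq_self (fun x => Wc n (1 - x) * ∫ t, Rref F (x - t) * G t)
        volume 1]
      congr 1
      funext x
      show Wc n x * (∫ t, Rref F ((1 - x) - t) * G t)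
          = Wc n (1 - (1 - x)) * ∫ t, Rref F ((1 - x) - t) * G t
      rw [sub_sub_cancel]]
    exact master (fun x => Wc n (1 - x)) (Rref F) G hW' hW'b hRFm hGm hRFi hGi
  have hE4 : (∫ x in Set.Ioc (0:ℝ) 1, Sc n x * ∫ t, F ((1 - x) - t) * Rref G t)
      = ∫ t, ∫ u, Wc n (1 - (u + t)) * (F u * Rref G t) := by
    rw [← integral_indicator measurableSet_Ioc, indmul]
    rw [show (∫ x, Wc n x * ∫ t, F ((1 - x) - t) * Rref G t)
        = ∫ x, Wc n (1 - x) * ∫ t, F (x - t) * Rref G t from by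
      rw [← integral_sub_left_eq_self (fun x => Wc n (1 - x) * ∫ t, F (x - t) * Rref G t)
        volume 1]
      congr 1
      funext x
      show Wc n x * (∫ t, F ((1 - x) - t) * Rref G t)
          = Wc n (1 - (1 - x)) * ∫ t, F ((1 - x) - t) * Rref G t
      rw [sub_sub_cancel]]
    exact master (fun x => Wc n (1 - x)) F (Rref G) hW' hW'b hFm hRGm hFi hRGi
  -- remove the reflections by change of variables
  have hR2 : (∫ t, ∫ u, Wc n (u + t) * (Rref F u * Rref G t))
      = ∫ t, ∫ u, Wc n (2 - u - t) * (F u * G t) := by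
    have s1 : ∀ t : ℝ, (∫ u, Wc n (u + t) * (Rref F u * Rref G t))
        = ∫ u, Wc n ((1 - u) + t) * (F u * Rref G t) := by
      intro t
      rw [← integral_sub_left_eq_self (fun u => Wc n ((1 - u) + t) * (F u * Rref G t))
        volume 1]
      congr 1
      funext u
      show Wc n (u + t) * (Rref F u * Rref G t)
          = Wc n ((1 - (1 - u)) + t) * (F (1 - u) * Rref G t)
      rw [sub_sub_cancel]
      rfl
    calc (∫ t, ∫ u, Wc n (u + t) * (Rref F u * Rref G t))
        = ∫ t, ∫ u, Wc n ((1 - u) + t) * (F u * Rref G t) :=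
          integral_congr_ae (Filter.Eventually.of_forall s1)
      _ = ∫ t, ∫ u, Wc n ((1 - u) + (1 - t)) * (F u * G t) := by
          rw [← integral_sub_left_eq_self
            (fun t => ∫ u, Wc n ((1 - u) + (1 - t)) * (F u * G t)) volume 1]
          congr 1
          funext t
          show (∫ u, Wc n ((1 - u) + t) * (F u * Rref G t))
              = ∫ u, Wc n ((1 - u) + (1 - (1 - t))) * (F u * G (1 - t))
          rw [sub_sub_cancel]
          rfl
      _ = ∫ t, ∫ u, Wc n (2 - u - t) * (F u * G t) := by
          congr 1
          funext t
          congr 1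
          funext u
          rw [show (1 - u) + (1 - t) = 2 - u - t by ring]
  have hR3 : (∫ t, ∫ u, Wc n (1 - (u + t)) * (Rref F u * G t))
      = ∫ t, ∫ u, Wc n (u - t) * (F u * G t) := by
    refine integral_congr_ae (Filter.Eventually.of_forall fun t => ?_)
    show (∫ u, Wc n (1 - (u + t)) * (Rref F u * G t)) = ∫ u, Wc n (u - t) * (F u * G t)
    rw [← integral_sub_left_eq_self (fun u => Wc n (u - t) * (F u * G t)) volume 1]
    congr 1
    funext u
    show Wc n (1 - (u + t)) * (Rref F u * G t) = Wc n ((1 - u) - t) * (F (1 - u) * G t)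
    rw [show (1:ℝ) - u - t = 1 - (u + t) by ring]
    rfl
  have hR4 : (∫ t, ∫ u, Wc n (1 - (u + t)) * (F u * Rref G t))
      = ∫ t, ∫ u, Wc n (t - u) * (F u * G t) := by
    rw [← integral_sub_left_eq_self (fun t => ∫ u, Wc n (t - u) * (F u * G t)) volume 1]
    congr 1
    funext t
    show (∫ u, Wc n (1 - (u + t)) * (F u * Rref G t))
        = ∫ u, Wc n ((1 - t) - u) * (F u * G (1 - t))
    congr 1
    funext u
    rw [show (1:ℝ) - t - u = 1 - (u + t) by ring]
    rfl
  -- combine the four double integrals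
  have base : Integrable (fun p : ℝ × ℝ => G p.1 * F p.2)
      ((volume : Measure ℝ).prod volume) := hGi.mul_prod hFi
  have mk : ∀ (a : ℝ × ℝ → ℝ), Measurable a →
      Integrable (fun p : ℝ × ℝ => Wc n (a p) * (F p.2 * G p.1))
        ((volume : Measure ℝ).prod volume) := by
    intro a ham
    refine base.mono (((Wc_meas n).comp ham).mul ((hFm.comp measurable_snd).mul
      (hGm.comp measurable_fst))).aestronglyMeasurable
      (Filter.Eventually.of_forall fun p => ?_)
    rw [norm_mul]
    calc ‖Wc n (a p)‖ * ‖F p.2 * G p.1‖ ≤ 1 * ‖F p.2 * G p.1‖ :=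
          mul_le_mul_of_nonneg_right (Wc_bound n _) (norm_nonneg _)
      _ = ‖G p.1 * F p.2‖ := by rw [one_mul, norm_mul, norm_mul]; ring
  have m1 : Integrable (fun p : ℝ × ℝ => Wc n (p.2 + p.1) * (F p.2 * G p.1))
      ((volume : Measure ℝ).prod volume) :=
    mk (fun p => p.2 + p.1) (measurable_snd.add measurable_fst)
  have m2 : Integrable (fun p : ℝ × ℝ => Wc n (2 - p.2 - p.1) * (F p.2 * G p.1))
      ((volume : Measure ℝ).prod volume) :=
    mk (fun p => 2 - p.2 - p.1) ((measurable_const.sub measurable_snd).sub measurable_fst)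
  have m3 : Integrable (fun p : ℝ × ℝ => Wc n (p.2 - p.1) * (F p.2 * G p.1))
      ((volume : Measure ℝ).prod volume) :=
    mk (fun p => p.2 - p.1) (measurable_snd.sub measurable_fst)
  have m4 : Integrable (fun p : ℝ × ℝ => Wc n (p.1 - p.2) * (F p.2 * G p.1))
      ((volume : Measure ℝ).prod volume) :=
    mk (fun p => p.1 - p.2) (measurable_fst.sub measurable_snd)
  have m34 : Integrable (fun p : ℝ × ℝ =>
      Wc n (p.2 - p.1) * (F p.2 * G p.1) - Wc n (p.1 - p.2) * (F p.2 * G p.1))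
      ((volume : Measure ℝ).prod volume) := m3.sub m4
  have m341 : Integrable (fun p : ℝ × ℝ =>
      (Wc n (p.2 - p.1) * (F p.2 * G p.1) - Wc n (p.1 - p.2) * (F p.2 * G p.1))
        + Wc n (p.2 + p.1) * (F p.2 * G p.1))
      ((volume : Measure ℝ).prod volume) := m34.add m1
  have e1 : (∫ t, ∫ u, Wc n (u + t) * (F u * G t))
      = ∫ p : ℝ × ℝ, Wc n (p.2 + p.1) * (F p.2 * G p.1) ∂((volume : Measure ℝ).prod volume) :=
    integral_integral (f := fun t u => Wc n (u + t) * (F u * G t)) m1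
  have e2 : (∫ t, ∫ u, Wc n (2 - u - t) * (F u * G t))
      = ∫ p : ℝ × ℝ, Wc n (2 - p.2 - p.1) * (F p.2 * G p.1)
          ∂((volume : Measure ℝ).prod volume) :=
    integral_integral (f := fun t u => Wc n (2 - u - t) * (F u * G t)) m2
  have e3 : (∫ t, ∫ u, Wc n (u - t) * (F u * G t))
      = ∫ p : ℝ × ℝ, Wc n (p.2 - p.1) * (F p.2 * G p.1) ∂((volume : Measure ℝ).prod volume) :=
    integral_integral (f := fun t u => Wc n (u - t) * (F u * G t)) m3
  have e4 : (∫ t, ∫ u, Wc n (t - u) * (F u * G t))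
      = ∫ p : ℝ × ℝ, Wc n (p.1 - p.2) * (F p.2 * G p.1) ∂((volume : Measure ℝ).prod volume) :=
    integral_integral (f := fun t u => Wc n (t - u) * (F u * G t)) m4
  have hpt : ∀ p : ℝ × ℝ,
      ((Wc n (p.2 - p.1) * (F p.2 * G p.1) - Wc n (p.1 - p.2) * (F p.2 * G p.1))
        + Wc n (p.2 + p.1) * (F p.2 * G p.1)) - Wc n (2 - p.2 - p.1) * (F p.2 * G p.1)
      = (2 * (G p.1 * Cc n p.1)) * (F p.2 * Sc n p.2) := by
    intro p
    by_cases hu : p.2 ∈ Set.Ioc (0:ℝ) 1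
    · by_cases ht : p.1 ∈ Set.Ioc (0:ℝ) 1
      · have hk := kernelC n hu ht
        linear_combination (F p.2 * G p.1) * hk
      · rw [hGs p.1 ht]; ring
    · rw [hFs p.2 hu]; ring
  have split : (∫ p : ℝ × ℝ,
        (((Wc n (p.2 - p.1) * (F p.2 * G p.1) - Wc n (p.1 - p.2) * (F p.2 * G p.1))
          + Wc n (p.2 + p.1) * (F p.2 * G p.1)) - Wc n (2 - p.2 - p.1) * (F p.2 * G p.1))
          ∂((volume : Measure ℝ).prod volume))
      = (((∫ p : ℝ × ℝ, Wc n (p.2 - p.1) * (F p.2 * G p.1)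
            ∂((volume : Measure ℝ).prod volume))
          - ∫ p : ℝ × ℝ, Wc n (p.1 - p.2) * (F p.2 * G p.1)
            ∂((volume : Measure ℝ).prod volume))
          + ∫ p : ℝ × ℝ, Wc n (p.2 + p.1) * (F p.2 * G p.1)
            ∂((volume : Measure ℝ).prod volume))
          - ∫ p : ℝ × ℝ, Wc n (2 - p.2 - p.1) * (F p.2 * G p.1)
            ∂((volume : Measure ℝ).prod volume) := by
    rw [integral_sub m341 m2, integral_add m34 m1, integral_sub m3 m4]
  have hcomb :
      (((∫ t, ∫ u, Wc n (u - t) * (F u * G t)) - (∫ t, ∫ u, Wc n (t - u) * (F u * G t))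
        + (∫ t, ∫ u, Wc n (u + t) * (F u * G t)))
        - (∫ t, ∫ u, Wc n (2 - u - t) * (F u * G t)))
      = 2 * ((∫ t, G t * Cc n t) * (∫ u, F u * Sc n u)) := by
    rw [e1, e2, e3, e4, ← split, integral_congr_ae (Filter.Eventually.of_forall hpt),
      integral_prod_mul (fun t => 2 * (G t * Cc n t)) (fun u => F u * Sc n u),
      integral_const_mul]
    ring
  have hI34 : IntegrableOn (fun x =>
      Sc n x * (∫ t, Rref F ((1 - x) - t) * G t) - Sc n x * ∫ t, F ((1 - x) - t) * Rref G t)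
      (Set.Ioc (0:ℝ) 1) volume := hI3.sub hI4
  have hI341 : IntegrableOn (fun x =>
      (Sc n x * (∫ t, Rref F ((1 - x) - t) * G t)
        - Sc n x * ∫ t, F ((1 - x) - t) * Rref G t) + Sc n x * ∫ t, F (x - t) * G t)
      (Set.Ioc (0:ℝ) 1) volume := hI34.add hI1
  rw [hstep, integral_sub hI341 hI2, integral_add hI34 hI1,
    integral_sub hI3 hI4, hE1, hE2, hE3, hE4, hR2, hR3, hR4, hcomb]
  ring

end KeyLemma

/-- For `f, g ∈ L²(0,1)`, one has `s_n(f)·c_n(g) = s_n(h₃)` where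
`h₃ = ½ { R(Rf∗g − f∗Rg) + f∗g − Rf∗Rg }`. -/
theorem sin_mul_cos_eq_sinCoef
    (f g : ℝ → ℂ) (hf : MemLp f 2 mu01) (hg : MemLp g 2 mu01) (n : ℕ) :
    sinCoef f n * cosCoef g n =
      sinCoef (fun x =>
        (1/2 : ℂ) * (Rref (fun y => conv01 (Rref f) g y - conv01 f (Rref g) y) x
          + conv01 f g x - conv01 (Rref f) (Rref g) x)) n := by
  haveI : IsFiniteMeasure mu01 := by
    constructor
    rw [mu01, Measure.restrict_apply_univ, Real.volume_Ioc]
    exact ENNReal.ofReal_lt_top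
  -- measurable representatives supported on `(0,1]`
  have hfm := hf.aestronglyMeasurable
  have hgm := hg.aestronglyMeasurable
  set f₀ : ℝ → ℂ := hfm.mk f with hf₀def
  set g₀ : ℝ → ℂ := hgm.mk g with hg₀def
  have hff₀ : f =ᵐ[mu01] f₀ := hfm.ae_eq_mk
  have hgg₀ : g =ᵐ[mu01] g₀ := hgm.ae_eq_mk
  set F : ℝ → ℂ := (Set.Ioc (0:ℝ) 1).indicator f₀ with hFdef
  set G : ℝ → ℂ := (Set.Ioc (0:ℝ) 1).indicator g₀ with hGdef
  have hFm : Measurable F := hfm.stronglyMeasurable_mk.measurable.indicator measurableSet_Ioc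
  have hGm : Measurable G := hgm.stronglyMeasurable_mk.measurable.indicator measurableSet_Ioc
  have hFs : ∀ y, y ∉ Set.Ioc (0:ℝ) 1 → F y = 0 := fun y hy => Set.indicator_of_notMem hy _
  have hGs : ∀ y, y ∉ Set.Ioc (0:ℝ) 1 → G y = 0 := fun y hy => Set.indicator_of_notMem hy _
  have hfF : f =ᵐ[volume.restrict (Set.Ioc (0:ℝ) 1)] F :=
    (hff₀ : f =ᵐ[volume.restrict (Set.Ioc (0:ℝ) 1)] f₀).trans
      (indicator_ae_eq_restrict measurableSet_Ioc).symm
  have hgG : g =ᵐ[volume.restrict (Set.Ioc (0:ℝ) 1)] G :=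
    (hgg₀ : g =ᵐ[volume.restrict (Set.Ioc (0:ℝ) 1)] g₀).trans
      (indicator_ae_eq_restrict measurableSet_Ioc).symm
  have hNf : volume ({y | f y ≠ F y} ∩ Set.Ioc (0:ℝ) 1) = 0 := by
    have h2 : (volume.restrict (Set.Ioc (0:ℝ) 1)) {y | f y ≠ F y} = 0 := by
      have := ae_iff.mp hfF
      simpa using this
    rw [← Measure.restrict_apply' measurableSet_Ioc]
    exact h2
  have hNg : volume ({y | g y ≠ G y} ∩ Set.Ioc (0:ℝ) 1) = 0 := by
    have h2 : (volume.restrict (Set.Ioc (0:ℝ) 1)) {y | g y ≠ G y} = 0 := by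
      have := ae_iff.mp hgG
      simpa using this
    rw [← Measure.restrict_apply' measurableSet_Ioc]
    exact h2
  have hFi : Integrable F volume := by
    have h1 : Integrable f mu01 := hf.integrable (by norm_num)
    have h2 : Integrable f₀ mu01 := h1.congr hff₀
    exact IntegrableOn.integrable_indicator h2 measurableSet_Ioc
  have hGi : Integrable G volume := by
    have h1 : Integrable g mu01 := hg.integrable (by norm_num)
    have h2 : Integrable g₀ mu01 := h1.congr hgg₀
    exact IntegrableOn.integrable_indicator h2 measurableSet_Ioc
  -- rewrite the coefficients
  have hsin : sinCoef f n = ∫ u, F u * Sc n u := by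
    unfold sinCoef
    rw [intervalIntegral.integral_of_le (by norm_num : (0:ℝ) ≤ 1)]
    have e1 : (∫ x in Set.Ioc (0:ℝ) 1, f x * Complex.sin (Real.pi * n * x))
        = ∫ x in Set.Ioc (0:ℝ) 1, F x * Sc n x := by
      refine integral_congr_ae ?_
      filter_upwards [hfF] with x hx
      rw [hx]
      rfl
    rw [e1, ← integral_indicator measurableSet_Ioc]
    refine integral_congr_ae (Filter.Eventually.of_forall fun x => ?_)
    by_cases hx : x ∈ Set.Ioc (0:ℝ) 1
    · rw [Set.indicator_of_mem hx]
    · rw [Set.indicator_of_notMem hx]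
      show (0:ℂ) = F x * Sc n x
      rw [hFs x hx, zero_mul]
  have hcos : cosCoef g n = ∫ t, G t * Cc n t := by
    unfold cosCoef
    rw [intervalIntegral.integral_of_le (by norm_num : (0:ℝ) ≤ 1)]
    have e1 : (∫ x in Set.Ioc (0:ℝ) 1, g x * Complex.cos (Real.pi * n * x))
        = ∫ x in Set.Ioc (0:ℝ) 1, G x * Cc n x := by
      refine integral_congr_ae ?_
      filter_upwards [hgG] with x hx
      rw [hx]
      rfl
    rw [e1, ← integral_indicator measurableSet_Ioc]
    refine integral_congr_ae (Filter.Eventually.of_forall fun x => ?_)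
    by_cases hx : x ∈ Set.Ioc (0:ℝ) 1
    · rw [Set.indicator_of_mem hx]
    · rw [Set.indicator_of_notMem hx]
      show (0:ℂ) = G x * Cc n x
      rw [hGs x hx, zero_mul]
  rw [hsin, hcos, ← key_lemma n F G hFm hGm hFi hGi hFs hGs]
  unfold sinCoef
  rw [intervalIntegral.integral_of_le (by norm_num : (0:ℝ) ≤ 1)]
  refine (setIntegral_congr_fun measurableSet_Ioc (fun x hx => ?_)).symm
  have hx1 : x ≤ 1 := hx.2
  have h1x : (1:ℝ) - x ≤ 1 := by linarith [hx.1]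
  have h1x0 : (0:ℝ) ≤ 1 - x := by linarith [hx.2]
  have e_fg : conv01 f g x = conv01 F G x :=
    conv01_congr (le_of_lt hx.1) (bad_plain hNf hx1) (bad_right_plain hNg hx1)
  have e_RR : conv01 (Rref f) (Rref g) x = conv01 (Rref F) (Rref G) x :=
    conv01_congr (le_of_lt hx.1) (bad_reflect hNf hx1) (bad_right_reflect hNg hx1)
  have e_Rg : conv01 (Rref f) g (1 - x) = conv01 (Rref F) G (1 - x) :=
    conv01_congr h1x0 (bad_reflect hNf h1x) (bad_right_plain hNg h1x)
  have e_fR : conv01 f (Rref g) (1 - x) = conv01 F (Rref G) (1 - x) :=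
    conv01_congr h1x0 (bad_plain hNf h1x) (bad_right_reflect hNg h1x)
  have hRr : Rref (fun y => conv01 (Rref f) g y - conv01 f (Rref g) y) x
      = conv01 (Rref F) G (1 - x) - conv01 F (Rref G) (1 - x) := by
    show conv01 (Rref f) g (1 - x) - conv01 f (Rref g) (1 - x) = _
    rw [e_Rg, e_fR]
  show ((1/2 : ℂ) * (Rref (fun y => conv01 (Rref f) g y - conv01 f (Rref g) y) x
      + conv01 f g x - conv01 (Rref f) (Rref g) x)) * Complex.sin (Real.pi * n * x) = _
  rw [hRr, e_fg, e_RR]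
  rfl
end

section
/- For each n ≥ 1, the n-linear map I_n: (L²(0,1))ⁿ → L²(0,1) defined by I_n(f₁,...,f_n)(s) = ∫_{Π*_{n-1}(s)} f₁(s+ξ_{n-1}(y))f₂(y₁)···f_n(y_{n-1}) dy₁⋯dy_{n-1} satisfies ‖I_n(f)‖_{L²} ≤ (1/√((n-1)!))·∏_{l=1}ⁿ ‖f_l‖_{L²}. -/
open MeasureTheory Real

/-- The alternating sum `ξ_m(y) = Σ_{l=1}^m (−1)^{l+1} y_l` (0-indexed). -/
def xiAlt (m : ℕ) (y : Fin m → ℝ) : ℝ := ∑ i : Fin m, (-1:ℝ)^(i:ℕ) * y i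

/-- The region `Π*_m(s) = {y : 0 ≤ y_m ≤ ⋯ ≤ y₁ ≤ s + ξ_m(y) ≤ 1}`. -/
def simplexStar (m : ℕ) (s : ℝ) : Set (Fin m → ℝ) :=
  {y | (∀ i : Fin m, 0 ≤ y i) ∧ (∀ i j : Fin m, i ≤ j → y j ≤ y i) ∧
       (∀ i : Fin m, y i ≤ s + xiAlt m y) ∧ s + xiAlt m y ≤ 1}

/-- The `(n+1)`-linear map
`I_{n+1}(f)(s) = ∫_{Π*_n(s)} f₁(s+ξ_n(y)) f₂(y₁) ⋯ f_{n+1}(y_n) dy`. -/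
noncomputable def Imap (n : ℕ) (f : Fin (n+1) → (ℝ → ℂ)) : ℝ → ℂ :=
  fun s => ∫ y in simplexStar n s,
    f 0 (s + xiAlt n y) * ∏ i : Fin n, f i.succ (y i)

section Aux

lemma lintegral_pi_prod {n : ℕ} (h : Fin n → ℝ → ENNReal) (hm : ∀ i, Measurable (h i)) :
    ∫⁻ y : Fin n → ℝ, ∏ i, h i (y i) = ∏ i, ∫⁻ t, h i t := by
  induction n with
  | zero =>
      simp only [Finset.univ_eq_empty, Finset.prod_empty, lintegral_const, one_mul]
      rw [← Set.pi_univ Set.univ, volume_pi_pi]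
      simp
  | succ n ih =>
      have e := (volume_preserving_piFinSuccAbove (fun _ : Fin (n+1) => ℝ) 0).symm
      have hsymm : ∀ z : ℝ × (Fin n → ℝ),
          (MeasurableEquiv.piFinSuccAbove (fun _ : Fin (n+1) => ℝ) 0).symm z
            = Fin.cons z.1 z.2 := by
        intro z
        simp [MeasurableEquiv.piFinSuccAbove, Fin.insertNthEquiv, Fin.insertNth_zero]
      have hmprod : Measurable fun y : Fin (n+1) → ℝ => ∏ i, h i (y i) :=
        Finset.measurable_prod _ fun i _ => (hm i).comp (measurable_pi_apply i)
      rw [← e.lintegral_comp (f := fun y => ∏ i, h i (y i)) hmprod]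
      have : ∀ z : ℝ × (Fin n → ℝ),
          (∏ i, h i (((MeasurableEquiv.piFinSuccAbove (fun _ : Fin (n+1) => ℝ) 0).symm z) i))
          = h 0 z.1 * ∏ i : Fin n, h i.succ (z.2 i) := by
        intro z
        rw [hsymm, Fin.prod_univ_succ]
        simp
      simp_rw [this]
      rw [Measure.volume_eq_prod, lintegral_prod_mul (f := h 0)
        (g := fun x : Fin n → ℝ => ∏ i : Fin n, h i.succ (x i)) (hm 0).aemeasurable
        (Finset.measurable_prod _ fun i _ => ((hm i.succ).comp (measurable_pi_apply i))).aemeasurable,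
        ih (fun i => h i.succ) (fun i => hm i.succ), Fin.prod_univ_succ]

/-- The set of antitone tuples with entries in `[0,1]`. -/
def ordSet (n : ℕ) : Set (Fin n → ℝ) :=
  {y | (∀ i, y i ∈ Set.Icc (0:ℝ) 1) ∧ ∀ i j : Fin n, i ≤ j → y j ≤ y i}

lemma measurableSet_ordSet (n : ℕ) : MeasurableSet (ordSet n) := by
  have : ordSet n = (⋂ i, (fun y : Fin n → ℝ => y i) ⁻¹' Set.Icc 0 1) ∩
      ⋂ i, ⋂ j, ⋂ (_ : i ≤ j), {y : Fin n → ℝ | y j ≤ y i} := by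
    ext y
    simp only [ordSet, Set.mem_setOf_eq, Set.mem_inter_iff, Set.mem_iInter, Set.mem_preimage]
  rw [this]
  exact (MeasurableSet.iInter fun i => (measurableSet_Icc.preimage (measurable_pi_apply i))).inter
    (MeasurableSet.iInter fun i => MeasurableSet.iInter fun j => MeasurableSet.iInter fun _ =>
      measurableSet_le (measurable_pi_apply j) (measurable_pi_apply i))

lemma volume_hyperplane {n : ℕ} {i j : Fin n} (hij : i ≠ j) :
    volume {y : Fin n → ℝ | y i = y j} = 0 := by
  have : {y : Fin n → ℝ | y i = y j} =
      (LinearMap.ker ((LinearMap.proj i : (Fin n → ℝ) →ₗ[ℝ] ℝ) - LinearMap.proj j) :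
        Submodule ℝ (Fin n → ℝ)) := by
    ext y
    simp [LinearMap.mem_ker, sub_eq_zero]
  rw [this]
  apply Measure.addHaar_submodule
  intro h
  have h1 : (Pi.single i (1:ℝ)) ∈
      LinearMap.ker ((LinearMap.proj i : (Fin n → ℝ) →ₗ[ℝ] ℝ) - LinearMap.proj j) := by
    rw [h]; trivial
  simp only [LinearMap.mem_ker, LinearMap.sub_apply, LinearMap.proj_apply] at h1
  rw [Pi.single_eq_same, Pi.single_eq_of_ne (Ne.symm hij)] at h1
  norm_num at h1

lemma volume_ordSet_le (n : ℕ) :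
    volume (ordSet n) ≤ ENNReal.ofReal (1 / n.factorial) := by
  classical
  set S : Equiv.Perm (Fin n) → Set (Fin n → ℝ) := fun σ => (fun y => y ∘ σ) ⁻¹' ordSet n with hS
  have hmap : ∀ σ : Equiv.Perm (Fin n),
      (fun y : Fin n → ℝ => y ∘ σ) = ⇑(MeasurableEquiv.piCongrLeft (fun _ : Fin n => ℝ) σ.symm) := by
    intro σ
    ext y i
    simp [MeasurableEquiv.piCongrLeft, Equiv.piCongrLeft, Equiv.piCongrLeft']
  have hvol : ∀ σ, volume (S σ) = volume (ordSet n) := by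
    intro σ
    rw [hS]
    simp only [hmap σ]
    exact (volume_measurePreserving_piCongrLeft (fun _ : Fin n => ℝ) σ.symm).measure_preimage
      (measurableSet_ordSet n).nullMeasurableSet
  have hmeas : ∀ σ, MeasurableSet (S σ) := by
    intro σ
    exact (measurableSet_ordSet n).preimage
      (measurable_pi_lambda _ fun i => measurable_pi_apply (σ i))
  set Z : Set (Fin n → ℝ) := ⋃ (p : Fin n × Fin n) (_ : p.1 ≠ p.2), {y | y p.1 = y p.2} with hZ
  have hZ0 : volume Z = 0 := by
    rw [hZ]
    refine measure_iUnion_null fun p => ?_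
    refine measure_iUnion_null fun hp => volume_hyperplane hp
  have hdisj : Pairwise (Function.onFun (AEDisjoint volume) S) := by
    intro σ τ hστ
    refine measure_mono_null (fun y hy => ?_) hZ0
    by_contra hyZ
    have hinj : Function.Injective y := by
      intro a b hab
      by_contra hne
      exact hyZ (Set.mem_iUnion.2 ⟨(a, b), Set.mem_iUnion.2 ⟨hne, hab⟩⟩)
    apply hστ
    have key : ∀ ρ : Equiv.Perm (Fin n), y ∈ S ρ →
        (fun i : Fin n => y (ρ i.rev)) =
          (Finset.image y Finset.univ).orderEmbOfFin
            (by rw [Finset.card_image_of_injective _ hinj, Finset.card_univ, Fintype.card_fin]) := by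
      intro ρ hyρ
      apply Finset.orderEmbOfFin_unique
      · intro x; exact Finset.mem_image_of_mem y (Finset.mem_univ _)
      · intro a b hab
        have h1 : b.rev ≤ a.rev := by
          have := Fin.rev_lt_rev.2 hab
          exact this.le
        have h2 : y (ρ a.rev) ≤ y (ρ b.rev) := hyρ.2 b.rev a.rev h1
        have h3 : y (ρ a.rev) ≠ y (ρ b.rev) := by
          intro h
          have := hinj h
          have := ρ.injective this
          rw [Fin.rev_inj] at this
          exact hab.ne this
        exact lt_of_le_of_ne h2 h3
    have hστ' := (key σ hy.1).trans (key τ hy.2).symm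
    ext k
    have := congrFun hστ' k.rev
    simp only [Fin.rev_rev] at this
    exact congrArg Fin.val (hinj this)
  have hsum : ∑' σ : Equiv.Perm (Fin n), volume (S σ) = volume (⋃ σ, S σ) :=
    (measure_iUnion₀ hdisj fun σ => (hmeas σ).nullMeasurableSet).symm
  have hsub : (⋃ σ, S σ) ⊆ Set.univ.pi fun _ : Fin n => Set.Icc (0:ℝ) 1 := by
    rintro y hy i -
    obtain ⟨σ, hyσ⟩ := Set.mem_iUnion.1 hy
    have := hyσ.1 (σ.symm i)
    simpa using this
  have hbox : volume (Set.univ.pi fun _ : Fin n => Set.Icc (0:ℝ) 1) = 1 := by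
    rw [volume_pi_pi]
    simp
  have hle : (n.factorial : ENNReal) * volume (ordSet n) ≤ 1 := by
    calc (n.factorial : ENNReal) * volume (ordSet n)
        = ∑' σ : Equiv.Perm (Fin n), volume (S σ) := by
          rw [tsum_fintype]
          simp only [hvol, Finset.sum_const, Finset.card_univ, Fintype.card_perm,
            Fintype.card_fin, nsmul_eq_mul]
      _ = volume (⋃ σ, S σ) := hsum
      _ ≤ 1 := by rw [← hbox]; exact measure_mono hsub
  have hfac : (0:ℝ) < n.factorial := by positivity
  rw [ENNReal.ofReal_div_of_pos hfac, ENNReal.ofReal_one, ENNReal.ofReal_natCast]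
  rw [ENNReal.le_div_iff_mul_le (by exact_mod_cast Or.inl (Nat.factorial_ne_zero n))
    (Or.inl (ENNReal.natCast_ne_top _))]
  rw [mul_comm]
  exact hle

lemma measurable_xiAlt (n : ℕ) : Measurable (xiAlt n) :=
  Finset.measurable_sum _ fun i _ => (measurable_pi_apply i).const_mul _

lemma measurableSet_simplexStar (n : ℕ) (s : ℝ) : MeasurableSet (simplexStar n s) := by
  have hx : Measurable fun y : Fin n → ℝ => s + xiAlt n y :=
    measurable_const.add (measurable_xiAlt n)
  have : simplexStar n s = (⋂ i, {y : Fin n → ℝ | 0 ≤ y i}) ∩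
      ((⋂ i, ⋂ j, ⋂ (_ : i ≤ j), {y : Fin n → ℝ | y j ≤ y i}) ∩
      ((⋂ i, {y : Fin n → ℝ | y i ≤ s + xiAlt n y}) ∩ {y | s + xiAlt n y ≤ 1})) := by
    ext y
    simp only [simplexStar, Set.mem_setOf_eq, Set.mem_inter_iff, Set.mem_iInter]
  rw [this]
  refine (MeasurableSet.iInter fun i =>
      measurableSet_le measurable_const (measurable_pi_apply i)).inter
    ((MeasurableSet.iInter fun i => MeasurableSet.iInter fun j => MeasurableSet.iInter fun _ =>
      measurableSet_le (measurable_pi_apply j) (measurable_pi_apply i)).inter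
    ((MeasurableSet.iInter fun i =>
      measurableSet_le (measurable_pi_apply i) hx).inter
      (measurableSet_le hx measurable_const)))

lemma simplexStar_subset_ordSet (n : ℕ) (s : ℝ) : simplexStar n s ⊆ ordSet n := by
  rintro y ⟨h0, hord, hle, h1⟩
  exact ⟨fun i => ⟨h0 i, (hle i).trans h1⟩, hord⟩

lemma simplexStar_shift_mem {n : ℕ} {s : ℝ} (hs : 0 < s) {y : Fin n → ℝ}
    (hy : y ∈ simplexStar n s) : s + xiAlt n y ∈ Set.Icc (0:ℝ) 1 := by
  refine ⟨?_, hy.2.2.2⟩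
  cases n with
  | zero =>
      have : xiAlt 0 y = 0 := by simp [xiAlt]
      rw [this]
      simpa using hs.le
  | succ m => exact le_trans (hy.1 0) (hy.2.2.1 0)


lemma lintegral_sq_le_measure_mul {α : Type*} [MeasurableSpace α] (μ : Measure α)
    {g : α → ENNReal} (hg : AEMeasurable g μ) :
    (∫⁻ a, g a ∂μ)^2 ≤ μ Set.univ * ∫⁻ a, (g a)^2 ∂μ := by
  have hcs := ENNReal.lintegral_mul_le_Lp_mul_Lq μ (p := 2) (q := 2)
    ⟨by norm_num, by norm_num, by norm_num⟩ hg (aemeasurable_const (b := (1:ENNReal)))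
  simp only [Pi.mul_apply, mul_one, ENNReal.one_rpow, lintegral_one] at hcs
  calc (∫⁻ a, g a ∂μ)^2
      ≤ ((∫⁻ a, g a ^ (2:ℝ) ∂μ)^(1/2:ℝ) * (μ Set.univ)^(1/2:ℝ))^2 :=
        pow_le_pow_left' hcs 2
    _ = (∫⁻ a, g a ^ (2:ℝ) ∂μ) * μ Set.univ := by
        rw [mul_pow, ← ENNReal.rpow_natCast ((∫⁻ a, g a ^ (2:ℝ) ∂μ)^(1/2:ℝ)) 2,
          ← ENNReal.rpow_natCast ((μ Set.univ)^(1/2:ℝ)) 2, ← ENNReal.rpow_mul,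
          ← ENNReal.rpow_mul]
        norm_num
    _ = μ Set.univ * ∫⁻ a, (g a)^2 ∂μ := by
        rw [mul_comm]
        congr 1
        refine lintegral_congr fun a => ?_
        rw [← ENNReal.rpow_natCast]
        norm_num

end Aux

/-- For each `n ≥ 1` the `n`-linear map `I_n : (L²)ⁿ → L²`
satisfies `‖I_n(f)‖₂ ≤ (1/√(n−1)!) ∏ ‖f_l‖₂` (here stated for `I_{n+1}`, `n ≥ 0`). -/
theorem Imap_l2_bound (n : ℕ) (f : Fin (n+1) → (ℝ → ℂ))
    (hf : ∀ l, MemLp (f l) 2 mu01) :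
    eLpNorm (Imap n f) 2 mu01 ≤
      ENNReal.ofReal (1 / Real.sqrt (Nat.factorial n)) *
        ∏ l, eLpNorm (f l) 2 mu01 := by
  classical
  -- measurable majorants G l of ↑‖f l ·‖₊, a.e. equal on (0,1]
  have hGex : ∀ l : Fin (n+1), ∃ G : ℝ → ENNReal, Measurable G ∧
      (∀ t, (‖f l t‖₊ : ENNReal) ≤ G t) ∧
      (G =ᵐ[mu01] fun t => (‖f l t‖₊ : ENNReal)) := by
    intro l
    obtain ⟨g, hgm, hgae⟩ := (hf l).1
    obtain ⟨N, hDN, hNm, hN0⟩ := exists_measurable_superset_of_null (ae_iff.1 hgae)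
    refine ⟨fun t => if t ∈ Set.Ioc (0:ℝ) 1 \ N then (‖g t‖₊ : ENNReal) else ⊤,
      Measurable.ite (measurableSet_Ioc.diff hNm)
        (measurable_coe_nnreal_ennreal.comp hgm.measurable.nnnorm) measurable_const,
      ?_, ?_⟩
    · intro t
      by_cases ht : t ∈ Set.Ioc (0:ℝ) 1 \ N
      · have : f l t = g t := by
          by_contra hne
          exact ht.2 (hDN hne)
        simp [ht, this]
      · simp [ht]
    · have hNae : ∀ᵐ t ∂mu01, t ∉ N := by
        rw [ae_iff]
        simpa using hN0
      have hIocae : ∀ᵐ t ∂mu01, t ∈ Set.Ioc (0:ℝ) 1 := by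
        rw [mu01]
        exact ae_restrict_mem measurableSet_Ioc
      filter_upwards [hNae, hIocae] with t htN htIoc
      have htm : t ∈ Set.Ioc (0:ℝ) 1 \ N := ⟨htIoc, htN⟩
      have : f l t = g t := by
        by_contra hne
        exact htN (hDN hne)
      simp [htm, this]
  choose G hGmeas hGle hGae using hGex
  -- squared majorants and their integrals
  set H : Fin (n+1) → ℝ → ENNReal := fun l t => (G l t)^2 with hH
  have hHmeas : ∀ l, Measurable (H l) := fun l => (hGmeas l).pow_const 2
  set A : Fin (n+1) → ENNReal := fun l => ∫⁻ t in Set.Icc (0:ℝ) 1, H l t with hA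
  -- A l ^ (1/2) is the L² norm of f l
  have hAnorm : ∀ l, (A l) ^ (1/2:ℝ) = eLpNorm (f l) 2 mu01 := by
    intro l
    have h1 : A l = ∫⁻ t, ((‖f l t‖₊ : ENNReal))^2 ∂mu01 := by
      rw [hA]
      have : (volume.restrict (Set.Icc (0:ℝ) 1)) = volume.restrict (Set.Ioc (0:ℝ) 1) :=
        (Measure.restrict_congr_set Ioc_ae_eq_Icc).symm
      simp only []
      rw [this, ← mu01]
      refine lintegral_congr_ae ?_
      filter_upwards [hGae l] with t ht
      rw [hH]
      simp only []
      rw [ht]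
    rw [h1, eLpNorm_eq_lintegral_rpow_enorm_toReal (by norm_num) (by norm_num)]
    have h2 : ((2:ENNReal)).toReal = (2:ℝ) := by norm_num
    rw [h2]
    congr 1
    refine lintegral_congr fun t => ?_
    rw [← ENNReal.rpow_natCast]
    norm_num
    rfl
  
  -- pointwise majorant Φ
  set Φ : ℝ → (Fin n → ℝ) → ENNReal :=
    fun s y => G 0 (s + xiAlt n y) * ∏ i : Fin n, G i.succ (y i) with hΦ
  have hΦmeas : ∀ s, Measurable (Φ s) := fun s =>
    ((hGmeas 0).comp (measurable_const.add (measurable_xiAlt n))).mul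
      (Finset.measurable_prod _ fun i _ => (hGmeas i.succ).comp (measurable_pi_apply i))
  have hconv : ∀ x : ENNReal, x ^ (2:ℝ) = x ^ (2:ℕ) := fun x => by
    rw [← ENNReal.rpow_natCast]; norm_num
  -- Step 1: pointwise bound on the Bochner integral
  have step1 : ∀ s, (‖Imap n f s‖₊ : ENNReal) ≤ ∫⁻ y in simplexStar n s, Φ s y := by
    intro s
    refine le_trans (enorm_integral_le_lintegral_enorm _) (lintegral_mono fun y => ?_)
    rw [enorm_eq_nnnorm, nnnorm_mul, ENNReal.coe_mul]
    refine mul_le_mul' (hGle 0 _) ?_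
    rw [nnnorm_prod, ENNReal.coe_finset_prod]
    exact Finset.prod_le_prod' fun i _ => hGle i.succ _
  -- Step 2: Cauchy-Schwarz in y
  have step2 : ∀ s, (‖Imap n f s‖₊ : ENNReal)^2 ≤
      ENNReal.ofReal (1 / n.factorial) * ∫⁻ y in simplexStar n s, (Φ s y)^2 := by
    intro s
    have hcs := lintegral_sq_le_measure_mul (volume.restrict (simplexStar n s))
      (hΦmeas s).aemeasurable
    rw [Measure.restrict_apply_univ] at hcs
    have hvol : volume (simplexStar n s) ≤ ENNReal.ofReal (1 / n.factorial) :=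
      le_trans (measure_mono (simplexStar_subset_ordSet n s)) (volume_ordSet_le n)
    exact le_trans (pow_le_pow_left' (step1 s) 2) (le_trans hcs (mul_le_mul' hvol le_rfl))
  -- Step 3: Tonelli and translation invariance
  have hΦ2 : ∀ s y, (Φ s y)^2 = H 0 (s + xiAlt n y) * ∏ i : Fin n, H i.succ (y i) := by
    intro s y
    rw [hΦ, hH]
    simp only []
    rw [mul_pow, ← Finset.prod_pow]
  set T := ordSet n with hT
  have hindT : Measurable (T.indicator (fun y : Fin n → ℝ => ∏ i : Fin n, H i.succ (y i))) :=
    (Finset.measurable_prod _ fun i _ =>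
      (hHmeas i.succ).comp (measurable_pi_apply i)).indicator (measurableSet_ordSet n)
  have hind0 : Measurable ((Set.Icc (0:ℝ) 1).indicator (H 0)) :=
    (hHmeas 0).indicator measurableSet_Icc
  set W : ℝ → (Fin n → ℝ) → ENNReal := fun s y =>
    (T.indicator (fun y => ∏ i : Fin n, H i.succ (y i)) y) *
      ((Set.Icc (0:ℝ) 1).indicator (H 0) (s + xiAlt n y)) with hW
  have hWm : AEMeasurable (Function.uncurry W) ((volume : Measure ℝ).prod volume) := by
    refine Measurable.aemeasurable ?_
    exact (hindT.comp measurable_snd).mul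
      (hind0.comp (measurable_fst.add ((measurable_xiAlt n).comp measurable_snd)))
  have step3 : ∫⁻ s in Set.Ioc (0:ℝ) 1, ∫⁻ y in simplexStar n s, (Φ s y)^2 ≤ ∏ l, A l := by
    calc ∫⁻ s in Set.Ioc (0:ℝ) 1, ∫⁻ y in simplexStar n s, (Φ s y)^2
        ≤ ∫⁻ s in Set.Ioc (0:ℝ) 1, ∫⁻ y, W s y := by
          refine lintegral_mono_ae ((ae_restrict_iff' measurableSet_Ioc).2
            (Filter.Eventually.of_forall fun s hs => ?_))
          rw [← lintegral_indicator (measurableSet_simplexStar n s)]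
          refine lintegral_mono fun y => ?_
          by_cases hy : y ∈ simplexStar n s
          · rw [Set.indicator_of_mem hy, hW]
            simp only []
            rw [Set.indicator_of_mem (simplexStar_subset_ordSet n s hy),
              Set.indicator_of_mem (simplexStar_shift_mem hs.1 hy), hΦ2, mul_comm]
          · rw [Set.indicator_of_notMem hy]
            exact zero_le
      _ ≤ ∫⁻ s, ∫⁻ y, W s y := lintegral_mono' Measure.restrict_le_self le_rfl
      _ = ∫⁻ y, ∫⁻ s, W s y := lintegral_lintegral_swap hWm
      _ = ∫⁻ y, (T.indicator (fun y => ∏ i : Fin n, H i.succ (y i)) y) * A 0 := by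
          refine lintegral_congr fun y => ?_
          rw [hW]
          simp only []
          have hmf : Measurable fun s : ℝ => (Set.Icc (0:ℝ) 1).indicator (H 0) (s + xiAlt n y) :=
            hind0.comp (measurable_add_const (xiAlt n y))
          rw [lintegral_const_mul _ hmf]
          congr 1
          rw [lintegral_add_right_eq_self
            (fun u => (Set.Icc (0:ℝ) 1).indicator (H 0) u) (xiAlt n y)]
          rw [lintegral_indicator measurableSet_Icc]
      _ = A 0 * ∫⁻ y, T.indicator (fun y => ∏ i : Fin n, H i.succ (y i)) y := by
          rw [lintegral_mul_const _ hindT, mul_comm]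
      _ ≤ A 0 * ∫⁻ y : Fin n → ℝ, ∏ i : Fin n, ((Set.Icc (0:ℝ) 1).indicator (H i.succ)) (y i) := by
          refine mul_le_mul' le_rfl (lintegral_mono fun y => ?_)
          by_cases hy : y ∈ T
          · rw [Set.indicator_of_mem hy]
            refine Finset.prod_le_prod' fun i _ => ?_
            have hyi : y i ∈ Set.Icc (0:ℝ) 1 := hy.1 i
            rw [Set.indicator_of_mem hyi]
          · rw [Set.indicator_of_notMem hy]
            exact zero_le
      _ = A 0 * ∏ i : Fin n, A i.succ := by
          rw [lintegral_pi_prod _ (fun i => (hHmeas i.succ).indicator measurableSet_Icc)]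
          congr 1
          exact Finset.prod_congr rfl fun i _ => lintegral_indicator measurableSet_Icc _
      _ = ∏ l, A l := (Fin.prod_univ_succ _).symm
  -- Step 4: put everything together
  have main : ∫⁻ s, ((‖Imap n f s‖₊ : ENNReal))^(2:ℝ) ∂mu01 ≤
      ENNReal.ofReal (1 / n.factorial) * ∏ l, A l := by
    calc ∫⁻ s, ((‖Imap n f s‖₊ : ENNReal))^(2:ℝ) ∂mu01
        = ∫⁻ s in Set.Ioc (0:ℝ) 1, ((‖Imap n f s‖₊ : ENNReal))^2 := by
          rw [mu01]
          exact lintegral_congr fun s => hconv _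
      _ ≤ ∫⁻ s in Set.Ioc (0:ℝ) 1,
            ENNReal.ofReal (1 / n.factorial) * ∫⁻ y in simplexStar n s, (Φ s y)^2 :=
          lintegral_mono fun s => step2 s
      _ = ENNReal.ofReal (1 / n.factorial) *
            ∫⁻ s in Set.Ioc (0:ℝ) 1, ∫⁻ y in simplexStar n s, (Φ s y)^2 :=
          lintegral_const_mul' _ _ ENNReal.ofReal_ne_top
      _ ≤ _ := mul_le_mul' le_rfl step3
  have h2 : eLpNorm (Imap n f) 2 mu01
      = (∫⁻ s, ((‖Imap n f s‖₊ : ENNReal))^(2:ℝ) ∂mu01)^(1/2:ℝ) := by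
    rw [eLpNorm_eq_lintegral_rpow_enorm_toReal (by norm_num) (by norm_num)]
    norm_num
    rfl
  rw [h2]
  refine le_trans (ENNReal.rpow_le_rpow main (by norm_num)) ?_
  rw [ENNReal.mul_rpow_of_nonneg _ _ (by norm_num),
    ← ENNReal.prod_rpow_of_nonneg (by norm_num : (0:ℝ) ≤ 1/2)]
  have hofreal : (ENNReal.ofReal (1 / n.factorial))^(1/2:ℝ)
      = ENNReal.ofReal (1 / Real.sqrt n.factorial) := by
    rw [ENNReal.ofReal_rpow_of_pos (by positivity)]
    congr 1
    rw [one_div, one_div, Real.inv_rpow (by positivity), Real.sqrt_eq_rpow]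
    norm_num
  rw [hofreal]
  refine mul_le_mul' le_rfl ?_
  refine le_of_eq (Finset.prod_congr rfl fun l _ => hAnorm l)
end

section
/- For τ ∈ L²(0,1) and the functions τ_n defined by τ₁ = τ and τ_{n+1}(s) = ∫_{Π*_n(s)} τ(s+ξ_n(y))τ(y₁)···τ(y_n) dy₁⋯dy_n, one has ‖τ_n‖²_{L²} ≤ ‖τ‖_{L²}^{2n} / ((n−1)!·n!); consequently the series Σ_{n≥1}(±1)ⁿ τ_n converges in L²(0,1). -/
open MeasureTheory Real

/-- The `L²(0,1)` norm (as a real number). -/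
noncomputable def L2norm (f : ℝ → ℂ) : ℝ := (eLpNorm f 2 mu01).toReal

/-- The iterated functions `τ_n`: `tauN τ m` is `τ_{m+1}`, i.e. `tauN τ 0 = τ₁ = τ`
and `τ_{m+1}(s) = ∫_{Π*_m(s)} τ(s+ξ_m(y)) τ(y₁) ⋯ τ(y_m) dy`. -/
noncomputable def tauN (τ : ℝ → ℂ) : ℕ → ℝ → ℂ
  | 0 => τ
  | (m+1) => fun s => ∫ y in simplexStar (m+1) s,
      τ (s + xiAlt (m+1) y) * ∏ i : Fin (m+1), τ (y i)

namespace TauStarAux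
open Set Filter
open scoped ENNReal NNReal

/-- The weakly decreasing region. -/
def ordered (n : ℕ) : Set (Fin n → ℝ) := {y | ∀ i j : Fin n, i ≤ j → y j ≤ y i}

/-- The strictly decreasing region. -/
def sordered (n : ℕ) : Set (Fin n → ℝ) := {y | ∀ i j : Fin n, i < j → y j < y i}

lemma measurableSet_ordered (n : ℕ) : MeasurableSet (ordered n) := by
  have h : ordered n = ⋂ (i : Fin n) (j : Fin n) (_ : i ≤ j), {y : Fin n → ℝ | y j ≤ y i} := by
    ext y; simp [ordered]
  rw [h]
  exact MeasurableSet.iInter fun i => MeasurableSet.iInter fun j => MeasurableSet.iInter fun _ =>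
    measurableSet_le (measurable_pi_apply j) (measurable_pi_apply i)

lemma measurableSet_sordered (n : ℕ) : MeasurableSet (sordered n) := by
  have h : sordered n = ⋂ (i : Fin n) (j : Fin n) (_ : i < j), {y : Fin n → ℝ | y j < y i} := by
    ext y; simp [sordered]
  rw [h]
  exact MeasurableSet.iInter fun i => MeasurableSet.iInter fun j => MeasurableSet.iInter fun _ =>
    measurableSet_lt (measurable_pi_apply j) (measurable_pi_apply i)

lemma graph_null {n : ℕ} (i : Fin (n+1)) {S : Set (ℝ × (Fin n → ℝ))} (hS : MeasurableSet S)
    (h : ∀ z, volume {t : ℝ | (t, z) ∈ S} = 0) :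
    volume {y : Fin (n+1) → ℝ | (y i, y ∘ i.succAbove) ∈ S} = 0 := by
  have hmp := volume_preserving_piFinSuccAbove (fun _ : Fin (n+1) => ℝ) i
  have hset : {y : Fin (n+1) → ℝ | (y i, y ∘ i.succAbove) ∈ S}
      = (MeasurableEquiv.piFinSuccAbove (fun _ : Fin (n+1) => ℝ) i) ⁻¹' S := rfl
  rw [hset, hmp.measure_preimage hS.nullMeasurableSet, Measure.volume_eq_prod,
    Measure.prod_apply_symm hS]
  have h' : ∀ z : Fin n → ℝ, volume ((fun x => (x, z)) ⁻¹' S) = 0 := h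
  simp [h']

lemma null_add {n : ℕ} (i : Fin (n+1)) {M : Set ℝ} (hM : MeasurableSet M)
    (hM0 : volume M = 0) {c : (Fin n → ℝ) → ℝ} (hc : Measurable c) :
    volume {y : Fin (n+1) → ℝ | y i + c (y ∘ i.succAbove) ∈ M} = 0 := by
  refine graph_null i (S := {p : ℝ × (Fin n → ℝ) | p.1 + c p.2 ∈ M}) ?_ ?_
  · exact (measurable_fst.add (hc.comp measurable_snd)) hM
  · intro z
    have h1 : {t : ℝ | (t, z) ∈ {p : ℝ × (Fin n → ℝ) | p.1 + c p.2 ∈ M}}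
        = (fun t => t + c z) ⁻¹' M := rfl
    rw [h1, measure_preimage_add_right]
    exact hM0

lemma null_eq_coord {n : ℕ} {i j : Fin n} (hij : i ≠ j) :
    volume {y : Fin n → ℝ | y i = y j} = 0 := by
  have hn : 0 < n := i.pos
  obtain ⟨m, rfl⟩ : ∃ m, n = m + 1 := ⟨n - 1, by omega⟩
  obtain ⟨j', hj'⟩ := Fin.exists_succAbove_eq hij.symm
  have hset : {y : Fin (m+1) → ℝ | y i = y j}
      = {y | y i + (fun z : Fin m → ℝ => -(z j')) (y ∘ i.succAbove) ∈ ({0} : Set ℝ)} := by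
    ext y
    simp only [Set.mem_setOf_eq, Function.comp_apply, Set.mem_singleton_iff, hj',
      add_neg_eq_zero]
  rw [hset]
  exact null_add i (measurableSet_singleton 0) (measure_singleton 0)
    ((measurable_pi_apply j').neg)

lemma ordered_ae_sordered (n : ℕ) : (ordered n : Set (Fin n → ℝ)) =ᵐ[volume] sordered n := by
  rw [MeasureTheory.ae_eq_set]
  constructor
  · have hsub : ordered n \ sordered n ⊆ ⋃ (p : Fin n × Fin n) (_ : p.1 ≠ p.2),
        {y : Fin n → ℝ | y p.1 = y p.2} := by
      rintro y ⟨hyo, hys⟩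
      simp only [sordered, Set.mem_setOf_eq, not_forall] at hys
      obtain ⟨i, j, hij, hnot⟩ := hys
      refine Set.mem_iUnion.2 ⟨(i, j), Set.mem_iUnion.2 ⟨ne_of_lt hij, ?_⟩⟩
      exact le_antisymm (le_of_not_gt hnot) (hyo i j hij.le)
    exact measure_mono_null hsub
      (measure_iUnion_null fun p => measure_iUnion_null fun hp => null_eq_coord hp)
  · have hsub : sordered n ⊆ ordered n := by
      intro y hy i j hij
      rcases eq_or_lt_of_le hij with rfl | h
      · exact le_rfl
      · exact (hy i j h).le
    simp [Set.diff_eq_empty.2 hsub]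

lemma prod_measurable {n : ℕ} {g : ℝ → ℝ≥0∞} (hg : Measurable g) :
    Measurable fun y : Fin n → ℝ => ∏ i, g (y i) :=
  Finset.measurable_prod _ fun i _ => hg.comp (measurable_pi_apply i)

lemma lintegral_pi_prod_pow {n : ℕ} {g : ℝ → ℝ≥0∞} (hg : Measurable g) :
    ∫⁻ y : Fin n → ℝ, ∏ i, g (y i) = (∫⁻ t, g t) ^ n := by
  induction n with
  | zero =>
      simp only [Finset.univ_eq_empty, Finset.prod_empty, pow_zero, lintegral_const, one_mul]
      rw [MeasureTheory.volume_pi, Measure.pi_empty_univ]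
  | succ n ih =>
      have hmp := volume_preserving_piFinSuccAbove (fun _ : Fin (n+1) => ℝ) 0
      have hemb := (MeasurableEquiv.piFinSuccAbove (fun _ : Fin (n+1) => ℝ) 0).measurableEmbedding
      calc ∫⁻ y : Fin (n+1) → ℝ, ∏ i, g (y i)
          = ∫⁻ y : Fin (n+1) → ℝ,
              (fun p : ℝ × (Fin n → ℝ) => g p.1 * ∏ i, g (p.2 i))
                ((MeasurableEquiv.piFinSuccAbove (fun _ : Fin (n+1) => ℝ) 0) y) := by
            refine lintegral_congr fun y => ?_
            rw [Fin.prod_univ_succ]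
            rfl
        _ = ∫⁻ p : ℝ × (Fin n → ℝ), g p.1 * ∏ i, g (p.2 i) :=
            hmp.lintegral_comp_emb hemb (fun p : ℝ × (Fin n → ℝ) => g p.1 * ∏ i, g (p.2 i))
        _ = (∫⁻ t, g t) * ∫⁻ y : Fin n → ℝ, ∏ i, g (y i) := by
            rw [Measure.volume_eq_prod]
            exact lintegral_prod_mul hg.aemeasurable (prod_measurable hg).aemeasurable
        _ = (∫⁻ t, g t) ^ (n+1) := by rw [ih]; ring

lemma sym_bound (n : ℕ) {g : ℝ → ℝ≥0∞} (hg : Measurable g) :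
    (n.factorial : ℝ≥0∞) * ∫⁻ y in ordered n, ∏ i, g (y i) ≤ (∫⁻ t, g t) ^ n := by
  classical
  set P : (Fin n → ℝ) → ℝ≥0∞ := fun y => ∏ i, g (y i) with hP
  have hPm : Measurable P := prod_measurable hg
  have h1 : ∫⁻ y in ordered n, P y = ∫⁻ y in sordered n, P y :=
    setLIntegral_congr (ordered_ae_sordered n)
  set S : Equiv.Perm (Fin n) → Set (Fin n → ℝ) := fun σ =>
    (fun y : Fin n → ℝ => y ∘ σ) ⁻¹' sordered n with hSdef
  have hSm : ∀ σ, MeasurableSet (S σ) := by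
    intro σ
    exact (measurableSet_sordered n).preimage
      (measurable_pi_lambda _ fun i => measurable_pi_apply _)
  have h2 : ∀ σ : Equiv.Perm (Fin n), ∫⁻ y in sordered n, P y = ∫⁻ y in S σ, P y := by
    intro σ
    set T := MeasurableEquiv.piCongrLeft (fun _ : Fin n => ℝ) σ.symm with hT
    have hmp := volume_measurePreserving_piCongrLeft (fun _ : Fin n => ℝ) σ.symm
    have hemb := T.measurableEmbedding
    have hTeq : ∀ (y : Fin n → ℝ) (j : Fin n), T y j = y (σ j) := by
      intro y j
      have h := Equiv.piCongrLeft_apply_apply (fun _ : Fin n => ℝ) σ.symm y (σ j)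
      simpa [hT, MeasurableEquiv.coe_piCongrLeft] using h
    have hpre : T ⁻¹' sordered n = S σ := by
      ext y
      simp only [Set.mem_preimage, hSdef, sordered, Set.mem_setOf_eq, Function.comp_apply]
      constructor
      · intro h i j hij; have := h i j hij; rwa [hTeq, hTeq] at this
      · intro h i j hij; rw [hTeq, hTeq]; exact h i j hij
    calc ∫⁻ y in sordered n, P y
        = ∫⁻ y in T ⁻¹' sordered n, P (T y) :=
          (hmp.setLIntegral_comp_preimage_emb hemb P _).symm
      _ = ∫⁻ y in S σ, P y := by
          rw [hpre]
          refine setLIntegral_congr_fun (hSm σ) (fun y _ => ?_)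
          have : P (T y) = ∏ i, g (y (σ i)) := by
            refine Finset.prod_congr rfl fun i _ => ?_
            rw [hTeq]
          rw [this, Equiv.prod_comp σ (fun i => g (y i))]
  have h3 : Pairwise (Function.onFun Disjoint S) := by
    intro σ σ' hne
    refine Set.disjoint_left.mpr fun y hyσ hyσ' => hne ?_
    have hA : StrictAnti fun i => y (σ i) := fun i j hij => hyσ i j hij
    have hA' : StrictAnti fun i => y (σ' i) := fun i j hij => hyσ' i j hij
    set pe : Equiv.Perm (Fin n) := σ'.trans σ.symm with hpedef
    have hpe : StrictMono pe := by
      intro i j hij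
      have h1 : y (σ' j) < y (σ' i) := hA' hij
      have h2 : y (σ (pe j)) < y (σ (pe i)) := by
        simpa [hpedef, Equiv.trans_apply] using h1
      exact hA.lt_iff_gt.mp h2
    have hpeid : ∀ i, pe i = i := by
      haveI : WellFoundedLT (Fin n) := inferInstance
      have hpesymm : StrictMono pe.symm := by
        intro i j hij
        have : pe (pe.symm i) < pe (pe.symm j) := by simpa using hij
        exact hpe.lt_iff_lt.mp this
      intro i
      have h1 : i ≤ pe i := hpe.le_apply (x := i)
      have h2 : pe i ≤ i := by
        have := hpesymm.le_apply (x := i)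
        calc pe i ≤ pe (pe.symm i) := hpe.monotone this
          _ = i := by simp
      exact le_antisymm h2 h1
    refine Equiv.ext fun i => ?_
    have h := congrArg σ (hpeid i)
    simpa [hpedef, Equiv.trans_apply] using h.symm
  have hcard : ((Finset.univ : Finset (Equiv.Perm (Fin n))).card : ℝ≥0∞) = n.factorial := by
    rw [Finset.card_univ, Fintype.card_perm, Fintype.card_fin]
  have h4 : (n.factorial : ℝ≥0∞) * ∫⁻ y in sordered n, P y
      = ∑ σ : Equiv.Perm (Fin n), ∫⁻ y in S σ, P y := by
    rw [Finset.sum_congr rfl fun σ _ => (h2 σ).symm, Finset.sum_const, nsmul_eq_mul, hcard]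
  have h5 : ∑ σ : Equiv.Perm (Fin n), ∫⁻ y in S σ, P y ≤ ∫⁻ y, P y := by
    calc ∑ σ : Equiv.Perm (Fin n), ∫⁻ y in S σ, P y
        = ∑' σ : Equiv.Perm (Fin n), ∫⁻ y in S σ, P y := (tsum_fintype _).symm
      _ = ∫⁻ y in ⋃ σ, S σ, P y := (lintegral_iUnion hSm h3 P).symm
      _ ≤ ∫⁻ y, P y := lintegral_mono' Measure.restrict_le_self le_rfl
  calc (n.factorial : ℝ≥0∞) * ∫⁻ y in ordered n, P y
      = ∑ σ : Equiv.Perm (Fin n), ∫⁻ y in S σ, P y := by rw [h1, h4]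
    _ ≤ ∫⁻ y, P y := h5
    _ = (∫⁻ t, g t) ^ n := lintegral_pi_prod_pow hg


lemma measurable_xiAlt (m : ℕ) : Measurable (xiAlt m) :=
  Finset.measurable_sum _ fun i _ => (measurable_pi_apply i).const_mul _

lemma measurableSet_imp {α : Type*} [MeasurableSpace α] (p : Prop) [Decidable p] {q : α → Prop}
    (hq : MeasurableSet {x | q x}) : MeasurableSet {x : α | p → q x} := by
  by_cases h : p
  · simp only [h, true_implies]; exact hq
  · simp only [h, false_implies, Set.setOf_true]; exact MeasurableSet.univ

lemma measurableSet_simplexStar (m : ℕ) (s : ℝ) : MeasurableSet (simplexStar m s) := by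
  classical
  have h1 : MeasurableSet {y : Fin m → ℝ | ∀ i, 0 ≤ y i} := by
    rw [Set.setOf_forall]
    exact MeasurableSet.iInter fun i => measurableSet_le measurable_const (measurable_pi_apply i)
  have h2 : MeasurableSet {y : Fin m → ℝ | ∀ i j : Fin m, i ≤ j → y j ≤ y i} := by
    rw [Set.setOf_forall]
    refine MeasurableSet.iInter fun i => ?_
    rw [Set.setOf_forall]
    refine MeasurableSet.iInter fun j => ?_
    exact measurableSet_imp _ (measurableSet_le (measurable_pi_apply j) (measurable_pi_apply i))
  have h3 : MeasurableSet {y : Fin m → ℝ | ∀ i, y i ≤ s + xiAlt m y} := by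
    rw [Set.setOf_forall]
    exact MeasurableSet.iInter fun i => measurableSet_le (measurable_pi_apply i)
      (measurable_const.add (measurable_xiAlt m))
  have h4 : MeasurableSet {y : Fin m → ℝ | s + xiAlt m y ≤ 1} :=
    measurableSet_le (measurable_const.add (measurable_xiAlt m)) measurable_const
  have heq : simplexStar m s
      = {y : Fin m → ℝ | ∀ i, 0 ≤ y i} ∩ ({y | ∀ i j : Fin m, i ≤ j → y j ≤ y i}
        ∩ ({y | ∀ i, y i ≤ s + xiAlt m y} ∩ {y | s + xiAlt m y ≤ 1})) := rfl
  rw [heq]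
  exact h1.inter (h2.inter (h3.inter h4))

lemma measurableSet_V (m : ℕ) :
    MeasurableSet {p : ℝ × (Fin m → ℝ) | p.2 ∈ simplexStar m p.1} := by
  classical
  have hxi : Measurable fun p : ℝ × (Fin m → ℝ) => p.1 + xiAlt m p.2 :=
    measurable_fst.add ((measurable_xiAlt m).comp measurable_snd)
  have hcoord : ∀ i : Fin m, Measurable fun p : ℝ × (Fin m → ℝ) => p.2 i := fun i =>
    (measurable_pi_apply i).comp measurable_snd
  have h1 : MeasurableSet {p : ℝ × (Fin m → ℝ) | ∀ i, 0 ≤ p.2 i} := by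
    rw [Set.setOf_forall]
    exact MeasurableSet.iInter fun i => measurableSet_le measurable_const
      (hcoord i)
  have h2 : MeasurableSet {p : ℝ × (Fin m → ℝ) | ∀ i j : Fin m, i ≤ j → p.2 j ≤ p.2 i} := by
    rw [Set.setOf_forall]
    refine MeasurableSet.iInter fun i => ?_
    rw [Set.setOf_forall]
    refine MeasurableSet.iInter fun j => ?_
    exact measurableSet_imp _ (measurableSet_le (hcoord j)
      (hcoord i))
  have h3 : MeasurableSet {p : ℝ × (Fin m → ℝ) | ∀ i, p.2 i ≤ p.1 + xiAlt m p.2} := by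
    rw [Set.setOf_forall]
    exact MeasurableSet.iInter fun i =>
      measurableSet_le (hcoord i) hxi
  have h4 : MeasurableSet {p : ℝ × (Fin m → ℝ) | p.1 + xiAlt m p.2 ≤ 1} :=
    measurableSet_le hxi measurable_const
  have heq : {p : ℝ × (Fin m → ℝ) | p.2 ∈ simplexStar m p.1}
      = {p : ℝ × (Fin m → ℝ) | ∀ i, 0 ≤ p.2 i} ∩ ({p | ∀ i j : Fin m, i ≤ j → p.2 j ≤ p.2 i}
        ∩ ({p | ∀ i, p.2 i ≤ p.1 + xiAlt m p.2} ∩ {p | p.1 + xiAlt m p.2 ≤ 1})) := rfl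
  rw [heq]
  exact h1.inter (h2.inter (h3.inter h4))

lemma simplexStar_subset_ordered (m : ℕ) (s : ℝ) : simplexStar m s ⊆ ordered m :=
  fun _ hy => hy.2.1

lemma coord_mem_Icc {m : ℕ} {s : ℝ} {y : Fin m → ℝ} (hy : y ∈ simplexStar m s) (i : Fin m) :
    y i ∈ Icc (0:ℝ) 1 := ⟨hy.1 i, (hy.2.2.1 i).trans hy.2.2.2⟩

lemma xi_mem_Icc {m : ℕ} {s : ℝ} {y : Fin (m+1) → ℝ} (hy : y ∈ simplexStar (m+1) s) :
    s + xiAlt (m+1) y ∈ Icc (0:ℝ) 1 := ⟨(hy.1 0).trans (hy.2.2.1 0), hy.2.2.2⟩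

lemma tauN_succ_apply (τ' : ℝ → ℂ) (m : ℕ) (s : ℝ) :
    tauN τ' (m+1) s = ∫ y in simplexStar (m+1) s,
      τ' (s + xiAlt (m+1) y) * ∏ i : Fin (m+1), τ' (y i) := rfl

lemma tauN_sq_lintegral_le {τ' : ℝ → ℂ} (hτ' : Measurable τ') (m : ℕ) :
    ∫⁻ s in Ioc (0:ℝ) 1, (‖tauN τ' (m+1) s‖₊ : ℝ≥0∞) ^ 2
      ≤ (((m+1).factorial : ℝ≥0∞))⁻¹ * ((((m+2).factorial : ℝ≥0∞))⁻¹ *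
          (∫⁻ t, ((Icc (0:ℝ) 1).indicator
            (fun t => ((‖τ' t‖₊ : ℝ≥0∞)) ^ 2)) t) ^ (m+2)) := by
  classical
  set G : ℝ → ℝ≥0∞ := fun t => ((‖τ' t‖₊ : ℝ≥0∞)) ^ 2 with hGdef
  have hGm : Measurable G := hτ'.enorm.pow_const 2
  set g : ℝ → ℝ≥0∞ := (Icc (0:ℝ) 1).indicator G with hgdef
  have hgm : Measurable g := hGm.indicator measurableSet_Icc
  set I : ℝ≥0∞ := ∫⁻ t, g t with hIdef
  have hfacne : ∀ k : ℕ, (k.factorial : ℝ≥0∞) ≠ 0 :=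
    fun k => Nat.cast_ne_zero.2 (Nat.factorial_ne_zero k)
  -- pointwise Cauchy-Schwarz bound
  have hpoint : ∀ s : ℝ, ((‖tauN τ' (m+1) s‖₊ : ℝ≥0∞)) ^ 2
      ≤ (((m+1).factorial : ℝ≥0∞))⁻¹ *
        ∫⁻ y in simplexStar (m+1) s, G (s + xiAlt (m+1) y) * ∏ i, G (y i) := by
    intro s
    set A := simplexStar (m+1) s with hA
    have hAm : MeasurableSet A := measurableSet_simplexStar (m+1) s
    set F : (Fin (m+1) → ℝ) → ℝ≥0∞ :=
      fun y => ((‖τ' (s + xiAlt (m+1) y)‖₊ : ℝ≥0∞)) * ∏ i, ((‖τ' (y i)‖₊ : ℝ≥0∞)) with hF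
    have hFm : Measurable F :=
      ((hτ'.comp (measurable_const.add (measurable_xiAlt (m+1)))).enorm).mul
        (Finset.measurable_prod _ fun i _ => (hτ'.comp (measurable_pi_apply i)).enorm)
    have hstep1 : ((‖tauN τ' (m+1) s‖₊ : ℝ≥0∞)) ≤ ∫⁻ y in A, F y := by
      rw [tauN_succ_apply]
      refine (enorm_integral_le_lintegral_enorm _).trans (le_of_eq ?_)
      refine lintegral_congr fun y => ?_
      simp only [hF, enorm_eq_nnnorm, nnnorm_mul, nnnorm_prod, ENNReal.coe_mul, ENNReal.coe_finset_prod]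
    have hconj : Real.HolderConjugate 2 2 := Real.HolderConjugate.two_two
    have hCS := ENNReal.lintegral_mul_le_Lp_mul_Lq (volume.restrict A) hconj
      hFm.aemeasurable (aemeasurable_const (b := (1 : ℝ≥0∞)))
    have hCS' : ∫⁻ y in A, F y
        ≤ (∫⁻ y in A, F y ^ 2) ^ ((1:ℝ)/2) * (volume A) ^ ((1:ℝ)/2) := by
      have e2 : ∫⁻ y in A, F y ^ (2:ℝ) = ∫⁻ y in A, F y ^ 2 := by
        refine lintegral_congr fun y => ?_
        rw [← ENNReal.rpow_natCast (F y) 2]; norm_num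
      simp only [Pi.mul_apply, mul_one, ENNReal.one_rpow] at hCS
      rw [setLIntegral_one, e2] at hCS
      exact hCS
    have hsq : ∀ a b : ℝ≥0∞, (a ^ ((1:ℝ)/2) * b ^ ((1:ℝ)/2)) ^ (2:ℕ) = a * b := by
      intro a b
      rw [mul_pow, ← ENNReal.rpow_natCast (a ^ ((1:ℝ)/2)) 2,
        ← ENNReal.rpow_natCast (b ^ ((1:ℝ)/2)) 2, ← ENNReal.rpow_mul, ← ENNReal.rpow_mul]
      norm_num
    have hstep2 : ((‖tauN τ' (m+1) s‖₊ : ℝ≥0∞)) ^ 2 ≤ (∫⁻ y in A, F y ^ 2) * volume A := by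
      calc ((‖tauN τ' (m+1) s‖₊ : ℝ≥0∞)) ^ 2 ≤ (∫⁻ y in A, F y) ^ 2 :=
            pow_le_pow_left' hstep1 2
        _ ≤ ((∫⁻ y in A, F y ^ 2) ^ ((1:ℝ)/2) * (volume A) ^ ((1:ℝ)/2)) ^ 2 :=
            pow_le_pow_left' hCS' 2
        _ = (∫⁻ y in A, F y ^ 2) * volume A := hsq _ _
    have hF2 : ∀ y, F y ^ 2 = G (s + xiAlt (m+1) y) * ∏ i, G (y i) := by
      intro y
      simp only [hF, hGdef, mul_pow, ← Finset.prod_pow]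
    have hvol : volume A ≤ (((m+1).factorial : ℝ≥0∞))⁻¹ := by
      set g1 : ℝ → ℝ≥0∞ := (Icc (0:ℝ) 1).indicator (fun _ => 1) with hg1
      have hg1m : Measurable g1 := measurable_const.indicator measurableSet_Icc
      have hAvol : volume A = ∫⁻ y in A, ∏ i, g1 (y i) := by
        rw [← setLIntegral_one A]
        refine setLIntegral_congr_fun hAm (fun y hy => ?_)
        rw [Finset.prod_congr rfl fun i _ =>
          Set.indicator_of_mem (coord_mem_Icc hy i) (fun _ => (1:ℝ≥0∞))]
        simp
      have hle : ∫⁻ y in A, ∏ i, g1 (y i) ≤ ∫⁻ y in ordered (m+1), ∏ i, g1 (y i) :=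
        lintegral_mono_set (simplexStar_subset_ordered (m+1) s)
      have hsym := sym_bound (m+1) hg1m
      have hint : ∫⁻ t, g1 t = 1 := by
        rw [hg1, lintegral_indicator measurableSet_Icc, setLIntegral_one, Real.volume_Icc]
        norm_num
      rw [hint, one_pow] at hsym
      rw [ENNReal.le_inv_iff_mul_le, mul_comm]
      exact le_trans (mul_le_mul_right (hAvol.le.trans hle) _) hsym
    calc ((‖tauN τ' (m+1) s‖₊ : ℝ≥0∞)) ^ 2 ≤ (∫⁻ y in A, F y ^ 2) * volume A := hstep2
      _ ≤ (∫⁻ y in A, F y ^ 2) * (((m+1).factorial : ℝ≥0∞))⁻¹ := mul_le_mul_right hvol _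
      _ = (((m+1).factorial : ℝ≥0∞))⁻¹ * ∫⁻ y in A, G (s + xiAlt (m+1) y) * ∏ i, G (y i) := by
          rw [mul_comm]
          exact congrArg _ (lintegral_congr fun y => hF2 y)
  have hmono : ∫⁻ s in Ioc (0:ℝ) 1, ((‖tauN τ' (m+1) s‖₊ : ℝ≥0∞)) ^ 2
      ≤ ∫⁻ s in Ioc (0:ℝ) 1, (((m+1).factorial : ℝ≥0∞))⁻¹ *
          ∫⁻ y in simplexStar (m+1) s, G (s + xiAlt (m+1) y) * ∏ i, G (y i) :=
    lintegral_mono hpoint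
  rw [lintegral_const_mul' _ _ (ENNReal.inv_ne_top.2 (hfacne (m+1)))] at hmono
  refine hmono.trans (mul_le_mul_right ?_ _)
  -- the J-bound
  set W : ℝ → (Fin (m+1) → ℝ) → ℝ≥0∞ := fun s y =>
    (simplexStar (m+1) s).indicator (fun y => G (s + xiAlt (m+1) y) * ∏ i, G (y i)) y with hWdef
  have hkerm : Measurable fun p : ℝ × (Fin (m+1) → ℝ) =>
      G (p.1 + xiAlt (m+1) p.2) * ∏ i, G (p.2 i) := by
    have hc : ∀ i : Fin (m+1), Measurable fun p : ℝ × (Fin (m+1) → ℝ) => p.2 i := fun i =>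
      (measurable_pi_apply i).comp measurable_snd
    exact (hGm.comp (measurable_fst.add ((measurable_xiAlt (m+1)).comp measurable_snd))).mul
      (Finset.measurable_prod _ fun i _ => hGm.comp (hc i))
  have hWm : Measurable (Function.uncurry W) := by
    have hV := measurableSet_V (m+1)
    have huncurry : Function.uncurry W
        = Set.indicator {p : ℝ × (Fin (m+1) → ℝ) | p.2 ∈ simplexStar (m+1) p.1}
          (fun p => G (p.1 + xiAlt (m+1) p.2) * ∏ i, G (p.2 i)) := by
      funext p
      rcases p with ⟨s, y⟩
      simp only [Function.uncurry, hWdef, Set.indicator_apply, Set.mem_setOf_eq]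
    rw [huncurry]
    exact hkerm.indicator hV
  have hstep3 : ∫⁻ s in Ioc (0:ℝ) 1, ∫⁻ y in simplexStar (m+1) s,
      G (s + xiAlt (m+1) y) * ∏ i, G (y i)
      = ∫⁻ y : Fin (m+1) → ℝ, ∫⁻ s in Ioc (0:ℝ) 1, W s y := by
    calc ∫⁻ s in Ioc (0:ℝ) 1, ∫⁻ y in simplexStar (m+1) s,
        G (s + xiAlt (m+1) y) * ∏ i, G (y i)
        = ∫⁻ s in Ioc (0:ℝ) 1, ∫⁻ y, W s y := by
          refine lintegral_congr fun s => ?_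
          exact (lintegral_indicator (measurableSet_simplexStar (m+1) s) _).symm
      _ = ∫⁻ y, ∫⁻ s in Ioc (0:ℝ) 1, W s y := lintegral_lintegral_swap hWm.aemeasurable
  set Z : Set (ℝ × (Fin (m+1) → ℝ)) :=
    {p | (∀ i j : Fin (m+1), i ≤ j → p.2 j ≤ p.2 i) ∧ ∀ i, p.2 i ≤ p.1} with hZdef
  have hZm : MeasurableSet Z := by
    have hc : ∀ i : Fin (m+1), Measurable fun p : ℝ × (Fin (m+1) → ℝ) => p.2 i := fun i =>
      (measurable_pi_apply i).comp measurable_snd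
    have h2 : MeasurableSet {p : ℝ × (Fin (m+1) → ℝ) | ∀ i j : Fin (m+1), i ≤ j → p.2 j ≤ p.2 i} := by
      rw [Set.setOf_forall]
      refine MeasurableSet.iInter fun i => ?_
      rw [Set.setOf_forall]
      refine MeasurableSet.iInter fun j => ?_
      exact measurableSet_imp _ (measurableSet_le (hc j) (hc i))
    have h3 : MeasurableSet {p : ℝ × (Fin (m+1) → ℝ) | ∀ i, p.2 i ≤ p.1} := by
      rw [Set.setOf_forall]
      exact MeasurableSet.iInter fun i => measurableSet_le (hc i) measurable_fst
    exact h2.inter h3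
  set Th : ℝ × (Fin (m+1) → ℝ) → ℝ≥0∞ := Z.indicator (fun p => g p.1 * ∏ i, g (p.2 i)) with hTh
  have hThm : Measurable Th := by
    have hc : ∀ i : Fin (m+1), Measurable fun p : ℝ × (Fin (m+1) → ℝ) => p.2 i := fun i =>
      (measurable_pi_apply i).comp measurable_snd
    exact ((hgm.comp measurable_fst).mul
      (Finset.measurable_prod _ fun i _ => hgm.comp (hc i))).indicator hZm
  have hclaim1 : ∀ (s : ℝ) (y : Fin (m+1) → ℝ), W s y ≤ Th (s + xiAlt (m+1) y, y) := by
    intro s y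
    simp only [hWdef, hTh]
    by_cases hy : y ∈ simplexStar (m+1) s
    · rw [Set.indicator_of_mem hy]
      have hZmem : ((s + xiAlt (m+1) y, y) : ℝ × (Fin (m+1) → ℝ)) ∈ Z :=
        ⟨hy.2.1, fun i => hy.2.2.1 i⟩
      rw [Set.indicator_of_mem hZmem]
      apply le_of_eq
      have h1 : G (s + xiAlt (m+1) y) = g (s + xiAlt (m+1) y) :=
        (Set.indicator_of_mem (xi_mem_Icc hy) G).symm
      have h2 : ∏ i, G (y i) = ∏ i, g (y i) :=
        Finset.prod_congr rfl fun i _ => (Set.indicator_of_mem (coord_mem_Icc hy i) G).symm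
      rw [h1, h2]
    · rw [Set.indicator_of_notMem hy]
      exact zero_le
  have hstep4 : ∀ y : Fin (m+1) → ℝ, ∫⁻ s in Ioc (0:ℝ) 1, W s y ≤ ∫⁻ u, Th (u, y) := by
    intro y
    calc ∫⁻ s in Ioc (0:ℝ) 1, W s y ≤ ∫⁻ s, W s y :=
          lintegral_mono' Measure.restrict_le_self le_rfl
      _ ≤ ∫⁻ s, Th (s + xiAlt (m+1) y, y) := lintegral_mono fun s => hclaim1 s y
      _ = ∫⁻ u, Th (u, y) := lintegral_add_right_eq_self (fun u => Th (u, y)) (xiAlt (m+1) y)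
  have hstep5 : ∫⁻ y : Fin (m+1) → ℝ, ∫⁻ u, Th (u, y)
      = ∫⁻ z : Fin (m+2) → ℝ, Th (z 0, z ∘ Fin.succ) := by
    have hsw : Measurable (Function.uncurry fun (y : Fin (m+1) → ℝ) (u : ℝ) => Th (u, y)) :=
      hThm.comp measurable_swap
    calc ∫⁻ y : Fin (m+1) → ℝ, ∫⁻ u, Th (u, y)
        = ∫⁻ u, ∫⁻ y : Fin (m+1) → ℝ, Th (u, y) := lintegral_lintegral_swap hsw.aemeasurable
      _ = ∫⁻ p, Th p ∂((volume : Measure ℝ).prod volume) :=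
          (lintegral_prod Th hThm.aemeasurable).symm
      _ = ∫⁻ z : Fin (m+2) → ℝ, Th (z 0, z ∘ Fin.succ) := by
          have hmp := volume_preserving_piFinSuccAbove (fun _ : Fin (m+2) => ℝ) 0
          have hemb :=
            (MeasurableEquiv.piFinSuccAbove (fun _ : Fin (m+2) => ℝ) 0).measurableEmbedding
          rw [← Measure.volume_eq_prod, ← hmp.lintegral_comp_emb hemb Th]
          refine lintegral_congr fun z => ?_
          have he : (MeasurableEquiv.piFinSuccAbove (fun _ : Fin (m+2) => ℝ) 0) z
              = (z 0, z ∘ (0 : Fin (m+2)).succAbove) := rfl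
          rw [he]
          have hcomp : z ∘ (0 : Fin (m+2)).succAbove = z ∘ Fin.succ := by
            funext j; simp [Function.comp_apply, Fin.zero_succAbove]
          rw [hcomp]
  have hclaim2 : ∀ z : Fin (m+2) → ℝ, Th (z 0, z ∘ Fin.succ)
      ≤ (ordered (m+2)).indicator (fun z => ∏ i, g (z i)) z := by
    intro z
    by_cases hz : ((z 0, z ∘ Fin.succ) : ℝ × (Fin (m+1) → ℝ)) ∈ Z
    · have hord : z ∈ ordered (m+2) := by
        intro i j hij
        rcases Fin.eq_zero_or_eq_succ i with rfl | ⟨i', rfl⟩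
        · rcases Fin.eq_zero_or_eq_succ j with rfl | ⟨j', rfl⟩
          · exact le_rfl
          · exact hz.2 j'
        · rcases Fin.eq_zero_or_eq_succ j with rfl | ⟨j', rfl⟩
          · exact absurd (Fin.le_zero_iff.mp hij) (Fin.succ_ne_zero i')
          · exact hz.1 i' j' (by rwa [Fin.succ_le_succ_iff] at hij)
      rw [hTh, Set.indicator_of_mem hz, Set.indicator_of_mem hord]
      apply le_of_eq
      conv_rhs => rw [Fin.prod_univ_succ]
      rfl
    · rw [hTh, Set.indicator_of_notMem hz]
      exact zero_le
  have hstep6 : ∫⁻ z : Fin (m+2) → ℝ, Th (z 0, z ∘ Fin.succ)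
      ≤ (((m+2).factorial : ℝ≥0∞))⁻¹ * I ^ (m+2) := by
    have h1 : ∫⁻ z : Fin (m+2) → ℝ, Th (z 0, z ∘ Fin.succ)
        ≤ ∫⁻ z in ordered (m+2), ∏ i, g (z i) :=
      (lintegral_mono hclaim2).trans_eq (lintegral_indicator (measurableSet_ordered (m+2)) _)
    refine h1.trans ?_
    have hsym := sym_bound (m+2) hgm
    calc ∫⁻ z in ordered (m+2), ∏ i, g (z i)
        = (((m+2).factorial : ℝ≥0∞))⁻¹ *
            (((m+2).factorial : ℝ≥0∞) * ∫⁻ z in ordered (m+2), ∏ i, g (z i)) := by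
          rw [← mul_assoc, ENNReal.inv_mul_cancel (hfacne (m+2)) (ENNReal.natCast_ne_top _),
            one_mul]
      _ ≤ (((m+2).factorial : ℝ≥0∞))⁻¹ * I ^ (m+2) := mul_le_mul_right hsym _
  calc ∫⁻ s in Ioc (0:ℝ) 1, ∫⁻ y in simplexStar (m+1) s,
      G (s + xiAlt (m+1) y) * ∏ i, G (y i)
      = ∫⁻ y : Fin (m+1) → ℝ, ∫⁻ s in Ioc (0:ℝ) 1, W s y := hstep3
    _ ≤ ∫⁻ y : Fin (m+1) → ℝ, ∫⁻ u, Th (u, y) := lintegral_mono hstep4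
    _ = ∫⁻ z : Fin (m+2) → ℝ, Th (z 0, z ∘ Fin.succ) := hstep5
    _ ≤ (((m+2).factorial : ℝ≥0∞))⁻¹ * I ^ (m+2) := hstep6

lemma eLpNorm_two_pow_two {α : Type*} [MeasurableSpace α] (μ : Measure α) (f : α → ℂ) :
    eLpNorm f 2 μ ^ 2 = ∫⁻ x, ((‖f x‖₊ : ℝ≥0∞)) ^ 2 ∂μ := by
  rw [eLpNorm_eq_lintegral_rpow_enorm_toReal (p := 2) (by norm_num) (by norm_num)]
  have h2 : (2 : ℝ≥0∞).toReal = (2:ℝ) := by norm_num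
  rw [h2]
  simp only [enorm_eq_nnnorm]
  rw [← ENNReal.rpow_natCast ((∫⁻ x, (‖f x‖₊ : ℝ≥0∞) ^ (2:ℝ) ∂μ) ^ ((1:ℝ)/2)) 2,
    ← ENNReal.rpow_mul]
  have : ((1:ℝ)/2) * (2:ℕ) = 1 := by norm_num
  rw [this, ENNReal.rpow_one]
  refine lintegral_congr fun x => ?_
  rw [← ENNReal.rpow_natCast (‖f x‖₊ : ℝ≥0∞) 2]
  norm_num

lemma tauN_congr {τ τ' : ℝ → ℂ} {M : Set ℝ} (hM : MeasurableSet M) (hM0 : volume M = 0)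
    (heq : ∀ t ∈ Icc (0:ℝ) 1, t ∉ M → τ t = τ' t) (m : ℕ) (s : ℝ) :
    tauN τ (m+1) s = tauN τ' (m+1) s := by
  rw [tauN_succ_apply, tauN_succ_apply]
  refine setIntegral_congr_ae (measurableSet_simplexStar _ _) ?_
  have hbad : volume ({y : Fin (m+1) → ℝ | s + xiAlt (m+1) y ∈ M}
      ∪ ⋃ i : Fin (m+1), {y : Fin (m+1) → ℝ | y i ∈ M}) = 0 := by
    refine measure_union_null ?_ (measure_iUnion_null fun i => ?_)
    · have hset : {y : Fin (m+1) → ℝ | s + xiAlt (m+1) y ∈ M}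
          = {y : Fin (m+1) → ℝ | y 0 + (fun z : Fin m → ℝ =>
              s + ∑ j : Fin m, (-1:ℝ)^((j:ℕ)+1) * z j) (y ∘ (0 : Fin (m+1)).succAbove) ∈ M} := by
        ext y
        have harg : s + xiAlt (m+1) y
            = y 0 + (s + ∑ j : Fin m, (-1:ℝ)^((j:ℕ)+1) * y ((0 : Fin (m+1)).succAbove j)) := by
          rw [xiAlt, Fin.sum_univ_succ]
          simp only [Fin.val_zero, pow_zero, one_mul, Fin.zero_succAbove, Fin.val_succ]
          ring
        simp only [Set.mem_setOf_eq, Function.comp_apply, harg]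
      rw [hset]
      exact null_add 0 hM hM0 (measurable_const.add
        (Finset.measurable_sum _ fun j _ => (measurable_pi_apply j).const_mul _))
    · have hset : {y : Fin (m+1) → ℝ | y i ∈ M}
          = {y : Fin (m+1) → ℝ | y i + (fun _ : Fin m → ℝ => (0:ℝ)) (y ∘ i.succAbove) ∈ M} := by
        ext y; simp
      rw [hset]
      exact null_add i hM hM0 measurable_const
  have hae := measure_eq_zero_iff_ae_notMem.mp hbad
  filter_upwards [hae] with y hy hyA
  simp only [Set.mem_union, Set.mem_iUnion, Set.mem_setOf_eq, not_or, not_exists] at hy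
  obtain ⟨h1, h2⟩ := hy
  rw [heq _ (xi_mem_Icc hyA) h1]
  exact congrArg _ (Finset.prod_congr rfl fun i _ => heq _ (coord_mem_Icc hyA i) (h2 i))

lemma stronglyMeasurable_tauN {τ' : ℝ → ℂ} (hτ' : Measurable τ') (m : ℕ) :
    StronglyMeasurable (tauN τ' (m+1)) := by
  have hV := measurableSet_V (m+1)
  set f : ℝ × (Fin (m+1) → ℝ) → ℂ := Set.indicator {p | p.2 ∈ simplexStar (m+1) p.1}
      (fun p => τ' (p.1 + xiAlt (m+1) p.2) * ∏ i, τ' (p.2 i)) with hf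
  have hc : ∀ i : Fin (m+1), Measurable fun p : ℝ × (Fin (m+1) → ℝ) => p.2 i := fun i =>
    (measurable_pi_apply i).comp measurable_snd
  have hfm : Measurable f := by
    refine Measurable.indicator ?_ hV
    exact (hτ'.comp (measurable_fst.add ((measurable_xiAlt (m+1)).comp measurable_snd))).mul
      (Finset.measurable_prod _ fun i _ => hτ'.comp (hc i))
  have h := hfm.stronglyMeasurable.integral_prod_right'
    (ν := (volume : Measure (Fin (m+1) → ℝ)))
  have heq : tauN τ' (m+1) = fun s => ∫ y, f (s, y) := by
    funext s
    rw [tauN_succ_apply, ← integral_indicator (measurableSet_simplexStar (m+1) s)]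
    rfl
  rw [heq]
  exact h

lemma Lp_coeFn_sum {α : Type*} [MeasurableSpace α] {μ : Measure α}
    (f : ℕ → Lp ℂ 2 μ) (s : Finset ℕ) :
    ⇑(∑ k ∈ s, f k) =ᵐ[μ] fun x => ∑ k ∈ s, f k x := by
  classical
  induction s using Finset.induction with
  | empty =>
      simp only [Finset.sum_empty]
      filter_upwards [Lp.coeFn_zero ℂ 2 μ] with x hx
      simpa using hx
  | @insert a t hk ih =>
      rw [Finset.sum_insert hk]
      filter_upwards [Lp.coeFn_add (f a) (∑ k ∈ t, f k), ih] with x h1 h2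
      rw [h1]
      simp only [Pi.add_apply, h2, Finset.sum_insert hk]

end TauStarAux

open TauStarAux
open scoped ENNReal NNReal

/-- For `τ ∈ L²(0,1)` one has
`‖τ_n‖₂² ≤ ‖τ‖₂^{2n} / ((n−1)!·n!)` (here `τ_n = tauN τ (n-1)`), and consequently
both series `Σ_{n≥1} (±1)ⁿ τ_n` converge in `L²(0,1)`. -/
theorem tauN_bound_and_convergence (τ : ℝ → ℂ) (hτ : MemLp τ 2 mu01) :
    (∀ m : ℕ, L2norm (tauN τ m) ^ 2 ≤
        L2norm τ ^ (2*(m+1)) / (Nat.factorial m * Nat.factorial (m+1))) ∧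
      (∃ gp : ℝ → ℂ, MemLp gp 2 mu01 ∧
        Filter.Tendsto
          (fun N => eLpNorm
            (fun x => (∑ k ∈ Finset.range N, tauN τ k x) - gp x) 2 mu01)
          Filter.atTop (nhds 0)) ∧
      (∃ gm : ℝ → ℂ, MemLp gm 2 mu01 ∧
        Filter.Tendsto
          (fun N => eLpNorm
            (fun x => (∑ k ∈ Finset.range N, (-1:ℂ)^(k+1) * tauN τ k x) - gm x)
            2 mu01)
          Filter.atTop (nhds 0)) := by
  classical
  haveI : Fact ((1:ℝ≥0∞) ≤ 2) := ⟨by norm_num⟩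
  set τ' : ℝ → ℂ := hτ.1.mk τ with hτ'def
  have hτ'm : Measurable τ' := hτ.1.stronglyMeasurable_mk.measurable
  have hae : τ =ᵐ[mu01] τ' := hτ.1.ae_eq_mk
  have hae' : ∀ᵐ t ∂(volume : Measure ℝ), t ∈ Set.Ioc (0:ℝ) 1 → τ t = τ' t :=
    (ae_restrict_iff' measurableSet_Ioc).mp hae
  obtain ⟨N, hNsub, hNm, hN0⟩ := exists_measurable_superset_of_null (ae_iff.mp hae')
  set M : Set ℝ := N ∪ {0} with hMdef
  have hMm : MeasurableSet M := hNm.union (measurableSet_singleton 0)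
  have hM0 : volume M = 0 := measure_union_null hN0 (measure_singleton 0)
  have heqM : ∀ t ∈ Set.Icc (0:ℝ) 1, t ∉ M → τ t = τ' t := by
    intro t ht htM
    have ht0 : t ≠ 0 := fun h => htM (Or.inr (by simp [h]))
    have htIoc : t ∈ Set.Ioc (0:ℝ) 1 := ⟨lt_of_le_of_ne ht.1 (Ne.symm ht0), ht.2⟩
    by_contra hne
    exact htM (Or.inl (hNsub (fun h => hne (h htIoc))))
  have hbridge : ∀ m : ℕ, tauN τ (m+1) = tauN τ' (m+1) := fun m =>
    funext (tauN_congr hMm hM0 heqM m)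
  set E : ℝ≥0∞ := eLpNorm τ 2 mu01 with hEdef
  have hE' : eLpNorm τ' 2 mu01 = E := (eLpNorm_congr_ae hae).symm
  have hEtop : E ≠ ∞ := hτ.2.ne
  have hI : ∫⁻ t, ((Set.Icc (0:ℝ) 1).indicator
      (fun t => ((‖τ' t‖₊ : ℝ≥0∞)) ^ 2)) t = E ^ 2 := by
    rw [lintegral_indicator measurableSet_Icc]
    calc ∫⁻ t in Set.Icc (0:ℝ) 1, ((‖τ' t‖₊ : ℝ≥0∞)) ^ 2
        = ∫⁻ t in Set.Ioc (0:ℝ) 1, ((‖τ' t‖₊ : ℝ≥0∞)) ^ 2 := by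
          rw [MeasureTheory.restrict_Ioc_eq_restrict_Icc]
      _ = eLpNorm τ' 2 mu01 ^ 2 := (eLpNorm_two_pow_two mu01 τ').symm
      _ = E ^ 2 := by rw [hE']
  have hENN : ∀ m : ℕ, eLpNorm (tauN τ (m+1)) 2 mu01 ^ 2
      ≤ (((m+1).factorial : ℝ≥0∞))⁻¹ * ((((m+2).factorial : ℝ≥0∞))⁻¹ * E ^ (2*(m+2))) := by
    intro m
    rw [hbridge m, eLpNorm_two_pow_two]
    have h := tauN_sq_lintegral_le hτ'm m
    calc ∫⁻ s, ((‖tauN τ' (m+1) s‖₊ : ℝ≥0∞)) ^ 2 ∂mu01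
        ≤ (((m+1).factorial : ℝ≥0∞))⁻¹ * ((((m+2).factorial : ℝ≥0∞))⁻¹ *
            (∫⁻ t, ((Set.Icc (0:ℝ) 1).indicator
              (fun t => ((‖τ' t‖₊ : ℝ≥0∞)) ^ 2)) t) ^ (m+2)) := h
      _ = (((m+1).factorial : ℝ≥0∞))⁻¹ * ((((m+2).factorial : ℝ≥0∞))⁻¹ * E ^ (2*(m+2))) := by
          rw [hI, ← pow_mul]
  have hRne : ∀ m : ℕ, (((m+1).factorial : ℝ≥0∞))⁻¹ *
      ((((m+2).factorial : ℝ≥0∞))⁻¹ * E ^ (2*(m+2))) ≠ ∞ := by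
    intro m
    apply ENNReal.mul_ne_top
    · exact ENNReal.inv_ne_top.2 (Nat.cast_ne_zero.2 (Nat.factorial_ne_zero _))
    · exact ENNReal.mul_ne_top (ENNReal.inv_ne_top.2 (Nat.cast_ne_zero.2
        (Nat.factorial_ne_zero _))) (ENNReal.pow_ne_top hEtop)
  have hmem : ∀ k : ℕ, MemLp (tauN τ k) 2 mu01 := by
    intro k
    cases k with
    | zero => exact hτ
    | succ m =>
      constructor
      · rw [hbridge m]
        exact (stronglyMeasurable_tauN hτ'm m).aestronglyMeasurable
      · have h := (hENN m).trans_lt (lt_top_iff_ne_top.2 (hRne m))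
        rcases eq_top_or_lt_top (eLpNorm (tauN τ (m+1)) 2 mu01) with htop | hlt
        · rw [htop] at h
          rw [ENNReal.top_pow (by norm_num)] at h
          exact absurd h (lt_irrefl _)
        · exact hlt
  have part1 : ∀ m : ℕ, L2norm (tauN τ m) ^ 2
      ≤ L2norm τ ^ (2*(m+1)) / (Nat.factorial m * Nat.factorial (m+1)) := by
    intro m
    cases m with
    | zero =>
      have h0 : tauN τ 0 = τ := rfl
      rw [h0]
      norm_num [Nat.factorial]
    | succ m =>
      have h := hENN m
      have hL : L2norm (tauN τ (m+1)) ^ 2 = (eLpNorm (tauN τ (m+1)) 2 mu01 ^ 2).toReal := by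
        rw [L2norm, ← ENNReal.toReal_pow]
      rw [hL]
      have hmono := ENNReal.toReal_mono (hRne m) h
      refine hmono.trans_eq ?_
      rw [ENNReal.toReal_mul, ENNReal.toReal_mul, ENNReal.toReal_inv, ENNReal.toReal_inv,
        ENNReal.toReal_pow, ENNReal.toReal_natCast, ENNReal.toReal_natCast]
      have hLτ : E.toReal = L2norm τ := rfl
      rw [hLτ, div_eq_mul_inv]
      push_cast
      ring
  set C : ℝ := L2norm τ with hC
  have hnormb : ∀ k : ℕ, L2norm (tauN τ k) ≤ C * (C ^ k / (Nat.factorial k : ℝ)) := by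
    intro k
    have h1 := part1 k
    have hL0 : (0:ℝ) ≤ L2norm (tauN τ k) := ENNReal.toReal_nonneg
    have hC0 : (0:ℝ) ≤ C := ENNReal.toReal_nonneg
    have hfk : (0:ℝ) < (Nat.factorial k : ℝ) := by
      exact_mod_cast Nat.factorial_pos k
    have hb0 : (0:ℝ) ≤ C * (C ^ k / (Nat.factorial k : ℝ)) := by positivity
    have h2 : L2norm (tauN τ k) ^ 2 ≤ (C * (C ^ k / (Nat.factorial k : ℝ))) ^ 2 := by
      refine h1.trans ?_
      have hre : (C * (C ^ k / (Nat.factorial k : ℝ))) ^ 2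
          = C ^ (2*(k+1)) / ((Nat.factorial k : ℝ) * (Nat.factorial k : ℝ)) := by
        field_simp
        ring
      rw [hre]
      have hfk1 : (Nat.factorial k : ℝ) * (Nat.factorial k : ℝ)
          ≤ ((Nat.factorial k * Nat.factorial (k+1) : ℕ) : ℝ) := by
        push_cast
        refine mul_le_mul_of_nonneg_left ?_ hfk.le
        exact_mod_cast Nat.factorial_le (Nat.le_succ k)
      push_cast
      push_cast at hfk1
      refine div_le_div_of_nonneg_left (by positivity) (by positivity) hfk1
    nlinarith [h2, hL0, hb0]
  have key : ∀ c : ℕ → ℂ, (∀ k, ‖c k‖ = 1) → ∃ gp : ℝ → ℂ, MemLp gp 2 mu01 ∧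
      Filter.Tendsto (fun N => eLpNorm
        (fun x => (∑ k ∈ Finset.range N, c k * tauN τ k x) - gp x) 2 mu01)
        Filter.atTop (nhds 0) := by
    intro c hc
    set F : ℕ → Lp ℂ 2 mu01 := fun k => (hmem k).toLp (tauN τ k) with hFdef
    have hFnorm : ∀ k, ‖F k‖ = L2norm (tauN τ k) := fun k => Lp.norm_toLp _ _
    have hsum : Summable (fun k => ‖(c k) • F k‖) := by
      refine Summable.of_nonneg_of_le (fun k => norm_nonneg _) (fun k => ?_)
        ((Real.summable_pow_div_factorial C).mul_left C)
      rw [norm_smul, hc k, one_mul, hFnorm k]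
      exact hnormb k
    have hS : Summable fun k => (c k) • F k := hsum.of_norm
    obtain ⟨G, hG⟩ := hS
    refine ⟨⇑G, Lp.memLp G, ?_⟩
    have htend : Filter.Tendsto (fun N => ∑ k ∈ Finset.range N, (c k) • F k)
        Filter.atTop (nhds G) := hG.tendsto_sum_nat
    have htend' : Filter.Tendsto (fun N => ‖(∑ k ∈ Finset.range N, (c k) • F k) - G‖)
        Filter.atTop (nhds 0) := tendsto_iff_norm_sub_tendsto_zero.mp htend
    have hid : ∀ N : ℕ, eLpNorm (fun x => (∑ k ∈ Finset.range N, c k * tauN τ k x) - G x) 2 mu01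
        = ENNReal.ofReal ‖(∑ k ∈ Finset.range N, (c k) • F k) - G‖ := by
      intro N
      set P := ∑ k ∈ Finset.range N, (c k) • F k with hP
      have hall : ∀ᵐ x ∂mu01, ∀ k ∈ Finset.range N, ((c k) • F k) x = c k * tauN τ k x := by
        rw [Filter.eventually_all_finset]
        intro k _
        filter_upwards [Lp.coeFn_smul (c k) (F k), MemLp.coeFn_toLp (hmem k)] with x h1 h2
        rw [h1, Pi.smul_apply, h2, smul_eq_mul]
      have hae1 : ⇑P =ᵐ[mu01] fun x => ∑ k ∈ Finset.range N, c k * tauN τ k x := by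
        filter_upwards [Lp_coeFn_sum (fun k => (c k) • F k) (Finset.range N), hall] with x h1 h2
        rw [h1]
        exact Finset.sum_congr rfl fun k hk => h2 k hk
      have hae2 : (fun x => (∑ k ∈ Finset.range N, c k * tauN τ k x) - G x)
          =ᵐ[mu01] ⇑(P - G) := by
        filter_upwards [hae1, Lp.coeFn_sub P G] with x h1 h2
        rw [h2, Pi.sub_apply, ← h1]
      rw [eLpNorm_congr_ae hae2, Lp.norm_def, ENNReal.ofReal_toReal (Lp.eLpNorm_ne_top _)]
    have hofr : Filter.Tendsto
        (fun N => ENNReal.ofReal ‖(∑ k ∈ Finset.range N, (c k) • F k) - G‖)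
        Filter.atTop (nhds 0) := by
      have h0 : nhds (0:ℝ≥0∞) = nhds (ENNReal.ofReal 0) := by simp
      rw [h0]
      exact (ENNReal.continuous_ofReal.tendsto 0).comp htend'
    exact Filter.Tendsto.congr (fun N => (hid N).symm) hofr
  refine ⟨part1, ?_, ?_⟩
  · obtain ⟨gp, h1, h2⟩ := key (fun _ => 1) (fun k => by simp)
    simp only [one_mul] at h2
    exact ⟨gp, h1, h2⟩
  · obtain ⟨gm, h1, h2⟩ := key (fun k => (-1:ℂ)^(k+1)) (fun k => by simp)
    exact ⟨gm, h1, h2⟩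
end
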